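/- arXiv:1501.04287 — 10 statements merged into one kernel-verified Lean document; each statement's English description precedes it below -/
import Mathlib

section
/- Let s : ℕ → ℕ with s(n) ≥ 1 for all n, and let A be a bounded linear operator on the complex Hilbert space ℓ²(Σ n, Fin s(n)) such that for every square-summable ψ and every index i: (Aψ)(0,i) = (s(0)·s(1))^{-1/2} · ∑_{j < s(1)} ψ(1,j), and for every n, (Aψ)(n+1,i) = (s(n+1)·s(n+2))^{-1/2} · ∑_{j < s(n+2)} ψ(n+2,j) + (s(n+1)·s(n))^{-1/2} · ∑_{j < s(n)} ψ(n,j). Then the spectrum of A (in the algebra of bounded operators) equals the real interval [−2, 2], viewed as a subset of ℂ. -/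
open scoped ENNReal ComplexConjugate
open Finset

noncomputable section
namespace AntitreeAux

/-- Jacobi operator on sequences -/
def J (h : ℕ → ℂ) : ℕ → ℂ := fun n => match n with
  | 0 => h 1
  | (m+1) => h (m+2) + h m

lemma trig_pair (a θ : ℝ) :
    1 - |Real.cos θ| ≤ Real.sin a ^ 2 + Real.sin (a + θ) ^ 2 := by
  have key : Real.sin a ^ 2 + Real.sin (a + θ) ^ 2
      = 1 - Real.cos θ * Real.cos (2*a + θ) := by
    have h1 : Real.sin (a + θ) = Real.sin a * Real.cos θ + Real.cos a * Real.sin θ :=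
      Real.sin_add a θ
    have h2 : Real.cos (2*a + θ) = Real.cos a * Real.cos (a + θ) - Real.sin a * Real.sin (a+θ) := by
      have : 2*a + θ = a + (a + θ) := by ring
      rw [this, Real.cos_add]
    have h3 : Real.cos (a + θ) = Real.cos a * Real.cos θ - Real.sin a * Real.sin θ :=
      Real.cos_add a θ
    have p1 : Real.sin a ^ 2 + Real.cos a ^ 2 = 1 := Real.sin_sq_add_cos_sq a
    have p2 : Real.sin θ ^ 2 + Real.cos θ ^ 2 = 1 := Real.sin_sq_add_cos_sq θ
    rw [h2, h3, h1]; nlinarith [p1, p2]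
  rw [key]
  have : Real.cos θ * Real.cos (2*a + θ) ≤ |Real.cos θ| := by
    calc Real.cos θ * Real.cos (2*a + θ) ≤ |Real.cos θ * Real.cos (2*a + θ)| := le_abs_self _
    _ = |Real.cos θ| * |Real.cos (2*a + θ)| := abs_mul _ _
    _ ≤ |Real.cos θ| * 1 := mul_le_mul_of_nonneg_left (Real.abs_cos_le_one _) (abs_nonneg _)
    _ = |Real.cos θ| := mul_one _
  linarith

lemma sin_rec (A θ : ℝ) :
    Real.sin (A + θ) + Real.sin (A - θ) = 2 * Real.cos θ * Real.sin A := by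
  rw [Real.sin_add, Real.sin_sub]; ring

/-- the ideal eigen-sequence -/
def H (θ : ℝ) : ℕ → ℂ := fun n => ((Real.sin ((n+1) * θ) : ℝ) : ℂ)

lemma J_H (θ : ℝ) (n : ℕ) : J (H θ) n = 2 * Real.cos θ * H θ n := by
  cases n with
  | zero =>
      show H θ 1 = _
      unfold H
      norm_cast
      have h2 : Real.sin (2*θ) = 2 * Real.sin θ * Real.cos θ := Real.sin_two_mul θ
      ring_nf
      ring_nf at h2
      linarith [h2]
  | succ m =>
      show H θ (m+2) + H θ m = _
      unfold H
      norm_cast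
      have key := sin_rec (((m:ℝ)+2) * θ) θ
      have e1 : ((m:ℝ)+2) * θ + θ = (((m+2:ℕ) : ℝ) + 1) * θ := by push_cast; ring
      have e2 : ((m:ℝ)+2) * θ - θ = ((m:ℝ) + 1) * θ := by push_cast; ring
      have e3 : ((m:ℝ)+2) * θ = (((m+1:ℕ) : ℝ) + 1) * θ := by push_cast; ring
      rw [e1, e2, e3] at key
      push_cast at key ⊢
      linarith [key]

lemma sum_pair_ge (θ : ℝ) (M : ℕ) :
    (M : ℝ) * (1 - |Real.cos θ|) ≤ ∑ n ∈ range (2*M), Real.sin (((n:ℝ)+1) * θ) ^ 2 := by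
  induction M with
  | zero => simp
  | succ M ih =>
      have h2 : 2 * (M+1) = (2*M) + 1 + 1 := by ring
      rw [h2, Finset.sum_range_succ, Finset.sum_range_succ]
      have key := trig_pair ((((2*M : ℕ):ℝ) + 1) * θ) θ
      have e1 : (((2*M : ℕ):ℝ) + 1) * θ + θ = (((2*M+1 : ℕ) : ℝ) + 1) * θ := by push_cast; ring
      rw [e1] at key
      have hM : ((M+1 : ℕ) : ℝ) = (M : ℝ) + 1 := by push_cast; ring
      rw [hM]
      linarith [key, ih]

def shiftPad {α : Type*} [Zero α] (u : ℕ → α) : ℕ → α := fun n => match n with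
  | 0 => 0
  | (m+1) => u m

lemma shiftPad_succ_eq {α : Type*} [Zero α] (u : ℕ → α) :
    (fun n => shiftPad u (n+1)) = u := rfl

lemma summable_shiftPad {α : Type*} [AddCommGroup α] [UniformSpace α] [IsUniformAddGroup α]
    (u : ℕ → α) (hu : Summable u) : Summable (shiftPad u) := by
  apply (summable_nat_add_iff (f := shiftPad u) 1).1
  rw [shiftPad_succ_eq]
  exact hu

lemma tsum_shiftPad {α : Type*} [AddCommGroup α] [UniformSpace α] [IsUniformAddGroup α]
    [T2Space α] [CompleteSpace α] (u : ℕ → α) (hu : Summable u) :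
    ∑' n, shiftPad u n = ∑' n, u n := by
  rw [Summable.tsum_eq_zero_add (summable_shiftPad u hu)]
  show (0 : α) + _ = _
  rw [zero_add]
  exact tsum_congr fun b => rfl

lemma mulSummable (a b : ℕ → ℂ) (ha : Summable fun n => ‖a n‖^2)
    (hb : Summable fun n => ‖b n‖^2) : Summable fun n => conj (a n) * b n := by
  apply Summable.of_norm
  have hsum : Summable (fun n => (‖a n‖^2 + ‖b n‖^2)/2) := (ha.add hb).div_const 2
  refine hsum.of_nonneg_of_le (fun n => norm_nonneg _) (fun n => ?_)
  rw [norm_mul, RCLike.norm_conj]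
  nlinarith [sq_nonneg (‖a n‖ - ‖b n‖), norm_nonneg (a n), norm_nonneg (b n)]

lemma Jsym (f g : ℕ → ℂ) (hf : Summable fun n => ‖f n‖^2)
    (hg : Summable fun n => ‖g n‖^2) :
    ∑' n, conj (J f n) * g n = ∑' n, conj (f n) * J g n := by
  have hf1 : Summable fun n => ‖f (n+1)‖^2 :=
    (summable_nat_add_iff (f := fun n => ‖f n‖^2) 1).2 hf
  have hg1 : Summable fun n => ‖g (n+1)‖^2 :=
    (summable_nat_add_iff (f := fun n => ‖g n‖^2) 1).2 hg
  have hvs' : Summable fun n => conj (f n) * g (n+1) := mulSummable f (fun n => g (n+1)) hf hg1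
  have hws' : Summable fun n => conj (f (n+1)) * g n :=
    mulSummable (fun n => f (n+1)) g hf1 hg
  have hvs : Summable (shiftPad fun n => conj (f n) * g (n+1)) := summable_shiftPad _ hvs'
  have hws : Summable (shiftPad fun n => conj (f (n+1)) * g n) := summable_shiftPad _ hws'
  have decompL : (fun n => conj (J f n) * g n)
      = fun n => conj (f (n+1)) * g n + shiftPad (fun n => conj (f n) * g (n+1)) n := by
    funext n; cases n with
    | zero => simp [J, shiftPad]
    | succ m => simp only [J, shiftPad, map_add]; ring
  have decompR : (fun n => conj (f n) * J g n)
      = fun n => conj (f n) * g (n+1) + shiftPad (fun n => conj (f (n+1)) * g n) n := by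
    funext n; cases n with
    | zero => simp [J, shiftPad]
    | succ m => simp only [J, shiftPad, map_add]; ring
  rw [decompL, decompR, Summable.tsum_add hws' hvs, Summable.tsum_add hvs' hws,
    tsum_shiftPad _ hvs', tsum_shiftPad _ hws']
  ring
variable (s : ℕ → ℕ)

abbrev V := lp (fun _ : (Σ n : ℕ, Fin (s n)) => ℂ) 2

def c (n : ℕ) : ℝ := (Real.sqrt (s n))⁻¹

def S (ψ : V s) (n : ℕ) : ℂ := ∑ j : Fin (s n), ψ ⟨n, j⟩

def Ff (ψ : V s) (n : ℕ) : ℂ := ((c s n : ℝ) : ℂ) * S s ψ n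

variable {s}

lemma s_pos (hs : ∀ n, 1 ≤ s n) (n : ℕ) : 0 < ((s n : ℝ)) := by exact_mod_cast hs n

lemma c_pos (hs : ∀ n, 1 ≤ s n) (n : ℕ) : 0 < c s n := by
  rw [c]
  exact inv_pos.2 (Real.sqrt_pos.2 (s_pos hs n))

lemma c_sq (hs : ∀ n, 1 ≤ s n) (n : ℕ) : (c s n)^2 = ((s n : ℝ))⁻¹ := by
  rw [c, inv_pow, Real.sq_sqrt (le_of_lt (s_pos hs n))]

lemma norm_c_mul_sq (hs : ∀ n, 1 ≤ s n) (n : ℕ) (z : ℂ) :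
    ‖((c s n : ℝ) : ℂ) * z‖^2 = ((s n : ℝ))⁻¹ * ‖z‖^2 := by
  rw [norm_mul, Complex.norm_real, Real.norm_eq_abs, mul_pow, sq_abs, c_sq hs]

lemma summable_sq (ψ : V s) : Summable fun x : (Σ n : ℕ, Fin (s n)) => ‖ψ x‖^2 := by
  have h := (memℓp_gen_iff (p := 2) (by norm_num) ).1 (lp.memℓp ψ)
  have h2 : ((2:ℝ≥0∞)).toReal = ((2:ℕ):ℝ) := by norm_num
  rw [h2] at h
  simpa [Real.rpow_natCast] using h

lemma norm_sq_eq (ψ : V s) :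
    ‖ψ‖^2 = ∑' n : ℕ, ∑ i : Fin (s n), ‖ψ ⟨n, i⟩‖^2 := by
  have h := lp.norm_rpow_eq_tsum (p := 2) (by norm_num) ψ
  have h2 : ((2:ℝ≥0∞)).toReal = ((2:ℕ):ℝ) := by norm_num
  rw [h2] at h
  simp only [Real.rpow_natCast] at h
  rw [h, Summable.tsum_sigma (summable_sq ψ)]
  exact tsum_congr fun n => tsum_fintype _

lemma summable_shell (ψ : V s) :
    Summable fun n : ℕ => ∑ i : Fin (s n), ‖ψ ⟨n, i⟩‖^2 := by
  have := (summable_sq ψ).sigma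
  refine this.congr fun n => ?_
  exact tsum_fintype _

lemma Ff_sq_le (hs : ∀ n, 1 ≤ s n) (ψ : V s) (n : ℕ) :
    ‖Ff s ψ n‖^2 ≤ ∑ i : Fin (s n), ‖ψ ⟨n, i⟩‖^2 := by
  rw [Ff, norm_c_mul_sq hs]
  have hcs : ‖S s ψ n‖^2 ≤ (s n : ℝ) * ∑ i : Fin (s n), ‖ψ ⟨n, i⟩‖^2 := by
    have h1 : ‖S s ψ n‖ ≤ ∑ i : Fin (s n), ‖ψ ⟨n, i⟩‖ := norm_sum_le _ _
    have h2 : (∑ i : Fin (s n), ‖ψ ⟨n, i⟩‖)^2 ≤ (s n : ℝ) * ∑ i : Fin (s n), ‖ψ ⟨n, i⟩‖^2 := by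
      have := Finset.sum_mul_sq_le_sq_mul_sq Finset.univ (fun _ : Fin (s n) => (1:ℝ))
        (fun i => ‖ψ ⟨n, i⟩‖)
      simpa [Finset.card_univ] using this
    calc ‖S s ψ n‖^2 ≤ (∑ i : Fin (s n), ‖ψ ⟨n, i⟩‖)^2 := by
          apply pow_le_pow_left₀ (norm_nonneg _) h1
    _ ≤ _ := h2
  calc ((s n:ℝ))⁻¹ * ‖S s ψ n‖^2
      ≤ ((s n:ℝ))⁻¹ * ((s n : ℝ) * ∑ i : Fin (s n), ‖ψ ⟨n, i⟩‖^2) := by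
        apply mul_le_mul_of_nonneg_left hcs (inv_nonneg.2 (le_of_lt (s_pos hs n)))
    _ = ∑ i : Fin (s n), ‖ψ ⟨n, i⟩‖^2 := by
        rw [← mul_assoc, inv_mul_cancel₀ (ne_of_gt (s_pos hs n)), one_mul]

lemma summable_Ff (hs : ∀ n, 1 ≤ s n) (ψ : V s) : Summable fun n => ‖Ff s ψ n‖^2 :=
  (summable_shell ψ).of_nonneg_of_le (fun n => sq_nonneg _) (Ff_sq_le hs ψ)


lemma inner_eq_tsum (χ φ : V s) :
    (inner ℂ χ φ : ℂ) = ∑' x : (Σ n : ℕ, Fin (s n)), conj (χ x) * φ x := by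
  rw [lp.inner_eq_tsum]; exact tsum_congr fun x => RCLike.inner_apply' _ _

lemma summable_inner' (χ φ : V s) :
    Summable fun x : (Σ n : ℕ, Fin (s n)) => conj (χ x) * φ x :=
  (lp.summable_inner (𝕜 := ℂ) χ φ).congr fun x => RCLike.inner_apply' _ _

lemma normA_apply_le (hs : ∀ n, 1 ≤ s n) (A : V s →L[ℂ] V s)
    (happly : ∀ (ψ : V s) (x : Σ n : ℕ, Fin (s n)),
      (A ψ) x = ((c s x.1 : ℝ) : ℂ) * J (Ff s ψ) x.1) (ψ : V s) :
    ‖A ψ‖ ≤ 2 * ‖ψ‖ := by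
  set f := Ff s ψ with hf
  have hAsq : ‖A ψ‖^2 = ∑' n, ‖J f n‖^2 := by
    rw [norm_sq_eq (A ψ)]
    refine tsum_congr fun n => ?_
    calc ∑ i : Fin (s n), ‖(A ψ) ⟨n,i⟩‖^2
        = ∑ _i : Fin (s n), ((s n:ℝ))⁻¹ * ‖J f n‖^2 :=
          Finset.sum_congr rfl fun i _ => by rw [happly ψ ⟨n,i⟩, norm_c_mul_sq hs]
      _ = (s n : ℝ) * (((s n:ℝ))⁻¹ * ‖J f n‖^2) := by
          rw [Finset.sum_const, Finset.card_univ, Fintype.card_fin, nsmul_eq_mul]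
      _ = ‖J f n‖^2 := by
          rw [← mul_assoc, mul_inv_cancel₀ (ne_of_gt (s_pos hs n)), one_mul]
  have hu : Summable (fun n => ‖f n‖^2) := summable_Ff hs ψ
  have hu1 : Summable (fun n => ‖f (n+1)‖^2) :=
    (summable_nat_add_iff (f := fun n => ‖f n‖^2) 1).2 hu
  have hp : Summable (shiftPad (α := ℝ) fun n => ‖f n‖^2) := summable_shiftPad _ hu
  have key : ∀ n, ‖J f n‖^2 ≤ 2*‖f (n+1)‖^2 + 2 * shiftPad (fun n => ‖f n‖^2) n := by
    intro n; cases n with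
    | zero =>
        show ‖f 1‖^2 ≤ 2*‖f 1‖^2 + 2 * (0:ℝ)
        nlinarith [sq_nonneg ‖f 1‖]
    | succ m =>
        show ‖f (m+2) + f m‖^2 ≤ 2*‖f (m+2)‖^2 + 2 * ‖f m‖^2
        have h := norm_add_le (f (m+2)) (f m)
        nlinarith [norm_nonneg (f (m+2)), norm_nonneg (f m),
          sq_nonneg (‖f (m+2)‖ - ‖f m‖), norm_nonneg (f (m+2) + f m)]
  have hbs : Summable (fun n => 2*‖f (n+1)‖^2 + 2 * shiftPad (fun n => ‖f n‖^2) n) :=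
    (hu1.mul_left 2).add (hp.mul_left 2)
  have hJs : Summable (fun n => ‖J f n‖^2) :=
    hbs.of_nonneg_of_le (fun n => sq_nonneg _) key
  have t1 : ∑' n, ‖f (n+1)‖^2 ≤ ∑' n, ‖f n‖^2 := by
    have h0 := Summable.tsum_eq_zero_add hu
    have := sq_nonneg ‖f 0‖
    linarith
  have t2 : ∑' n, shiftPad (fun n => ‖f n‖^2) n = ∑' n, ‖f n‖^2 := tsum_shiftPad _ hu
  have big : ∑' n, ‖J f n‖^2 ≤ 4 * ∑' n, ‖f n‖^2 := by
    calc ∑' n, ‖J f n‖^2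
        ≤ ∑' n, (2*‖f (n+1)‖^2 + 2 * shiftPad (fun n => ‖f n‖^2) n) :=
          Summable.tsum_le_tsum key hJs hbs
      _ = 2 * ∑' n, ‖f (n+1)‖^2 + 2 * ∑' n, shiftPad (fun n => ‖f n‖^2) n := by
          rw [Summable.tsum_add (hu1.mul_left 2) (hp.mul_left 2), tsum_mul_left, tsum_mul_left]
      _ ≤ 4 * ∑' n, ‖f n‖^2 := by rw [t2]; linarith
  have hff : ∑' n, ‖f n‖^2 ≤ ‖ψ‖^2 := by
    rw [norm_sq_eq ψ]
    exact Summable.tsum_le_tsum (Ff_sq_le hs ψ) hu (summable_shell ψ)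
  have hfin : ‖A ψ‖^2 ≤ (2*‖ψ‖)^2 := by rw [hAsq]; nlinarith
  nlinarith [norm_nonneg (A ψ), norm_nonneg ψ]

lemma symmA (hs : ∀ n, 1 ≤ s n) (A : V s →L[ℂ] V s)
    (happly : ∀ (ψ : V s) (x : Σ n : ℕ, Fin (s n)),
      (A ψ) x = ((c s x.1 : ℝ) : ℂ) * J (Ff s ψ) x.1) (ψ φ : V s) :
    (inner ℂ (A ψ) φ : ℂ) = inner ℂ ψ (A φ) := by
  have e1 : (inner ℂ (A ψ) φ : ℂ) = ∑' n, conj (J (Ff s ψ) n) * Ff s φ n := by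
    rw [inner_eq_tsum, Summable.tsum_sigma (summable_inner' (A ψ) φ)]
    refine tsum_congr fun n => ?_
    rw [tsum_fintype]
    calc ∑ i : Fin (s n), conj ((A ψ) ⟨n,i⟩) * φ ⟨n,i⟩
        = ∑ i : Fin (s n), conj (((c s n:ℝ):ℂ) * J (Ff s ψ) n) * φ ⟨n,i⟩ :=
          Finset.sum_congr rfl fun i _ => by rw [happly ψ ⟨n,i⟩]
      _ = conj (((c s n:ℝ):ℂ) * J (Ff s ψ) n) * S s φ n := by
          rw [S, Finset.mul_sum]
      _ = conj (J (Ff s ψ) n) * Ff s φ n := by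
          rw [map_mul, Complex.conj_ofReal, Ff]; ring
  have e2 : (inner ℂ ψ (A φ) : ℂ) = ∑' n, conj (Ff s ψ n) * J (Ff s φ) n := by
    rw [inner_eq_tsum, Summable.tsum_sigma (summable_inner' ψ (A φ))]
    refine tsum_congr fun n => ?_
    rw [tsum_fintype]
    calc ∑ i : Fin (s n), conj (ψ ⟨n,i⟩) * (A φ) ⟨n,i⟩
        = ∑ i : Fin (s n), conj (ψ ⟨n,i⟩) * (((c s n:ℝ):ℂ) * J (Ff s φ) n) :=
          Finset.sum_congr rfl fun i _ => by rw [happly φ ⟨n,i⟩]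
      _ = (∑ i : Fin (s n), conj (ψ ⟨n,i⟩)) * (((c s n:ℝ):ℂ) * J (Ff s φ) n) := by
          rw [Finset.sum_mul]
      _ = conj (S s ψ n) * (((c s n:ℝ):ℂ) * J (Ff s φ) n) := by
          rw [S, map_sum]
      _ = conj (Ff s ψ n) * J (Ff s φ) n := by
          rw [Ff, map_mul, Complex.conj_ofReal]; ring
  rw [e1, e2]
  exact Jsym _ _ (summable_Ff hs ψ) (summable_Ff hs φ)

variable (s) in
def radFun (h : ℕ → ℂ) : ∀ _x : (Σ n : ℕ, Fin (s n)), ℂ :=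
  fun x => ((c s x.1 : ℝ) : ℂ) * h x.1

variable (s) in
lemma radFun_memℓp (h : ℕ → ℂ) (N : ℕ) (hN : ∀ n, N ≤ n → h n = 0) :
    Memℓp (radFun s h) 2 := by
  apply memℓp_gen
  apply summable_of_ne_finset_zero (s := (Finset.range N).sigma fun _n => Finset.univ)
  intro x hx
  have hx1 : x.1 ∉ Finset.range N := by
    intro hmem
    exact hx (Finset.mem_sigma.2 ⟨hmem, Finset.mem_univ _⟩)
  have h0 : h x.1 = 0 := by
    refine hN x.1 ?_
    by_contra hc
    exact hx1 (Finset.mem_range.2 (by omega))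
  have : radFun s h x = 0 := by rw [radFun, h0, mul_zero]
  rw [this, norm_zero, Real.zero_rpow]
  norm_num

variable (s) in
def rad (h : ℕ → ℂ) (N : ℕ) (hN : ∀ n, N ≤ n → h n = 0) : V s :=
  ⟨radFun s h, radFun_memℓp s h N hN⟩

lemma rad_apply (h : ℕ → ℂ) (N : ℕ) (hN : ∀ n, N ≤ n → h n = 0)
    (x : Σ n : ℕ, Fin (s n)) :
    (rad s h N hN : V s) x = ((c s x.1 : ℝ) : ℂ) * h x.1 := rfl

lemma sn_mul_c_sq (hs : ∀ n, 1 ≤ s n) (n : ℕ) :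
    ((s n : ℕ) : ℂ) * (((c s n : ℝ) : ℂ) * ((c s n : ℝ) : ℂ)) = 1 := by
  have : (c s n : ℝ) * (c s n : ℝ) = ((s n : ℝ))⁻¹ := by
    rw [← sq, c_sq hs]
  rw [← Complex.ofReal_mul, this]
  rw [show ((s n : ℕ) : ℂ) = (((s n : ℕ) : ℝ) : ℂ) by push_cast; ring]
  rw [← Complex.ofReal_mul, mul_inv_cancel₀ (ne_of_gt (s_pos hs n))]
  norm_num

lemma Ff_rad (hs : ∀ n, 1 ≤ s n) (h : ℕ → ℂ) (N : ℕ) (hN : ∀ n, N ≤ n → h n = 0) (n : ℕ) :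
    Ff s (rad s h N hN) n = h n := by
  rw [Ff, S]
  have : ∀ j : Fin (s n), (rad s h N hN : V s) ⟨n, j⟩ = ((c s n : ℝ) : ℂ) * h n :=
    fun j => rfl
  rw [Finset.sum_congr rfl fun j _ => this j, Finset.sum_const, Finset.card_univ,
    Fintype.card_fin, nsmul_eq_mul]
  calc ((c s n : ℝ) : ℂ) * ((s n : ℕ) * (((c s n : ℝ) : ℂ) * h n))
      = (((s n : ℕ) : ℂ) * (((c s n : ℝ) : ℂ) * ((c s n : ℝ) : ℂ))) * h n := by ring
    _ = h n := by rw [sn_mul_c_sq hs, one_mul]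

lemma J_support (h : ℕ → ℂ) (N : ℕ) (hN : ∀ n, N ≤ n → h n = 0) :
    ∀ n, N + 1 ≤ n → J h n = 0 := by
  intro n hn
  cases n with
  | zero => omega
  | succ m =>
      show h (m+2) + h m = 0
      rw [hN (m+2) (by omega), hN m (by omega), add_zero]

lemma norm_rad_sq (hs : ∀ n, 1 ≤ s n) (h : ℕ → ℂ) (N : ℕ) (hN : ∀ n, N ≤ n → h n = 0) :
    ‖(rad s h N hN : V s)‖^2 = ∑ n ∈ Finset.range N, ‖h n‖^2 := by
  rw [norm_sq_eq]
  have hshell : ∀ n, ∑ i : Fin (s n), ‖(rad s h N hN : V s) ⟨n,i⟩‖^2 = ‖h n‖^2 := by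
    intro n
    calc ∑ _i : Fin (s n), ‖((c s n : ℝ) : ℂ) * h n‖^2
        = ∑ _i : Fin (s n), ((s n : ℝ))⁻¹ * ‖h n‖^2 :=
          Finset.sum_congr rfl fun i _ => by rw [norm_c_mul_sq hs]
      _ = (s n : ℝ) * (((s n:ℝ))⁻¹ * ‖h n‖^2) := by
          rw [Finset.sum_const, Finset.card_univ, Fintype.card_fin, nsmul_eq_mul]
      _ = ‖h n‖^2 := by
          rw [← mul_assoc, mul_inv_cancel₀ (ne_of_gt (s_pos hs n)), one_mul]
  rw [tsum_congr hshell]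
  apply tsum_eq_sum
  intro n hn
  have : h n = 0 := by
    refine hN n ?_
    by_contra hc
    exact hn (Finset.mem_range.2 (by omega))
  rw [this, norm_zero]
  norm_num

lemma smul_sub_A_rad (hs : ∀ n, 1 ≤ s n) (A : V s →L[ℂ] V s)
    (happly : ∀ (ψ : V s) (x : Σ n : ℕ, Fin (s n)),
      (A ψ) x = ((c s x.1 : ℝ) : ℂ) * J (Ff s ψ) x.1)
    (z : ℂ) (h : ℕ → ℂ) (N : ℕ) (hN : ∀ n, N ≤ n → h n = 0) :
    z • (rad s h N hN : V s) - A (rad s h N hN)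
      = rad s (fun n => z * h n - J h n) (N+1)
          (fun n hn => by
            show z * h n - J h n = 0
            rw [hN n (by omega), J_support h N hN n hn, mul_zero, sub_zero]) := by
  apply lp.ext
  funext x
  have hFf : Ff s (rad s h N hN) = h := funext (Ff_rad hs h N hN)
  calc (z • (rad s h N hN : V s) - A (rad s h N hN) : V s) x
      = z • ((rad s h N hN : V s) x) - (A (rad s h N hN)) x := by
        rw [lp.coeFn_sub, Pi.sub_apply, lp.coeFn_smul, Pi.smul_apply]
    _ = z * (((c s x.1 : ℝ) : ℂ) * h x.1) - ((c s x.1 : ℝ) : ℂ) * J h x.1 := by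
        rw [happly, hFf, rad_apply]; rfl
    _ = ((c s x.1 : ℝ) : ℂ) * (z * h x.1 - J h x.1) := by ring

/-! ### Weyl sequence machinery -/

def wseq (θ : ℝ) (K : ℕ) : ℕ → ℂ := fun n => if n < K then H θ n else 0

lemma wseq_supp (θ : ℝ) (K : ℕ) : ∀ n, K ≤ n → wseq θ K n = 0 := by
  intro n hn
  rw [wseq]
  simp only [if_neg (by omega : ¬ n < K)]

def Dseq (θ x : ℝ) (K : ℕ) : ℕ → ℂ := fun n => (x:ℂ) * wseq θ K n - J (wseq θ K) n

lemma Dseq_supp (θ x : ℝ) (K : ℕ) : ∀ n, K + 1 ≤ n → Dseq θ x K n = 0 := by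
  intro n hn
  rw [Dseq, wseq_supp θ K n (by omega), J_support _ K (wseq_supp θ K) n hn, mul_zero, sub_zero]

variable (s) in
def wvec (θ : ℝ) (K : ℕ) : V s := rad s (wseq θ K) K (wseq_supp θ K)

lemma wvec_norm_low (hs : ∀ n, 1 ≤ s n) (θ : ℝ) (M : ℕ) :
    (M : ℝ) * (1 - |Real.cos θ|) ≤ ‖(wvec s θ (2*M) : V s)‖^2 := by
  rw [wvec, norm_rad_sq hs]
  have hc : ∀ n ∈ Finset.range (2*M), ‖wseq θ (2*M) n‖^2 = Real.sin (((n:ℝ)+1) * θ) ^ 2 := by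
    intro n hn
    rw [wseq]
    simp only [if_pos (Finset.mem_range.1 hn)]
    rw [H, Complex.norm_real, Real.norm_eq_abs, sq_abs]
  rw [Finset.sum_congr rfl hc]
  exact sum_pair_ge θ M

lemma wseq_le (θ : ℝ) (K : ℕ) (n : ℕ) : ‖wseq θ K n‖ ≤ 1 := by
  rw [wseq]
  by_cases hc : n < K
  · simp only [if_pos hc]
    rw [H, Complex.norm_real, Real.norm_eq_abs]
    exact Real.abs_sin_le_one _
  · simp only [if_neg hc, norm_zero]; norm_num

lemma Dseq_le (θ x : ℝ) (hx : |x| ≤ 2) (K : ℕ) (n : ℕ) : ‖Dseq θ x K n‖^2 ≤ 16 := by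
  have h1 : ‖(x:ℂ) * wseq θ K n‖ ≤ 2 := by
    rw [norm_mul, Complex.norm_real, Real.norm_eq_abs]
    calc |x| * ‖wseq θ K n‖ ≤ 2 * 1 :=
      mul_le_mul hx (wseq_le θ K n) (norm_nonneg _) (by norm_num)
    _ = 2 := by norm_num
  have h2 : ‖J (wseq θ K) n‖ ≤ 2 := by
    cases n with
    | zero => calc ‖J (wseq θ K) 0‖ = ‖wseq θ K 1‖ := rfl
                _ ≤ 1 := wseq_le θ K 1
                _ ≤ 2 := by norm_num
    | succ m => calc ‖J (wseq θ K) (m+1)‖ = ‖wseq θ K (m+2) + wseq θ K m‖ := rfl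
                  _ ≤ ‖wseq θ K (m+2)‖ + ‖wseq θ K m‖ := norm_add_le _ _
                  _ ≤ 2 := by linarith [wseq_le θ K (m+2), wseq_le θ K m]
  have h3 : ‖Dseq θ x K n‖ ≤ 4 := by
    calc ‖Dseq θ x K n‖ ≤ ‖(x:ℂ) * wseq θ K n‖ + ‖J (wseq θ K) n‖ := norm_sub_le _ _
      _ ≤ 4 := by linarith
  nlinarith [norm_nonneg (Dseq θ x K n)]

lemma Dseq_vanish (θ x : ℝ) (hcos : Real.cos θ = x / 2) (K : ℕ) (hK2 : 2 ≤ K)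
    (n : ℕ) (hn2 : n + 2 ≤ K) : Dseq θ x K n = 0 := by
  have e1 : (x:ℂ) * wseq θ K n = (x:ℂ) * H θ n := by
    rw [wseq]; simp only [if_pos (by omega : n < K)]
  have e2 : J (wseq θ K) n = J (H θ) n := by
    cases n with
    | zero =>
        show wseq θ K 1 = H θ 1
        rw [wseq]; simp only [if_pos (by omega : 1 < K)]
    | succ m =>
        show wseq θ K (m+2) + wseq θ K m = H θ (m+2) + H θ m
        simp only [wseq, if_pos (by omega : m + 2 < K), if_pos (by omega : m < K)]
  have e3 : J (H θ) n = (x:ℂ) * H θ n := by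
    rw [J_H θ n, hcos]
    push_cast
    ring
  rw [Dseq, e1, e2, e3, sub_self]

lemma Dseq_sum_le (θ x : ℝ) (hx : |x| ≤ 2) (hcos : Real.cos θ = x / 2) (K : ℕ) (hK2 : 2 ≤ K) :
    ∑ n ∈ Finset.range (K+1), ‖Dseq θ x K n‖^2 ≤ 32 := by
  have hsub : ({K-1, K} : Finset ℕ) ⊆ Finset.range (K+1) := by
    intro n hn
    simp only [Finset.mem_insert, Finset.mem_singleton] at hn
    rcases hn with h | h <;> (rw [h]; exact Finset.mem_range.2 (by omega))
  have hvanish : ∀ n ∈ Finset.range (K+1), n ∉ ({K-1, K} : Finset ℕ) → ‖Dseq θ x K n‖^2 = 0 := by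
    intro n hn hpair
    simp only [Finset.mem_insert, Finset.mem_singleton] at hpair
    have := Finset.mem_range.1 hn
    rw [Dseq_vanish θ x hcos K hK2 n (by omega), norm_zero]
    norm_num
  rw [← Finset.sum_subset hsub hvanish, Finset.sum_pair (by omega : K - 1 ≠ K)]
  linarith [Dseq_le θ x hx K (K-1), Dseq_le θ x hx K K]

lemma T_wvec_eq (hs : ∀ n, 1 ≤ s n) (A : V s →L[ℂ] V s)
    (happly : ∀ (ψ : V s) (x : Σ n : ℕ, Fin (s n)),
      (A ψ) x = ((c s x.1 : ℝ) : ℂ) * J (Ff s ψ) x.1) (θ x : ℝ) (K : ℕ) :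
    (x:ℂ) • (wvec s θ K : V s) - A (wvec s θ K) = rad s (Dseq θ x K) (K+1) (Dseq_supp θ x K) := by
  rw [wvec, smul_sub_A_rad hs A happly]
  rfl

set_option maxHeartbeats 1000000 in
lemma weyl_mem (hs : ∀ n, 1 ≤ s n) (A : V s →L[ℂ] V s)
    (happly : ∀ (ψ : V s) (x : Σ n : ℕ, Fin (s n)),
      (A ψ) x = ((c s x.1 : ℝ) : ℂ) * J (Ff s ψ) x.1)
    (x : ℝ) (hx : x ∈ Set.Ioo (-2:ℝ) 2) : (x : ℂ) ∈ spectrum ℂ A := by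
  obtain ⟨hx1, hx2⟩ := hx
  rw [spectrum.mem_iff]
  intro hunit
  have hinv := hunit.unit.inv_mul
  rw [hunit.unit_spec] at hinv
  have happ_alg : ∀ (ψ : V s),
      ((algebraMap ℂ (V s →L[ℂ] V s) (x:ℂ) - A) ψ) = (x:ℂ) • ψ - A ψ := by
    intro ψ
    simp [ContinuousLinearMap.sub_apply, Algebra.algebraMap_eq_smul_one]
    rfl
  have hbound : ∀ ψ : V s, ‖ψ‖ ≤ ‖(↑hunit.unit⁻¹ : V s →L[ℂ] V s)‖ * ‖(x:ℂ) • ψ - A ψ‖ := by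
    intro ψ
    have hBT : (↑hunit.unit⁻¹ : V s →L[ℂ] V s) ((x:ℂ) • ψ - A ψ) = ψ := by
      rw [← happ_alg, ← ContinuousLinearMap.mul_apply, hinv, ContinuousLinearMap.one_apply]
    conv_lhs => rw [← hBT]
    exact ContinuousLinearMap.le_opNorm _ _
  set b := ‖(↑hunit.unit⁻¹ : V s →L[ℂ] V s)‖ with hb
  have hbnn : 0 ≤ b := norm_nonneg _
  have hcos : Real.cos (Real.arccos (x/2)) = x / 2 :=
    Real.cos_arccos (by linarith) (by linarith)
  set θ := Real.arccos (x/2)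
  have hε : 0 < 1 - |Real.cos θ| := by
    rw [hcos]
    have : |x/2| < 1 := abs_lt.2 ⟨by linarith, by linarith⟩
    linarith
  have hxabs : |x| ≤ 2 := le_of_lt (abs_lt.2 ⟨by linarith, by linarith⟩)
  obtain ⟨M, hM⟩ := exists_nat_gt (max 1 ((b * 6)^2 / (1 - |Real.cos θ|)))
  have hM1 : (1:ℝ) ≤ (M:ℝ) := le_of_lt (lt_of_le_of_lt (le_max_left _ _) hM)
  have hMn : 1 ≤ M := by exact_mod_cast hM1
  have hK2 : 2 ≤ 2 * M := by omega
  -- upper bound for the image vector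
  have hTnorm_sq : ‖(x:ℂ) • (wvec s θ (2*M) : V s) - A (wvec s θ (2*M))‖^2 ≤ 32 := by
    rw [T_wvec_eq hs A happly, norm_rad_sq hs]
    exact Dseq_sum_le θ x hxabs hcos (2*M) hK2
  have hTnorm : ‖(x:ℂ) • (wvec s θ (2*M) : V s) - A (wvec s θ (2*M))‖ ≤ 6 := by
    nlinarith [norm_nonneg ((x:ℂ) • (wvec s θ (2*M) : V s) - A (wvec s θ (2*M)))]
  have hup : ‖(wvec s θ (2*M) : V s)‖ ≤ b * 6 :=
    le_trans (hbound _) (mul_le_mul_of_nonneg_left hTnorm hbnn)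
  have hup_sq : ‖(wvec s θ (2*M) : V s)‖^2 ≤ (b * 6)^2 := by
    nlinarith [norm_nonneg (wvec s θ (2*M) : V s)]
  have hlow := wvec_norm_low hs θ M
  have hgt : (b * 6)^2 < (M:ℝ) * (1 - |Real.cos θ|) := by
    have h2 : (b * 6)^2 / (1 - |Real.cos θ|) < M :=
      lt_of_le_of_lt (le_max_right _ _) hM
    rw [div_lt_iff₀ hε] at h2
    linarith
  linarith

end AntitreeAux
end

open AntitreeAux in
/-- The spectrum of the weighted adjacency operator of an antitree with normalized
edge weights is the interval `[-2, 2]`. -/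
theorem stmt_0 (s : ℕ → ℕ) (hs : ∀ n, 1 ≤ s n)
    (A : lp (fun _ : (Σ n : ℕ, Fin (s n)) => ℂ) 2 →L[ℂ]
         lp (fun _ : (Σ n : ℕ, Fin (s n)) => ℂ) 2)
    (hA0 : ∀ (ψ : lp (fun _ : (Σ n : ℕ, Fin (s n)) => ℂ) 2) (i : Fin (s 0)),
      (A ψ) ⟨0, i⟩ =
        ((Real.sqrt ((s 0 : ℝ) * (s 1 : ℝ)))⁻¹ : ℂ) * ∑ j : Fin (s 1), ψ ⟨1, j⟩)
    (hA : ∀ (ψ : lp (fun _ : (Σ n : ℕ, Fin (s n)) => ℂ) 2) (n : ℕ) (i : Fin (s (n + 1))),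
      (A ψ) ⟨n + 1, i⟩ =
        ((Real.sqrt ((s (n + 1) : ℝ) * (s (n + 2) : ℝ)))⁻¹ : ℂ) *
            ∑ j : Fin (s (n + 2)), ψ ⟨n + 2, j⟩
          + ((Real.sqrt ((s (n + 1) : ℝ) * (s n : ℝ)))⁻¹ : ℂ) *
            ∑ j : Fin (s n), ψ ⟨n, j⟩) :
    spectrum ℂ A = (fun x : ℝ => (x : ℂ)) '' Set.Icc (-2 : ℝ) 2 := by
  classical
  have key : ∀ n m : ℕ, ((Real.sqrt ((s n : ℝ) * (s m : ℝ)))⁻¹ : ℂ)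
      = ((c s n : ℝ) : ℂ) * ((c s m : ℝ) : ℂ) := by
    intro n m
    rw [Real.sqrt_mul (by positivity), Complex.ofReal_mul, mul_inv,
      ← Complex.ofReal_inv, ← Complex.ofReal_inv]
    rfl
  have happly : ∀ (ψ : V s) (x : Σ n : ℕ, Fin (s n)),
      (A ψ) x = ((c s x.1 : ℝ) : ℂ) * J (Ff s ψ) x.1 := by
    intro ψ ⟨n, i⟩
    cases n with
    | zero =>
        rw [hA0 ψ i, key 0 1]
        show _ = ((c s 0 : ℝ) : ℂ) * (((c s 1 : ℝ) : ℂ) * ∑ j : Fin (s 1), ψ ⟨1, j⟩)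
        ring
    | succ n =>
        rw [hA ψ n i, key (n+1) (n+2), key (n+1) n]
        show _ = ((c s (n+1) : ℝ) : ℂ) *
          (((c s (n+2) : ℝ) : ℂ) * ∑ j : Fin (s (n+2)), ψ ⟨n+2, j⟩
            + ((c s n : ℝ) : ℂ) * ∑ j : Fin (s n), ψ ⟨n, j⟩)
        ring
  haveI : Nontrivial (V s) := by
    refine ⟨rad s (fun n => if n = 0 then (1:ℂ) else 0) 1
      (fun n hn => if_neg (by omega)), 0, fun hc => ?_⟩
    have h1 := Ff_rad hs (fun n => if n = 0 then (1:ℂ) else 0) 1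
      (fun n hn => if_neg (by omega)) 0
    rw [hc] at h1
    simp only [if_pos rfl] at h1
    have h0 : Ff s (0 : V s) 0 = 0 := by
      rw [Ff, S]
      have : ∀ j : Fin (s 0), (0 : V s) ⟨0, j⟩ = 0 := fun j => by
        rw [lp.coeFn_zero]; rfl
      rw [Finset.sum_congr rfl fun j _ => this j]
      simp
    rw [h0] at h1
    exact zero_ne_one h1
  have hA2 : ‖A‖ ≤ 2 := A.opNorm_le_bound (by norm_num) (normA_apply_le hs A happly)
  have hsa : IsSelfAdjoint A :=
    ContinuousLinearMap.isSelfAdjoint_iff_isSymmetric.mpr fun ψ φ => symmA hs A happly ψ φ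
  apply Set.Subset.antisymm
  · intro z hz
    have hre : z = (z.re : ℂ) := hsa.mem_spectrum_eq_re hz
    have hnorm : ‖z‖ ≤ 2 := le_trans (spectrum.norm_le_norm_of_mem hz) hA2
    rw [hre, Complex.norm_real, Real.norm_eq_abs] at hnorm
    exact ⟨z.re, Set.mem_Icc.2 ⟨by linarith [(abs_le.1 hnorm).1], by linarith [(abs_le.1 hnorm).2]⟩,
      hre.symm⟩
  · have hIoo : (fun x : ℝ => (x : ℂ)) '' Set.Ioo (-2 : ℝ) 2 ⊆ spectrum ℂ A := by
      rintro z ⟨x, hx, rfl⟩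
      exact weyl_mem hs A happly x hx
    have hclosure : (fun x : ℝ => (x : ℂ)) '' Set.Icc (-2 : ℝ) 2
        = closure ((fun x : ℝ => (x : ℂ)) '' Set.Ioo (-2 : ℝ) 2) := by
      rw [Complex.isometry_ofReal.isClosedEmbedding.closure_image_eq,
        closure_Ioo (by norm_num : (-2:ℝ) ≠ 2)]
    rw [hclosure]
    calc closure ((fun x : ℝ => (x : ℂ)) '' Set.Ioo (-2 : ℝ) 2)
        ⊆ closure (spectrum ℂ A) := closure_mono hIoo
      _ = spectrum ℂ A := (spectrum.isClosed A).closure_eq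
end

section
/- Assume (A1) and let λ > 0 and E ∈ ℝ with |E| > λ. Then the harmonic average h_{E,λ} := (∫ (E−λv)⁻¹ dμ(v))⁻¹ satisfies |h_{E,λ}| < |E| − λ²σ²/(|E| + λ). -/
open MeasureTheory

lemma key_harmonic (μ : Measure ℝ) [IsProbabilityMeasure μ]
    (hsupp : μ (Set.Icc (-1 : ℝ) 1) = 1)
    (hmean : (∫ v, v ∂μ) = 0)
    (σ2 : ℝ) (hσ2 : σ2 = ∫ v, v ^ 2 ∂μ) (hσpos : 0 < σ2)
    (lam A c : ℝ) (hlam : 0 < lam) (hA : lam < A) (hc : c = lam ∨ c = -lam) :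
    0 < (∫ v, (A - c * v)⁻¹ ∂μ) ∧
      (∫ v, (A - c * v)⁻¹ ∂μ)⁻¹ < A - lam ^ 2 * σ2 / (A + lam) := by
  have hA0 : 0 < A := hlam.trans hA
  have habs : |c| = lam := by
    rcases hc with rfl | rfl
    · exact abs_of_pos hlam
    · rw [abs_neg]; exact abs_of_pos hlam
  have hc2 : c ^ 2 = lam ^ 2 := by rcases hc with rfl | rfl <;> ring
  have hae : ∀ᵐ v ∂μ, v ∈ Set.Icc (-1 : ℝ) 1 := by
    rw [ae_iff]
    have h1 : μ (Set.Icc (-1 : ℝ) 1)ᶜ = 0 := by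
      rw [measure_compl measurableSet_Icc (measure_ne_top μ _), hsupp, measure_univ, tsub_self]
    exact h1
  -- bounds on A - c*v
  have hbound : ∀ v ∈ Set.Icc (-1 : ℝ) 1, A - lam ≤ A - c * v ∧ A - c * v ≤ A + lam := by
    intro v hv
    have hv1 : |v| ≤ 1 := abs_le.mpr ⟨hv.1, hv.2⟩
    have : |c * v| ≤ lam := by
      rw [abs_mul, habs]
      nlinarith [abs_nonneg v]
    have h2 := abs_le.mp this
    constructor <;> linarith [h2.1, h2.2]
  -- integrability
  have intv : Integrable (fun v : ℝ => v) μ := by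
    apply Integrable.mono' (integrable_const (1 : ℝ)) measurable_id.aestronglyMeasurable
    exact hae.mono fun v hv => by
      simp only [Real.norm_eq_abs, id]
      exact abs_le.mpr ⟨hv.1, hv.2⟩
  have intv2 : Integrable (fun v : ℝ => v ^ 2) μ := by
    apply Integrable.mono' (integrable_const (1 : ℝ))
      (measurable_id.pow_const 2).aestronglyMeasurable
    exact hae.mono fun v hv => by
      simp only [Real.norm_eq_abs, id_eq]
      rw [abs_of_nonneg (sq_nonneg v)]
      nlinarith [hv.1, hv.2]
  have intinv : Integrable (fun v : ℝ => (A - c * v)⁻¹) μ := by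
    apply Integrable.mono' (integrable_const ((A - lam)⁻¹))
      ((measurable_const.sub (measurable_id.const_mul c)).inv).aestronglyMeasurable
    refine hae.mono fun v hv => ?_
    obtain ⟨h1, h2⟩ := hbound v hv
    have hXpos : 0 < A - c * v := by linarith
    simp only [Real.norm_eq_abs, id_eq, Pi.inv_apply, Pi.sub_apply]
    rw [abs_of_pos (inv_pos.mpr hXpos)]
    exact inv_anti₀ (by linarith) h1
  -- σ2 ≤ 1
  have hσ2le : σ2 ≤ 1 := by
    rw [hσ2]
    have h1 : (∫ v, v ^ 2 ∂μ) ≤ ∫ _, (1 : ℝ) ∂μ := by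
      apply integral_mono_ae intv2 (integrable_const 1)
      exact hae.mono fun v hv => by
        show v ^ 2 ≤ (1 : ℝ)
        nlinarith [hv.1, hv.2]
    simpa using h1
  -- constants
  have hrpos : 0 < A - lam * σ2 := by nlinarith
  have hMpos : 0 < A + lam := by linarith
  set r : ℝ := A - lam * σ2 with hrdef
  set M : ℝ := A + lam with hMdef
  set β0 : ℝ := (A ^ 2 - (2 * r + M) * A + (r ^ 2 + 2 * r * M)) / (r ^ 2 * M) with hβ0
  set β1 : ℝ := ((2 * r + M) * c - 2 * A * c) / (r ^ 2 * M) with hβ1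
  set β2 : ℝ := c ^ 2 / (r ^ 2 * M) with hβ2
  have hrne : r ≠ 0 := ne_of_gt hrpos
  have hMne : M ≠ 0 := ne_of_gt hMpos
  -- pointwise bound
  have hptwise : ∀ᵐ v ∂μ, β0 + β1 * v + β2 * v ^ 2 ≤ (A - c * v)⁻¹ := by
    refine hae.mono fun v hv => ?_
    obtain ⟨h1, h2⟩ := hbound v hv
    have hXpos : 0 < A - c * v := by linarith
    have hXne : A - c * v ≠ 0 := ne_of_gt hXpos
    have hid : (A - c * v)⁻¹ - (β0 + β1 * v + β2 * v ^ 2)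
        = (r - (A - c * v)) ^ 2 * (M - (A - c * v)) / (r ^ 2 * M * (A - c * v)) := by
      rw [hβ0, hβ1, hβ2]
      field_simp
      ring
    have hnum : 0 ≤ (r - (A - c * v)) ^ 2 * (M - (A - c * v)) := by
      apply mul_nonneg (sq_nonneg _)
      have : A - c * v ≤ M := by rw [hMdef]; linarith
      linarith
    have hden : 0 < r ^ 2 * M * (A - c * v) := by positivity
    nlinarith [div_nonneg hnum hden.le, hid]
  -- integral of the quadratic
  have ia : Integrable (fun v : ℝ => β0 + β1 * v) μ :=
    (integrable_const β0).add (intv.const_mul β1)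
  have intf : Integrable (fun v : ℝ => β0 + β1 * v + β2 * v ^ 2) μ :=
    ia.add (intv2.const_mul β2)
  have hquadint : (∫ v, (β0 + β1 * v + β2 * v ^ 2) ∂μ) = β0 + β2 * σ2 := by
    rw [integral_add ia (intv2.const_mul β2),
      integral_add (integrable_const β0) (intv.const_mul β1),
      integral_const, integral_const_mul, integral_const_mul, hmean, ← hσ2]
    simp
  have hI : β0 + β2 * σ2 ≤ ∫ v, (A - c * v)⁻¹ ∂μ := by
    rw [← hquadint]
    exact integral_mono_ae intf intinv hptwise
  -- algebra
  set T : ℝ := A - lam ^ 2 * σ2 / (A + lam) with hT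
  have hMpos' : (0 : ℝ) < A + lam := by linarith
  have hTpos : 0 < T := by
    rw [hT]
    have h1 : lam ^ 2 * σ2 / (A + lam) < A := by
      rw [div_lt_iff₀ hMpos']
      nlinarith
    linarith
  have hQT : (β0 + β2 * σ2) * T = 1 + (lam ^ 2 * σ2) ^ 2 / ((A + lam) ^ 2 * lam * r) := by
    rw [hβ0, hβ2, hT, hrdef, hMdef, hc2]
    have h1 : A - lam * σ2 ≠ 0 := by rw [hrdef] at hrne; exact hrne
    have h2 : A + lam ≠ 0 := by rw [hMdef] at hMne; exact hMne
    field_simp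
    ring
  have hfracpos : 0 < (lam ^ 2 * σ2) ^ 2 / ((A + lam) ^ 2 * lam * r) := by positivity
  have hQTgt : 1 < (β0 + β2 * σ2) * T := by rw [hQT]; linarith
  have hQpos : 0 < β0 + β2 * σ2 := by
    have h0 : 0 < (β0 + β2 * σ2) * T := zero_lt_one.trans hQTgt
    rcases mul_pos_iff.mp h0 with ⟨ha, _⟩ | ⟨_, hb⟩
    · exact ha
    · linarith
  have hI0pos : 0 < ∫ v, (A - c * v)⁻¹ ∂μ := lt_of_lt_of_le hQpos hI
  refine ⟨hI0pos, ?_⟩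
  rw [show (∫ v, (A - c * v)⁻¹ ∂μ)⁻¹ = 1 / (∫ v, (A - c * v)⁻¹ ∂μ) by rw [one_div]]
  rw [div_lt_iff₀ hI0pos]
  have hIT := mul_le_mul_of_nonneg_right hI hTpos.le
  linarith [hQTgt, hIT]

/-- Under assumption (A1), for `λ > 0` and `|E| > λ`, the harmonic average
`h_{E,λ} = (∫ (E-λv)⁻¹ dμ)⁻¹` satisfies `|h_{E,λ}| < |E| - λ²σ²/(|E|+λ)`. -/
theorem stmt_1 (μ : Measure ℝ) [IsProbabilityMeasure μ]
    (hsupp : μ (Set.Icc (-1 : ℝ) 1) = 1)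
    (hmean : (∫ v, v ∂μ) = 0)
    (σ2 : ℝ) (hσ2 : σ2 = ∫ v, v ^ 2 ∂μ) (hσpos : 0 < σ2)
    (lam E : ℝ) (hlam : 0 < lam) (hE : lam < |E|)
    (h : ℝ) (hh : h = (∫ v, (E - lam * v)⁻¹ ∂μ)⁻¹) :
    |h| < |E| - lam ^ 2 * σ2 / (|E| + lam) := by
  have hEne : E ≠ 0 := by
    intro h0
    rw [h0, abs_zero] at hE
    linarith
  rcases lt_or_gt_of_ne hEne with hneg | hpos
  · -- E < 0
    have hAabs : |E| = -E := abs_of_neg hneg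
    have hAE : lam < -E := by rwa [hAabs] at hE
    obtain ⟨hpos0, hlt⟩ := key_harmonic μ hsupp hmean σ2 hσ2 hσpos lam (-E) (-lam)
      hlam hAE (Or.inr rfl)
    have hfun : (fun v : ℝ => (E - lam * v)⁻¹) = fun v => -((-E - (-lam) * v)⁻¹) := by
      funext v
      rw [show -E - (-lam) * v = -(E - lam * v) by ring, inv_neg, neg_neg]
    have hint : (∫ v, (E - lam * v)⁻¹ ∂μ) = -(∫ v, (-E - (-lam) * v)⁻¹ ∂μ) := by
      rw [hfun, integral_neg]
    rw [hh, hint, inv_neg, abs_neg, abs_inv, abs_of_pos hpos0, hAabs]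
    exact hlt
  · -- E > 0
    have hAabs : |E| = E := abs_of_pos hpos
    have hAE : lam < E := by rwa [hAabs] at hE
    obtain ⟨hpos0, hlt⟩ := key_harmonic μ hsupp hmean σ2 hσ2 hσpos lam E lam
      hlam hAE (Or.inl rfl)
    rw [hh, abs_inv, abs_of_pos hpos0, hAabs]
    exact hlt
end

section
/- Assume (A1) and let λ > 0. If E ∈ ℝ satisfies λ < E ≤ 1 − λ/2 + √((1 + λ/2)² + λ²σ²), then the harmonic average h_{E,λ} := (∫ (E−λv)⁻¹ dμ(v))⁻¹ satisfies 0 < h_{E,λ} < 2 (so E belongs to the delocalized energy region I_λ). -/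
open MeasureTheory

set_option maxHeartbeats 1600000 in
/-- Under assumption (A1), for `λ > 0` and `λ < E ≤ 1 - λ/2 + √((1+λ/2)² + λ²σ²)`,
the harmonic average `h_{E,λ}` satisfies `0 < h_{E,λ} < 2`, i.e. `E ∈ I_λ`. -/
theorem stmt_2 (μ : Measure ℝ) [IsProbabilityMeasure μ]
    (hsupp : μ (Set.Icc (-1 : ℝ) 1) = 1)
    (hmean : (∫ v, v ∂μ) = 0)
    (σ2 : ℝ) (hσ2 : σ2 = ∫ v, v ^ 2 ∂μ) (hσpos : 0 < σ2)
    (lam E : ℝ) (hlam : 0 < lam)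
    (hE1 : lam < E)
    (hE2 : E ≤ 1 - lam / 2 + Real.sqrt ((1 + lam / 2) ^ 2 + lam ^ 2 * σ2))
    (h : ℝ) (hh : h = (∫ v, (E - lam * v)⁻¹ ∂μ)⁻¹) :
    0 < h ∧ h < 2 := by
  have hE0 : 0 < E := hlam.trans hE1
  -- a.e. support
  have hae : ∀ᵐ v ∂μ, v ∈ Set.Icc (-1 : ℝ) 1 := by
    rw [ae_iff]
    have heq : {v : ℝ | ¬ v ∈ Set.Icc (-1 : ℝ) 1} = (Set.Icc (-1 : ℝ) 1)ᶜ := rfl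
    rw [heq, measure_compl measurableSet_Icc (measure_ne_top μ _), hsupp,
      measure_univ]
    simp
  -- integrability of v, v^2, f
  have hv_int : Integrable (fun v : ℝ => v) μ := by
    refine Integrable.mono' (integrable_const (1 : ℝ))
      measurable_id.aestronglyMeasurable ?_
    filter_upwards [hae] with v hv
    rw [Real.norm_eq_abs, abs_le]; exact ⟨hv.1, hv.2⟩
  have hv2_int : Integrable (fun v : ℝ => v ^ 2) μ := by
    refine Integrable.mono' (integrable_const (1 : ℝ))
      (measurable_id.pow_const 2).aestronglyMeasurable ?_
    filter_upwards [hae] with v hv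
    rw [Real.norm_eq_abs, abs_le]
    constructor <;> nlinarith [hv.1, hv.2]
  have hEv : ∀ᵐ v ∂μ, 0 < E - lam * v := by
    filter_upwards [hae] with v hv
    nlinarith [hv.2]
  have hf_int : Integrable (fun v : ℝ => (E - lam * v)⁻¹) μ := by
    refine Integrable.mono' (integrable_const ((E - lam)⁻¹))
      ((measurable_const.sub (measurable_const.mul measurable_id)).inv).aestronglyMeasurable ?_
    filter_upwards [hae] with v hv
    have h1 : (0:ℝ) < E - lam := by linarith
    have h2 : E - lam ≤ E - lam * v := by nlinarith [hv.2]
    rw [Real.norm_eq_abs, abs_of_pos (inv_pos.mpr (h1.trans_le h2))]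
    exact inv_anti₀ h1 h2
  -- variance bounds
  have hs1 : σ2 ≤ 1 := by
    rw [hσ2]
    calc ∫ v, v ^ 2 ∂μ ≤ ∫ _, (1:ℝ) ∂μ := by
          refine integral_mono_ae hv2_int (integrable_const 1) ?_
          filter_upwards [hae] with v hv
          nlinarith [hv.1, hv.2]
      _ = 1 := by simp
  set s := σ2 with hs
  have hB : 0 < E - lam * s := by nlinarith
  have hA : 0 < E + lam := by linarith
  -- key algebraic consequence of hE2
  have hkey : (E - 2) * (E + lam) ≤ lam ^ 2 * s := by
    have hX0 : 0 ≤ (1 + lam / 2) ^ 2 + lam ^ 2 * s := by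
      have := mul_pos (pow_pos hlam 2) hσpos
      nlinarith [sq_nonneg (1 + lam / 2)]
    have hsq : Real.sqrt ((1 + lam / 2) ^ 2 + lam ^ 2 * s) ^ 2
        = (1 + lam / 2) ^ 2 + lam ^ 2 * s := Real.sq_sqrt hX0
    have h3 : E - (1 - lam / 2) ≤ Real.sqrt ((1 + lam / 2) ^ 2 + lam ^ 2 * s) := by
      linarith
    rcases le_or_gt 0 (E - (1 - lam / 2)) with hc | hc
    · nlinarith [Real.sqrt_nonneg ((1 + lam / 2) ^ 2 + lam ^ 2 * s)]
    · nlinarith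
  -- the quadratic minorant
  set γ : ℝ := lam ^ 2 / ((E + lam) * (E - lam * s) ^ 2) with hγ
  set α : ℝ := (1 - lam * γ * s ^ 2) / E with hα
  set β : ℝ := (lam * α - lam * γ * (s ^ 2 - 2 * s)) / E with hβ
  have hγ0 : 0 < γ := by positivity
  -- pointwise bound
  have hpt : ∀ᵐ v ∂μ, α + β * v + γ * v ^ 2 ≤ (E - lam * v)⁻¹ := by
    filter_upwards [hae, hEv] with v hv hEv
    have hid : (E - lam * v)⁻¹ - (α + β * v + γ * v ^ 2)
        = lam * γ * ((v + 1) * (v - s) ^ 2) / (E - lam * v) := by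
      rw [hβ, hα, hγ]
      field_simp
      ring
    have hv1 : (0:ℝ) ≤ v + 1 := by linarith [hv.1]
    have hnn : 0 ≤ lam * γ * ((v + 1) * (v - s) ^ 2) / (E - lam * v) := by
      positivity
    linarith [hid ▸ hnn]
  -- integrate
  have hq_int1 : Integrable (fun v : ℝ => α + β * v) μ :=
    (integrable_const α).add (hv_int.const_mul β)
  have hq_int : Integrable (fun v : ℝ => α + β * v + γ * v ^ 2) μ :=
    hq_int1.add (hv2_int.const_mul γ)
  have hql : ∫ v, (α + β * v + γ * v ^ 2) ∂μ = α + γ * s := by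
    rw [integral_add hq_int1 (hv2_int.const_mul γ),
      integral_add (integrable_const α) (hv_int.const_mul β),
      integral_const, integral_const_mul, integral_const_mul, hmean, ← hσ2,
      probReal_univ]
    simp
  have hint : α + γ * s ≤ ∫ v, (E - lam * v)⁻¹ ∂μ := by
    rw [← hql]; exact integral_mono_ae hq_int hf_int hpt
  -- final numeric inequality
  have hK : E * ((E + lam) * (E - lam * s)) < 2 * ((E + lam) * (E - lam * s)) + 2 * (lam ^ 2 * s) := by
    have hls : 0 < lam ^ 2 * s := mul_pos (pow_pos hlam 2) hσpos
    rcases le_or_gt E 2 with hc | hc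
    · nlinarith [mul_nonneg (mul_nonneg (by linarith : (0:ℝ) ≤ 2 - E) hA.le) hB.le]
    · have hE2' : E - lam * s < 2 := by nlinarith [mul_pos hlam hσpos]
      nlinarith [mul_le_mul_of_nonneg_right hkey hB.le]
  have hhalf : (1:ℝ) / 2 < α + γ * s := by
    have hdiff : α + γ * s - 1 / 2
        = (2 * ((E + lam) * (E - lam * s)) + 2 * (lam ^ 2 * s)
            - E * ((E + lam) * (E - lam * s))) / (2 * (E * ((E + lam) * (E - lam * s)))) := by
      rw [hα, hγ]
      field_simp
      ring
    have hpos : 0 < (2 * ((E + lam) * (E - lam * s)) + 2 * (lam ^ 2 * s)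
        - E * ((E + lam) * (E - lam * s))) / (2 * (E * ((E + lam) * (E - lam * s)))) := by
      apply div_pos (by linarith) (by positivity)
    linarith
  have hIpos : (1:ℝ) / 2 < ∫ v, (E - lam * v)⁻¹ ∂μ := lt_of_lt_of_le hhalf hint
  constructor
  · rw [hh]; positivity
  · rw [hh]
    have := inv_strictAnti₀ (by norm_num : (0:ℝ) < 1/2) hIpos
    simpa using this
end

section
/- Assume (A1) and let λ > 0. Then for every real E > λ, the function t ↦ h_{t,λ} = (∫ (t−λv)⁻¹ dμ(v))⁻¹, defined for real t > λ, is differentiable at E and its derivative at E is strictly greater than 1. -/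
open MeasureTheory

/-- Under assumption (A1), for `λ > 0` the map `t ↦ h_{t,λ} = (∫ (t-λv)⁻¹ dμ)⁻¹` is
differentiable at every `E > λ` with derivative strictly greater than `1`. -/
theorem stmt_3 (μ : Measure ℝ) [IsProbabilityMeasure μ]
    (hsupp : μ (Set.Icc (-1 : ℝ) 1) = 1)
    (hmean : (∫ v, v ∂μ) = 0)
    (hvar : 0 < ∫ v, v ^ 2 ∂μ)
    (lam : ℝ) (hlam : 0 < lam) (E : ℝ) (hE : lam < E) :
    ∃ d : ℝ, HasDerivAt (fun t : ℝ => (∫ v, (t - lam * v)⁻¹ ∂μ)⁻¹) d E ∧ 1 < d := by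
  have ha : (0:ℝ) < E - lam := sub_pos.mpr hE
  set a : ℝ := E - lam with ha_def
  have hae : ∀ᵐ v ∂μ, v ∈ Set.Icc (-1:ℝ) 1 := by
    have h' : μ (Set.Icc (-1:ℝ) 1)ᶜ = 0 := by
      rw [measure_compl measurableSet_Icc (measure_ne_top μ _), hsupp, measure_univ, tsub_self]
    exact ae_iff.mpr h'
  have hpos : ∀ v ∈ Set.Icc (-1:ℝ) 1, ∀ x ∈ Metric.ball E (a/2), a/2 ≤ x - lam * v := by
    intro v hv x hx
    rw [Metric.mem_ball, Real.dist_eq, abs_lt] at hx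
    have h1 : lam * v ≤ lam := by nlinarith [hv.2]
    have := hx.1
    simp only [ha_def] at *
    linarith
  have hEpos : ∀ v ∈ Set.Icc (-1:ℝ) 1, a ≤ E - lam * v := by
    intro v hv
    have h1 : lam * v ≤ lam := by nlinarith [hv.2]
    simp only [ha_def]; linarith
  have hmeas : ∀ x : ℝ, Measurable fun v : ℝ => (x - lam * v)⁻¹ := fun x =>
    (measurable_const.sub (measurable_const.mul measurable_id)).inv
  have hfint : Integrable (fun v => (E - lam * v)⁻¹) μ := by
    refine (integrable_const (a⁻¹)).mono' (hmeas E).aestronglyMeasurable ?_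
    filter_upwards [hae] with v hv
    have h1 := hEpos v hv
    rw [Real.norm_eq_abs, abs_of_pos (inv_pos.mpr (lt_of_lt_of_le ha h1))]
    exact inv_anti₀ ha h1
  have hf2int : Integrable (fun v => ((E - lam * v)⁻¹) ^ 2) μ := by
    refine (integrable_const ((a⁻¹)^2)).mono' (((hmeas E).pow_const 2).aestronglyMeasurable) ?_
    filter_upwards [hae] with v hv
    have h1 := hEpos v hv
    rw [Real.norm_eq_abs, abs_of_nonneg (sq_nonneg _)]
    have h2 : (E - lam * v)⁻¹ ≤ a⁻¹ := inv_anti₀ ha h1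
    have h0 : 0 ≤ (E - lam * v)⁻¹ := inv_nonneg.mpr (le_of_lt (lt_of_lt_of_le ha h1))
    exact pow_le_pow_left₀ h0 h2 2
  set F : ℝ → ℝ := fun t => ∫ v, (t - lam * v)⁻¹ ∂μ with hF_def
  have hderiv : HasDerivAt F (∫ v, -((E - lam * v) ^ 2)⁻¹ ∂μ) E := by
    have := hasDerivAt_integral_of_dominated_loc_of_deriv_le (μ := μ)
      (F := fun t v => (t - lam * v)⁻¹) (F' := fun x v => -((x - lam * v) ^ 2)⁻¹)
      (x₀ := E) (bound := fun _ => ((a/2) ^ 2)⁻¹) (Metric.ball_mem_nhds E (half_pos ha))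
      (Filter.Eventually.of_forall fun x => (hmeas x).aestronglyMeasurable)
      hfint
      (((measurable_const.sub (measurable_const.mul measurable_id)).pow_const 2).inv.neg).aestronglyMeasurable
      ?_ (integrable_const _) ?_
    · exact this.2
    · filter_upwards [hae] with v hv
      intro x hx
      have h1 := hpos v hv x hx
      have h2 : (0:ℝ) < a/2 := half_pos ha
      have hx0 : (0:ℝ) < x - lam * v := lt_of_lt_of_le h2 h1
      rw [Real.norm_eq_abs, abs_neg, abs_of_pos (inv_pos.mpr (pow_pos hx0 2))]
      exact inv_anti₀ (pow_pos h2 2) (pow_le_pow_left₀ (le_of_lt h2) h1 2)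
    · filter_upwards [hae] with v hv
      intro x hx
      have h1 := hpos v hv x hx
      have hne : x - lam * v ≠ 0 := ne_of_gt (lt_of_lt_of_le (half_pos ha) h1)
      have hd : HasDerivAt (fun t : ℝ => t - lam * v) 1 x := (hasDerivAt_id x).sub_const _
      have := hd.fun_inv hne
      simpa [neg_div, one_div] using this
  -- F E > 0
  have hFE_pos : 0 < F E := by
    have hEl : (0:ℝ) < E + lam := by linarith
    have hle : ∫ (_ : ℝ), (E + lam)⁻¹ ∂μ ≤ F E := by
      refine integral_mono_ae (integrable_const _) hfint ?_
      filter_upwards [hae] with v hv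
      have h1 : E - lam * v ≤ E + lam := by nlinarith [hv.1]
      exact inv_anti₀ (lt_of_lt_of_le ha (hEpos v hv)) h1
    have : (E + lam)⁻¹ ≤ F E := by simpa using hle
    exact lt_of_lt_of_le (inv_pos.mpr hEl) this
  have hFE_ne : F E ≠ 0 := ne_of_gt hFE_pos
  -- the derivative of F⁻¹
  set G : ℝ := ∫ v, ((E - lam * v)⁻¹) ^ 2 ∂μ with hG_def
  have hint_eq : (∫ v, -((E - lam * v) ^ 2)⁻¹ ∂μ) = -G := by
    rw [hG_def, ← integral_neg]
    refine integral_congr_ae (Filter.Eventually.of_forall fun v => ?_)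
    show -((E - lam * v) ^ 2)⁻¹ = -((E - lam * v)⁻¹ ^ 2)
    rw [inv_pow]
  have hderiv' : HasDerivAt (fun t : ℝ => (F t)⁻¹) (G / (F E) ^ 2) E := by
    have := hderiv.fun_inv hFE_ne
    rw [hint_eq] at this
    rw [neg_neg] at this
    exact this
  refine ⟨G / (F E) ^ 2, hderiv', ?_⟩
  -- variance argument: G > (F E)^2
  rw [lt_div_iff₀ (by positivity), one_mul]
  -- ∫ (f - F E)^2 = G - (F E)^2
  have hsubint : Integrable (fun v => ((E - lam * v)⁻¹ - F E) ^ 2) μ := by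
    have : (fun v => ((E - lam * v)⁻¹ - F E) ^ 2)
        = fun v => ((E - lam * v)⁻¹) ^ 2 - 2 * F E * (E - lam * v)⁻¹ + (F E) ^ 2 := by
      funext v; ring
    rw [this]
    have i1 : Integrable (fun v => ((E - lam * v)⁻¹) ^ 2 - 2 * F E * (E - lam * v)⁻¹) μ :=
      hf2int.sub (hfint.const_mul _)
    exact i1.add (integrable_const _)
  have hvar_eq : (∫ v, ((E - lam * v)⁻¹ - F E) ^ 2 ∂μ) = G - (F E) ^ 2 := by
    have hexp : (fun v => ((E - lam * v)⁻¹ - F E) ^ 2)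
        = fun v => ((E - lam * v)⁻¹) ^ 2 - 2 * F E * (E - lam * v)⁻¹ + (F E) ^ 2 := by
      funext v; ring
    have i1 : Integrable (fun v => ((E - lam * v)⁻¹) ^ 2 - 2 * F E * (E - lam * v)⁻¹) μ :=
      hf2int.sub (hfint.const_mul _)
    have i2 : Integrable (fun v => 2 * F E * (E - lam * v)⁻¹) μ := hfint.const_mul _
    rw [hexp, integral_add i1 (integrable_const _), integral_sub hf2int i2,
      integral_const_mul, integral_const]
    simp only [Measure.real, measure_univ, ENNReal.toReal_one, smul_eq_mul, one_mul]
    rw [hG_def]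
    have : ∫ v, (E - lam * v)⁻¹ ∂μ = F E := rfl
    rw [this]; ring
  have hvar_pos : 0 < ∫ v, ((E - lam * v)⁻¹ - F E) ^ 2 ∂μ := by
    rcases lt_or_eq_of_le (integral_nonneg (f := fun v => ((E - lam * v)⁻¹ - F E) ^ 2) fun v => sq_nonneg _) with h | h
    · exact h
    exfalso
    have hzero : (fun v => ((E - lam * v)⁻¹ - F E) ^ 2) =ᵐ[μ] 0 := by
      rw [← integral_eq_zero_iff_of_nonneg (fun v => sq_nonneg _) hsubint]
      exact h.symm
    have hconst : ∀ᵐ v ∂μ, v = (E - (F E)⁻¹) / lam := by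
      filter_upwards [hzero, hae] with v hv hvIcc
      have h1 : ((E - lam * v)⁻¹ - F E) ^ 2 = 0 := hv
      have h2 : (E - lam * v)⁻¹ = F E := by nlinarith [sq_nonneg ((E - lam * v)⁻¹ - F E)]
      have hne : E - lam * v ≠ 0 := ne_of_gt (lt_of_lt_of_le ha (hEpos v hvIcc))
      have h3 : E - lam * v = (F E)⁻¹ := by
        rw [← h2, inv_inv]
      field_simp [ne_of_gt hlam] at h3 ⊢
      linarith
    have hm : (∫ v, v ∂μ) = (E - (F E)⁻¹) / lam := by
      rw [integral_congr_ae (hconst.mono fun v hv => hv)]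
      simp
    have hc0 : (E - (F E)⁻¹) / lam = 0 := by rw [← hm, hmean]
    have hv2 : (∫ v, v ^ 2 ∂μ) = 0 := by
      have : ∀ᵐ v ∂μ, v ^ 2 = 0 := by
        filter_upwards [hconst] with v hv
        rw [hv, hc0]; ring
      rw [integral_congr_ae this]
      simp
    exact absurd hv2 (ne_of_gt hvar)
  linarith [hvar_eq ▸ hvar_pos]
end

section
/- Let N ≥ 1, V an N×N complex Hermitian matrix, φ ∈ ℂ^N nonzero, and E ∈ ℝ such that E·1 − V is invertible and f(E) ≠ 0. Then for every η > 0: |a_{E+iη} − a_E| ≤ η·‖ψ_E‖², and ‖ψ_{E+iη}‖ ≤ ‖ψ_E‖. -/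
open Matrix

/-- `f z = ⟨φ, (z•1 - V)⁻¹ φ⟩`, conjugate-linear in the first slot. -/
noncomputable def fRes {N : ℕ} (V : Matrix (Fin N) (Fin N) ℂ) (φ : Fin N → ℂ) (z : ℂ) : ℂ :=
  star φ ⬝ᵥ ((z • (1 : Matrix (Fin N) (Fin N) ℂ) - V)⁻¹ *ᵥ φ)

/-- `a_z = 1 / f(z)`. -/
noncomputable def aRes {N : ℕ} (V : Matrix (Fin N) (Fin N) ℂ) (φ : Fin N → ℂ) (z : ℂ) : ℂ :=
  (fRes V φ z)⁻¹

/-- `ψ_z = f(z)⁻¹ • (z•1 - V)⁻¹ φ`. -/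
noncomputable def psiRes {N : ℕ} (V : Matrix (Fin N) (Fin N) ℂ) (φ : Fin N → ℂ) (z : ℂ) :
    Fin N → ℂ :=
  (fRes V φ z)⁻¹ • ((z • (1 : Matrix (Fin N) (Fin N) ℂ) - V)⁻¹ *ᵥ φ)

/-- The Euclidean norm on `ℂ^N`. -/
noncomputable def euclNorm {N : ℕ} (v : Fin N → ℂ) : ℝ :=
  Real.sqrt (∑ i, ‖v i‖ ^ 2)

lemma star_dot {N : ℕ} (a b : Fin N → ℂ) : star (star a ⬝ᵥ b) = star b ⬝ᵥ a := by
  simp [dotProduct, star_sum, star_mul', mul_comm]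

lemma nsq_coe {N : ℕ} (v : Fin N → ℂ) :
    star v ⬝ᵥ v = ((∑ i, ‖v i‖^2 : ℝ) : ℂ) := by
  push_cast
  simp [dotProduct, Complex.conj_mul', Pi.star_apply, Complex.star_def]

lemma nsq_nonneg {N : ℕ} (v : Fin N → ℂ) : 0 ≤ ∑ i, ‖v i‖^2 :=
  Finset.sum_nonneg fun _ _ => sq_nonneg _

lemma nsq_eq_zero {N : ℕ} (v : Fin N → ℂ) (h : ∑ i, ‖v i‖^2 = 0) : v = 0 := by
  funext i
  have := (Finset.sum_eq_zero_iff_of_nonneg (fun j _ => sq_nonneg ‖v j‖)).mp h i (Finset.mem_univ i)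
  simpa [pow_eq_zero_iff] using this

lemma adj_move {N : ℕ} (A : Matrix (Fin N) (Fin N) ℂ) (u v : Fin N → ℂ) :
    star u ⬝ᵥ (A *ᵥ v) = star (Aᴴ *ᵥ u) ⬝ᵥ v := by
  rw [star_mulVec, conjTranspose_conjTranspose, dotProduct_mulVec]

lemma unit_of_im {N : ℕ} (V : Matrix (Fin N) (Fin N) ℂ) (hV : V.IsHermitian) (z : ℂ)
    (hz : z.im ≠ 0) : IsUnit (z • (1 : Matrix (Fin N) (Fin N) ℂ) - V) := by
  rw [← Matrix.mulVec_injective_iff_isUnit]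
  intro u u' huu
  have key : ∀ t : Fin N → ℂ, (z • (1 : Matrix (Fin N) (Fin N) ℂ) - V) *ᵥ t = 0 → t = 0 := by
    intro t ht
    have h1 : star t ⬝ᵥ ((z • (1 : Matrix (Fin N) (Fin N) ℂ) - V) *ᵥ t) = 0 := by
      rw [ht, dotProduct_zero]
    have h2 : z * (star t ⬝ᵥ t) - star t ⬝ᵥ (V *ᵥ t) = 0 := by
      rw [sub_mulVec, smul_mulVec, one_mulVec, dotProduct_sub, dotProduct_smul] at h1
      simpa [smul_eq_mul] using h1
    have hq : star (star t ⬝ᵥ (V *ᵥ t)) = star t ⬝ᵥ (V *ᵥ t) := by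
      rw [star_dot, adj_move, hV.eq]
    have hqim : (star t ⬝ᵥ (V *ᵥ t)).im = 0 := by
      have := congrArg Complex.im hq
      simp only [Complex.star_def, Complex.conj_im] at this
      linarith
    obtain ⟨r, hrdef⟩ : ∃ r : ℝ, (∑ i, ‖t i‖^2 : ℝ) = r := ⟨_, rfl⟩
    rw [nsq_coe, hrdef] at h2
    have him := congrArg Complex.im h2
    simp [Complex.sub_im, Complex.mul_im, Complex.ofReal_im, Complex.ofReal_re, hqim] at him
    rcases him with h | h
    · exact absurd h hz
    · exact nsq_eq_zero t (hrdef.trans h)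
  have h0 : (z • (1 : Matrix (Fin N) (Fin N) ℂ) - V) *ᵥ (u - u') = 0 := by
    rw [mulVec_sub, huu, sub_self]
  exact sub_eq_zero.mp (key _ h0)

lemma resolvent_id {N : ℕ} (A B : Matrix (Fin N) (Fin N) ℂ) (hA : IsUnit A) (hB : IsUnit B) :
    B⁻¹ - A⁻¹ = A⁻¹ * (A - B) * B⁻¹ := by
  have hA' := (Matrix.isUnit_iff_isUnit_det A).mp hA
  have hB' := (Matrix.isUnit_iff_isUnit_det B).mp hB
  rw [mul_sub, Matrix.nonsing_inv_mul A hA', sub_mul, one_mul, mul_assoc,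
    Matrix.mul_nonsing_inv B hB', mul_one]

lemma resolvent_id' {N : ℕ} (A B : Matrix (Fin N) (Fin N) ℂ) (hA : IsUnit A) (hB : IsUnit B) :
    B⁻¹ - A⁻¹ = B⁻¹ * (A - B) * A⁻¹ := by
  have hA' := (Matrix.isUnit_iff_isUnit_det A).mp hA
  have hB' := (Matrix.isUnit_iff_isUnit_det B).mp hB
  rw [mul_sub, Matrix.nonsing_inv_mul B hB', sub_mul, one_mul, mul_assoc,
    Matrix.mul_nonsing_inv A hA', mul_one]

lemma euclNorm_smul {N : ℕ} (c : ℂ) (v : Fin N → ℂ) :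
    euclNorm (c • v) = ‖c‖ * euclNorm v := by
  unfold euclNorm
  simp only [Pi.smul_apply, smul_eq_mul, norm_mul, mul_pow, ← Finset.mul_sum]
  rw [Real.sqrt_mul (sq_nonneg _), Real.sqrt_sq (norm_nonneg c)]

lemma cauchy_schwarz_dot {N : ℕ} (u v : Fin N → ℂ) :
    ‖star u ⬝ᵥ v‖ ≤ Real.sqrt (∑ i, ‖u i‖^2) * Real.sqrt (∑ i, ‖v i‖^2) := by
  have h := norm_inner_le_norm (𝕜 := ℂ) (WithLp.toLp 2 u) (WithLp.toLp 2 v)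
  rw [EuclideanSpace.inner_toLp_toLp, dotProduct_comm] at h
  simpa [EuclideanSpace.norm_eq] using h

lemma le_of_sq_le_sq' (a b : ℝ) (ha : 0 ≤ a) (hb : 0 ≤ b) (h : a^2 ≤ b^2) : a ≤ b := by
  nlinarith [sq_nonneg (a - b), sq_nonneg (a + b)]

set_option maxHeartbeats 1000000 in
/-- Key estimate, Lemma 2.11(i) of the paper: for real `E` where `f(E)` is defined and
nonzero, `|a_{E+iη} - a_E| ≤ η‖ψ_E‖²` and `‖ψ_{E+iη}‖ ≤ ‖ψ_E‖` for all `η > 0`. -/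
theorem stmt_5 (N : ℕ) (hN : 1 ≤ N) (V : Matrix (Fin N) (Fin N) ℂ) (hV : V.IsHermitian)
    (φ : Fin N → ℂ) (hφ : φ ≠ 0) (E : ℝ)
    (hinv : IsUnit ((E : ℂ) • (1 : Matrix (Fin N) (Fin N) ℂ) - V))
    (hf : fRes V φ (E : ℂ) ≠ 0) :
    ∀ η : ℝ, 0 < η →
      ‖aRes V φ ((E : ℂ) + η * Complex.I) - aRes V φ (E : ℂ)‖
          ≤ η * (euclNorm (psiRes V φ (E : ℂ))) ^ 2 ∧
      euclNorm (psiRes V φ ((E : ℂ) + η * Complex.I)) ≤ euclNorm (psiRes V φ (E : ℂ)) := by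
  intro η hη
  simp only [aRes, psiRes, fRes] at hf ⊢
  set z : ℂ := (E:ℂ) + ↑η * Complex.I with hzdef
  set zb : ℂ := (E:ℂ) - ↑η * Complex.I with hzbdef
  set A : Matrix (Fin N) (Fin N) ℂ := z • 1 - V with hAdef
  set Ab : Matrix (Fin N) (Fin N) ℂ := zb • 1 - V with hAbdef
  set A0 : Matrix (Fin N) (Fin N) ℂ := (E:ℂ) • 1 - V with hA0def
  have hA : IsUnit A := unit_of_im V hV z (by rw [hzdef]; simp; exact ne_of_gt hη)
  have hAb : IsUnit Ab := unit_of_im V hV zb (by rw [hzbdef]; simp; exact ne_of_gt hη)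
  set x : Fin N → ℂ := A0⁻¹ *ᵥ φ with hxdef
  set y : Fin N → ℂ := A⁻¹ *ᵥ φ with hydef
  set yb : Fin N → ℂ := Ab⁻¹ *ᵥ φ with hybdef
  set fz : ℂ := star φ ⬝ᵥ y with hfzdef
  set fE : ℂ := star φ ⬝ᵥ x with hfEdef
  set fzb : ℂ := star φ ⬝ᵥ yb with hfzbdef
  clear_value x y yb fz fE fzb
  -- conjugate-transpose facts
  have hstarz : star z = zb := by
    rw [hzdef, hzbdef]; simp [Complex.star_def, Complex.conj_ofReal]; ring
  have hAH : Aᴴ = Ab := by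
    rw [hAdef, hAbdef, conjTranspose_sub, conjTranspose_smul, conjTranspose_one, hV.eq, hstarz]
  have hAbH : Abᴴ = A := by rw [← hAH, conjTranspose_conjTranspose]
  have hA0H : A0ᴴ = A0 := by
    rw [hA0def, conjTranspose_sub, conjTranspose_smul, conjTranspose_one, hV.eq]
    norm_num
  have hGH : A⁻¹ᴴ = Ab⁻¹ := by rw [Matrix.conjTranspose_nonsing_inv, hAH]
  have hGbH : Ab⁻¹ᴴ = A⁻¹ := by rw [Matrix.conjTranspose_nonsing_inv, hAbH]
  have hG0H : A0⁻¹ᴴ = A0⁻¹ := by rw [Matrix.conjTranspose_nonsing_inv, hA0H]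
  -- scalar differences of the matrices
  have hdiff1 : A - A0 = ((η:ℂ) * Complex.I) • (1 : Matrix (Fin N) (Fin N) ℂ) := by
    rw [hAdef, hA0def]
    ext i j
    by_cases h : i = j <;> simp [h, Matrix.one_apply, hzdef] <;> ring
  have hdiff2 : A - Ab = ((2:ℂ) * η * Complex.I) • (1 : Matrix (Fin N) (Fin N) ℂ) := by
    rw [hAdef, hAbdef]
    ext i j
    by_cases h : i = j <;> simp [h, Matrix.one_apply, hzdef, hzbdef] <;> ring
  -- resolvent identities
  have hres1 : A0⁻¹ - A⁻¹ = ((η:ℂ) * Complex.I) • (A⁻¹ * A0⁻¹) := by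
    rw [resolvent_id A A0 hA hinv, hdiff1, mul_smul_comm, mul_one, smul_mul_assoc]
  have hres2 : Ab⁻¹ - A⁻¹ = ((2:ℂ) * η * Complex.I) • (A⁻¹ * Ab⁻¹) := by
    rw [resolvent_id A Ab hA hAb, hdiff2, mul_smul_comm, mul_one, smul_mul_assoc]
  have hres2' : Ab⁻¹ - A⁻¹ = ((2:ℂ) * η * Complex.I) • (Ab⁻¹ * A⁻¹) := by
    rw [resolvent_id' A Ab hA hAb, hdiff2, mul_smul_comm, mul_one, smul_mul_assoc]
  set wc : ℂ := star yb ⬝ᵥ x with hwcdef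
  clear_value wc
  -- key identity K1 : fE - fz = iη ⟨yb, x⟩
  have hK1 : fE - fz = ((η:ℂ) * Complex.I) * wc := by
    calc fE - fz = star φ ⬝ᵥ ((A0⁻¹ - A⁻¹) *ᵥ φ) := by
          rw [sub_mulVec, dotProduct_sub, ← hxdef, ← hydef, ← hfEdef, ← hfzdef]
      _ = star φ ⬝ᵥ ((((η:ℂ) * Complex.I) • (A⁻¹ * A0⁻¹)) *ᵥ φ) := by rw [hres1]
      _ = ((η:ℂ) * Complex.I) * (star φ ⬝ᵥ (A⁻¹ *ᵥ x)) := by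
          rw [smul_mulVec, dotProduct_smul, smul_eq_mul, ← mulVec_mulVec, ← hxdef]
      _ = ((η:ℂ) * Complex.I) * wc := by rw [adj_move, hGH, ← hybdef, ← hwcdef]
  -- key identity K2 in two forms
  have hK2a : fzb - fz = ((2:ℂ) * η * Complex.I) * (star yb ⬝ᵥ yb) := by
    calc fzb - fz = star φ ⬝ᵥ ((Ab⁻¹ - A⁻¹) *ᵥ φ) := by
          rw [sub_mulVec, dotProduct_sub, ← hybdef, ← hydef, ← hfzbdef, ← hfzdef]
      _ = star φ ⬝ᵥ ((((2:ℂ) * η * Complex.I) • (A⁻¹ * Ab⁻¹)) *ᵥ φ) := by rw [hres2]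
      _ = ((2:ℂ) * η * Complex.I) * (star φ ⬝ᵥ (A⁻¹ *ᵥ yb)) := by
          rw [smul_mulVec, dotProduct_smul, smul_eq_mul, ← mulVec_mulVec, ← hybdef]
      _ = ((2:ℂ) * η * Complex.I) * (star yb ⬝ᵥ yb) := by rw [adj_move, hGH, ← hybdef]
  have hK2b : fzb - fz = ((2:ℂ) * η * Complex.I) * (star y ⬝ᵥ y) := by
    calc fzb - fz = star φ ⬝ᵥ ((Ab⁻¹ - A⁻¹) *ᵥ φ) := by
          rw [sub_mulVec, dotProduct_sub, ← hybdef, ← hydef, ← hfzbdef, ← hfzdef]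
      _ = star φ ⬝ᵥ ((((2:ℂ) * η * Complex.I) • (Ab⁻¹ * A⁻¹)) *ᵥ φ) := by rw [hres2']
      _ = ((2:ℂ) * η * Complex.I) * (star φ ⬝ᵥ (Ab⁻¹ *ᵥ y)) := by
          rw [smul_mulVec, dotProduct_smul, smul_eq_mul, ← mulVec_mulVec, ← hydef]
      _ = ((2:ℂ) * η * Complex.I) * (star y ⬝ᵥ y) := by rw [adj_move, hGbH, ← hydef]
  -- conjugation identities
  have hK3 : star fz = fzb := by
    have h := adj_move (A⁻¹ᴴ) φ φ
    rw [conjTranspose_conjTranspose] at h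
    rw [hfzdef, star_dot, hydef, ← h, hGH, ← hybdef, ← hfzbdef]
  have hK4 : star fE = fE := by
    have h := adj_move (A0⁻¹ᴴ) φ φ
    rw [conjTranspose_conjTranspose] at h
    rw [hfEdef, star_dot, hxdef, ← h, hG0H, ← hxdef, ← hfEdef]
  -- real quantities
  set py : ℝ := ∑ i, ‖y i‖^2 with hpydef
  set pb : ℝ := ∑ i, ‖yb i‖^2 with hpbdef
  set g : ℝ := ∑ i, ‖x i‖^2 with hgdef
  clear_value py pb g
  have hyds : star y ⬝ᵥ y = ((py:ℝ):ℂ) := by rw [nsq_coe, hpydef]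
  have hybds : star yb ⬝ᵥ yb = ((pb:ℝ):ℂ) := by rw [nsq_coe, hpbdef]
  -- imaginary part of fz
  have him : fz.im = -(η * py) := by
    have h : star fz - fz = ((2:ℂ) * η * Complex.I) * ((py:ℝ):ℂ) := by
      rw [hK3, hK2b, hyds]
    have h2 := congrArg Complex.im h
    simp [Complex.star_def, Complex.mul_im, Complex.mul_re] at h2
    linarith
  -- fE is real
  have hfEim : fE.im = 0 := by
    have h2 := congrArg Complex.im hK4
    simp only [Complex.star_def, Complex.conj_im] at h2
    linarith
  set e : ℝ := fE.re with hedef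
  have hfEe : fE = ((e:ℝ):ℂ) := by
    rw [hedef]
    exact Complex.ext rfl (by simp [hfEim])
  -- real and imaginary parts of K1
  have hK1re : e - fz.re = -(η * wc.im) := by
    have h2 := congrArg Complex.re hK1
    simp [Complex.sub_re, Complex.mul_re, Complex.mul_im] at h2
    linarith
  have hK1im : wc.re = py := by
    have h2 := congrArg Complex.im hK1
    simp [Complex.sub_im, hfEim, Complex.mul_im, him] at h2
    rcases h2 with h | h
    · exact h.symm
    · exact absurd h hη.ne'
  -- pb = py
  have hpbpy : pb = py := by
    have h : ((2:ℂ) * η * Complex.I) * ((pb:ℝ):ℂ) = ((2:ℂ) * η * Complex.I) * ((py:ℝ):ℂ) := by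
      rw [← hybds, ← hyds, ← hK2a, ← hK2b]
    have hne : ((2:ℂ) * η * Complex.I) ≠ 0 :=
      mul_ne_zero (mul_ne_zero two_ne_zero (by exact_mod_cast hη.ne')) Complex.I_ne_zero
    exact_mod_cast mul_left_cancel₀ hne h
  -- positivity
  have hy0 : y ≠ 0 := by
    intro h
    apply hφ
    have : A *ᵥ y = φ := by
      rw [hydef, mulVec_mulVec, Matrix.mul_nonsing_inv A ((Matrix.isUnit_iff_isUnit_det A).mp hA),
        one_mulVec]
    rw [h, mulVec_zero] at this
    exact this.symm
  have hpy : 0 < py := by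
    rw [hpydef]
    exact lt_of_le_of_ne (nsq_nonneg y) (fun h => hy0 (nsq_eq_zero y h.symm))
  have hx0 : x ≠ 0 := by
    intro h
    apply hf
    rw [hfEdef, h, dotProduct_zero]
  have hg0 : 0 < g := by
    rw [hgdef]
    exact lt_of_le_of_ne (nsq_nonneg x) (fun h => hx0 (nsq_eq_zero x h.symm))
  have hfz0 : fz ≠ 0 := by
    intro h
    rw [h] at him
    simp at him
    rcases him with h' | h'
    · exact hη.ne' h'
    · exact hpy.ne' h'
  have he0 : e ≠ 0 := by
    intro h
    apply hf
    rw [hfEe, h]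
    norm_num
  -- Cauchy-Schwarz
  have hcs : ‖wc‖ ≤ Real.sqrt py * Real.sqrt g := by
    rw [hwcdef, ← hpbpy, hpbdef, hgdef]
    exact cauchy_schwarz_dot yb x
  have hcs2 : wc.re * wc.re + wc.im * wc.im ≤ py * g := by
    have h1 : (‖wc‖)^2 ≤ (Real.sqrt py * Real.sqrt g)^2 :=
      pow_le_pow_left₀ (norm_nonneg _) hcs 2
    rw [mul_pow, Real.sq_sqrt hpy.le, Real.sq_sqrt hg0.le, Complex.sq_norm,
      Complex.normSq_apply] at h1
    exact h1
  clear hydef hxdef hybdef hwcdef hyds hybds hy0 hx0 hpbpy hpbdef hK2a hK2b hK3 hK4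
  clear hres1 hres2 hres2' hdiff1 hdiff2 hGH hGbH hG0H hAH hAbH hA0H hstarz hA hAb hinv
  clear hfzdef hfEdef hfzbdef hzdef hzbdef hAdef hAbdef hA0def hcs
  clear yb fzb pb A Ab A0 z zb
  clear hV hφ hN
  set α : ℝ := fz.re with hαdef
  set wi : ℝ := wc.im with hwidef
  have habsfz : (‖fz‖)^2 = α^2 + (η*py)^2 := by
    rw [Complex.sq_norm, Complex.normSq_apply, him, ← hαdef]
    ring
  have hea : e = α - η * wi := by linarith [hK1re]
  -- the key real inequality
  have hkey : e^2 * py ≤ (‖fz‖)^2 * g := by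
    rw [habsfz, hea]
    have hcs3 : py^2 + wi^2 ≤ py * g := by nlinarith [hcs2, hK1im]
    nlinarith [sq_nonneg (α * wi + η * py^2),
      mul_nonneg (by positivity : (0:ℝ) ≤ α^2 + (η*py)^2) (by linarith : 0 ≤ py*g - py^2 - wi^2),
      hpy]
  have habsfE : ‖fE‖ = |e| := by rw [hfEe, Complex.norm_real, Real.norm_eq_abs]
  have hFz : 0 < ‖fz‖ := norm_pos_iff.mpr hfz0
  have hee : 0 < |e| := abs_pos.mpr he0
  -- norms of the psi vectors
  have hnz : euclNorm (fz⁻¹ • y) = (‖fz‖)⁻¹ * Real.sqrt py := by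
    rw [euclNorm_smul, norm_inv]
    unfold euclNorm
    rw [← hpydef]
  have hnE : euclNorm (fE⁻¹ • x) = |e|⁻¹ * Real.sqrt g := by
    rw [euclNorm_smul, norm_inv, habsfE]
    unfold euclNorm
    rw [← hgdef]
  constructor
  · -- part (i)
    have hfE0 : fE ≠ 0 := hf
    have hfinal : ‖wc‖ * |e| ≤ ‖fz‖ * g := by
      apply le_of_sq_le_sq' _ _ (by positivity) (by positivity)
      rw [mul_pow, mul_pow, Complex.sq_norm, Complex.normSq_apply, sq_abs]
      nlinarith [mul_le_mul_of_nonneg_right hcs2 (sq_nonneg e),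
        mul_le_mul_of_nonneg_right hkey hg0.le]
    have hLabs : ‖fz⁻¹ - fE⁻¹‖ = η * ‖wc‖ / (‖fz‖ * |e|) := by
      rw [inv_sub_inv hfz0 hfE0, hK1, norm_div, norm_mul, norm_mul, norm_mul, habsfE]
      simp [Complex.norm_real, Real.norm_eq_abs, abs_of_pos hη]
    rw [hLabs, hnE]
    rw [show η * (|e|⁻¹ * Real.sqrt g)^2 = η * g / |e|^2 by
      rw [mul_pow, Real.sq_sqrt hg0.le]; field_simp]
    rw [div_le_div_iff₀ (by positivity) (by positivity)]
    nlinarith [mul_le_mul_of_nonneg_left hfinal (mul_nonneg hη.le hee.le)]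
  · -- part (ii)
    rw [hnz, hnE, ← div_eq_inv_mul, ← div_eq_inv_mul, div_le_div_iff₀ hFz hee]
    have hsq : (Real.sqrt py * |e|)^2 ≤ (Real.sqrt g * ‖fz‖)^2 := by
      rw [mul_pow, mul_pow, Real.sq_sqrt hpy.le, Real.sq_sqrt hg0.le, sq_abs]
      nlinarith [hkey]
    exact le_of_sq_le_sq' _ _ (by positivity) (by positivity) hsq
end

section
/- Fix reals 0 < a ≤ b and a Borel probability measure μ on ℝ with μ([a,b]) = 1, and assume σ₂ > 0. Then for every n ≥ 1: 0 < ∫ M_n dμⁿ − h ≤ b·h²·σ₂/n. -/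
open MeasureTheory

section aux

variable {α : Type*} [MeasurableSpace α] (μ : Measure α) [IsProbabilityMeasure μ]

lemma prod_pair_aux {β : Type*} [CommMonoid β] {n : ℕ} {i j : Fin n} (hij : i ≠ j)
    (A B : Fin n → β) :
    (∏ k : Fin n, (if k = i then A k else if k = j then B k else 1)) = A i * B j := by
  rw [← Finset.mul_prod_erase Finset.univ _ (Finset.mem_univ i), if_pos rfl]
  rw [← Finset.mul_prod_erase _ _ (Finset.mem_erase.mpr ⟨hij.symm, Finset.mem_univ j⟩),
    if_neg hij.symm, if_pos rfl]
  rw [Finset.prod_eq_one, mul_one]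
  intro k hk
  simp only [Finset.mem_erase, Finset.mem_univ] at hk
  rw [if_neg hk.2.1, if_neg hk.1]

lemma integral_pi_single {n : ℕ} (i : Fin n) (g : α → ℝ) :
    ∫ x, g (x i) ∂(Measure.pi fun _ : Fin n => μ) = ∫ y, g y ∂μ := by
  letI : MeasureSpace α := ⟨μ⟩
  haveI : SigmaFinite (volume : Measure α) := inferInstanceAs (SigmaFinite μ)
  have hvol : (Measure.pi fun _ : Fin n => μ) = (volume : Measure (Fin n → α)) := rfl
  rw [hvol]
  have h1 : ∀ x : Fin n → α, g (x i) = ∏ k, (fun k (y : α) => if k = i then g y else 1) k (x k) := by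
    intro x
    rw [Finset.prod_ite_eq' Finset.univ i (fun k => g (x k))]
    simp
  erw [integral_congr_ae (Filter.Eventually.of_forall h1),
    MeasureTheory.integral_fintype_prod_eq_prod (μ := fun _ => volume) (fun k (y : α) => if k = i then g y else 1)]
  have h2 : ∀ k : Fin n, (∫ y : α, (if k = i then g y else (1:ℝ))) = if k = i then ∫ y, g y else 1 := by
    intro k; split_ifs <;> simp
  rw [Finset.prod_congr rfl fun k _ => h2 k,
    Finset.prod_ite_eq' Finset.univ i (fun _ => ∫ y : α, g y), if_pos (Finset.mem_univ i)]
  rfl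

lemma integral_pi_pair {n : ℕ} {i j : Fin n} (hij : i ≠ j) (g₁ g₂ : α → ℝ) :
    ∫ x, g₁ (x i) * g₂ (x j) ∂(Measure.pi fun _ : Fin n => μ)
      = (∫ y, g₁ y ∂μ) * (∫ y, g₂ y ∂μ) := by
  letI : MeasureSpace α := ⟨μ⟩
  haveI : SigmaFinite (volume : Measure α) := inferInstanceAs (SigmaFinite μ)
  have hvol : (Measure.pi fun _ : Fin n => μ) = (volume : Measure (Fin n → α)) := rfl
  rw [hvol]
  have h1 : ∀ x : Fin n → α, g₁ (x i) * g₂ (x j)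
      = ∏ k, (fun k (y : α) => if k = i then g₁ y else if k = j then g₂ y else 1) k (x k) := by
    intro x
    rw [prod_pair_aux hij (fun k => g₁ (x k)) (fun k => g₂ (x k))]
  erw [integral_congr_ae (Filter.Eventually.of_forall h1),
    MeasureTheory.integral_fintype_prod_eq_prod (μ := fun _ => volume)
      (fun k (y : α) => if k = i then g₁ y else if k = j then g₂ y else 1)]
  have h2 : ∀ k : Fin n, (∫ y : α, (if k = i then g₁ y else if k = j then g₂ y else (1:ℝ)))
      = if k = i then ∫ y, g₁ y else if k = j then ∫ y, g₂ y else 1 := by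
    intro k; split_ifs <;> simp
  rw [Finset.prod_congr rfl fun k _ => h2 k,
    prod_pair_aux hij (fun _ => ∫ y : α, g₁ y) (fun _ => ∫ y : α, g₂ y)]
  rfl

end aux

set_option maxHeartbeats 1000000 in
/-- Harmonic mean estimate (Theorem 5.1 of the paper, first moment, first part):
`0 < 𝔼(M_n) - h ≤ b h² σ₂ / n`. -/
theorem stmt_9 (a b : ℝ) (ha : 0 < a) (hab : a ≤ b)
    (μ : Measure ℝ) [IsProbabilityMeasure μ] (hsupp : μ (Set.Icc a b) = 1)
    (h σ2 : ℝ) (hh : h = (∫ x, x⁻¹ ∂μ)⁻¹)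
    (hσ2 : σ2 = ∫ x, (x⁻¹ - h⁻¹) ^ 2 ∂μ) (hσpos : 0 < σ2)
    (n : ℕ) (hn : 1 ≤ n) :
    0 < (∫ x, (n : ℝ) / (∑ j, (x j)⁻¹) ∂(Measure.pi fun _ : Fin n => μ)) - h ∧
    (∫ x, (n : ℝ) / (∑ j, (x j)⁻¹) ∂(Measure.pi fun _ : Fin n => μ)) - h
      ≤ b * h ^ 2 * σ2 / n := by
  have hb : (0:ℝ) < b := lt_of_lt_of_le ha hab
  have hnpos : (0:ℝ) < n := by exact_mod_cast hn
  set m : ℝ := ∫ x, x⁻¹ ∂μ with hm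
  -- a.e. membership
  have hae : ∀ᵐ x ∂μ, x ∈ Set.Icc a b := by
    have hc : μ (Set.Icc a b)ᶜ = 0 := by
      have := measure_compl (measurableSet_Icc (a := a) (b := b)) (measure_ne_top μ _)
      rw [hsupp, measure_univ] at this
      simpa using this
    rw [MeasureTheory.ae_iff]
    simpa [Set.compl_def] using hc
  -- bounds for x⁻¹ on the support
  have hinv_mem : ∀ x : ℝ, x ∈ Set.Icc a b → x⁻¹ ∈ Set.Icc b⁻¹ a⁻¹ := by
    intro x hx
    have hxpos : 0 < x := lt_of_lt_of_le ha hx.1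
    exact ⟨inv_anti₀ hxpos hx.2, inv_anti₀ ha hx.1⟩
  have hmeas_inv : Measurable fun x : ℝ => x⁻¹ := measurable_inv
  have hint_inv : Integrable (fun x : ℝ => x⁻¹) μ := by
    refine Integrable.mono' (integrable_const a⁻¹) hmeas_inv.aestronglyMeasurable
      (hae.mono fun x hx => ?_)
    have h1 := hinv_mem x hx
    have h2 : (0:ℝ) ≤ x⁻¹ := le_trans (le_of_lt (inv_pos.2 hb)) h1.1
    rw [Real.norm_eq_abs, abs_of_nonneg h2]
    exact h1.2
  have hm_lb : b⁻¹ ≤ m := by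
    have := integral_mono_ae (integrable_const b⁻¹) hint_inv
      (hae.mono fun x hx => (hinv_mem x hx).1)
    simpa using this
  have hm_ub : m ≤ a⁻¹ := by
    have := integral_mono_ae hint_inv (integrable_const a⁻¹)
      (hae.mono fun x hx => (hinv_mem x hx).2)
    simpa using this
  have hm_pos : 0 < m := lt_of_lt_of_le (inv_pos.2 hb) hm_lb
  have hhm : h = m⁻¹ := hh
  have hhpos : 0 < h := by rw [hhm]; exact inv_pos.2 hm_pos
  have hinvh : h⁻¹ = m := by rw [hhm, inv_inv]
  have hh_le_b : h ≤ b := by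
    rw [hhm]
    calc m⁻¹ ≤ b⁻¹⁻¹ := inv_anti₀ (inv_pos.2 hb) hm_lb
    _ = b := inv_inv b
  -- centered variable
  set d : ℝ → ℝ := fun y => y⁻¹ - m with hd
  have hmeas_d : Measurable d := hmeas_inv.sub measurable_const
  have hd_bound : ∀ x : ℝ, x ∈ Set.Icc a b → |d x| ≤ a⁻¹ := by
    intro x hx
    have h1 := hinv_mem x hx
    have hb0 : (0:ℝ) < b⁻¹ := inv_pos.2 hb
    have hdx : d x = x⁻¹ - m := rfl
    rw [hdx, abs_sub_le_iff]
    constructor <;> nlinarith [h1.1, h1.2, hm_lb, hm_ub, inv_pos.2 hb]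
  have hint_d : Integrable d μ := hint_inv.sub (integrable_const m)
  have hint_d2 : Integrable (fun x => d x ^ 2) μ := by
    refine Integrable.mono' (integrable_const (a⁻¹ ^ 2)) (hmeas_d.pow_const 2).aestronglyMeasurable
      (hae.mono fun x hx => ?_)
    rw [Real.norm_eq_abs, abs_pow]
    exact pow_le_pow_left₀ (abs_nonneg _) (hd_bound x hx) 2
  have hd_int_zero : ∫ y, d y ∂μ = 0 := by
    rw [hd]
    rw [integral_sub hint_inv (integrable_const m)]
    simp [hm]
  have hσ2' : σ2 = ∫ y, d y ^ 2 ∂μ := by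
    rw [hσ2, hinvh]
  -- product measure
  set ν : Measure (Fin n → ℝ) := Measure.pi fun _ : Fin n => μ with hν
  haveI : IsProbabilityMeasure ν := by rw [hν]; infer_instance
  have haep : ∀ᵐ x ∂ν, ∀ j, x j ∈ Set.Icc a b := by
    rw [hν]
    exact Filter.eventually_all.2 fun j => Measure.tendsto_eval_ae_ae.eventually hae
  set S : (Fin n → ℝ) → ℝ := fun x => ∑ j, (x j)⁻¹ with hS
  have hmeas_S : Measurable S := Finset.measurable_sum _ fun j _ => (measurable_pi_apply j).inv
  have hint_nu : ∀ (f : (Fin n → ℝ) → ℝ) (C : ℝ), Measurable f →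
      (∀ x, (∀ j, x j ∈ Set.Icc a b) → |f x| ≤ C) → Integrable f ν := by
    intro f C hf hbd
    exact Integrable.mono' (integrable_const C) hf.aestronglyMeasurable
      (haep.mono fun x hx => by rw [Real.norm_eq_abs]; exact hbd x hx)
  have hS_bounds : ∀ x : Fin n → ℝ, (∀ j, x j ∈ Set.Icc a b) →
      (n:ℝ) * b⁻¹ ≤ S x ∧ S x ≤ n * a⁻¹ := by
    intro x hx
    constructor
    · calc (n:ℝ) * b⁻¹ = ∑ _j : Fin n, b⁻¹ := by
            simp [Finset.sum_const, mul_comm]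
      _ ≤ S x := Finset.sum_le_sum fun j _ => (hinv_mem _ (hx j)).1
    · calc S x ≤ ∑ _j : Fin n, a⁻¹ := Finset.sum_le_sum fun j _ => (hinv_mem _ (hx j)).2
      _ = n * a⁻¹ := by simp [Finset.sum_const, mul_comm]
  have hS_pos : ∀ x, (∀ j, x j ∈ Set.Icc a b) → 0 < S x := fun x hx =>
    lt_of_lt_of_le (mul_pos hnpos (inv_pos.2 hb)) (hS_bounds x hx).1
  set G : (Fin n → ℝ) → ℝ := fun x => S x / n - m with hG
  set R : (Fin n → ℝ) → ℝ := fun x => G x ^ 2 / (S x / n) with hR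
  have hmeas_G : Measurable G := (hmeas_S.div_const _).sub measurable_const
  have hmeas_R : Measurable R := (hmeas_G.pow_const 2).div (hmeas_S.div_const _)
  have hY_bounds : ∀ x, (∀ j, x j ∈ Set.Icc a b) → b⁻¹ ≤ S x / n ∧ S x / n ≤ a⁻¹ := by
    intro x hx
    have h1 := hS_bounds x hx
    constructor
    · rw [le_div_iff₀ hnpos]; nlinarith [h1.1]
    · rw [div_le_iff₀ hnpos]; nlinarith [h1.2]
  have hG_bound : ∀ x, (∀ j, x j ∈ Set.Icc a b) → |G x| ≤ a⁻¹ := by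
    intro x hx
    have h1 := hY_bounds x hx
    have hGx : G x = S x / n - m := rfl
    rw [hGx, abs_sub_le_iff]
    constructor <;> linarith [inv_pos.2 hb, hm_lb, hm_ub, h1.1, h1.2]
  have hR_bound : ∀ x, (∀ j, x j ∈ Set.Icc a b) → a * G x ^ 2 ≤ R x ∧ R x ≤ b * G x ^ 2 := by
    intro x hx
    have h1 := hY_bounds x hx
    have hy : 0 < S x / n := lt_of_lt_of_le (inv_pos.2 hb) h1.1
    have hRx : R x = G x ^ 2 / (S x / n) := rfl
    have hG2 : (0:ℝ) ≤ G x ^ 2 := sq_nonneg _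
    have haa : a * a⁻¹ = 1 := mul_inv_cancel₀ ha.ne'
    have hbb : b * b⁻¹ = 1 := mul_inv_cancel₀ hb.ne'
    constructor
    · rw [hRx, le_div_iff₀ hy]
      nlinarith [mul_le_mul_of_nonneg_left h1.2 ha.le]
    · rw [hRx, div_le_iff₀ hy]
      nlinarith [mul_le_mul_of_nonneg_left h1.1 hb.le]
  have hint_G : Integrable G ν := hint_nu G a⁻¹ hmeas_G hG_bound
  have hint_G2 : Integrable (fun x => G x ^ 2) ν :=
    hint_nu _ (a⁻¹ ^ 2) (hmeas_G.pow_const 2) (fun x hx => by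
      rw [abs_pow]
      exact pow_le_pow_left₀ (abs_nonneg _) (hG_bound x hx) 2)
  have hint_R : Integrable R ν := by
    refine hint_nu R (b * a⁻¹ ^ 2) hmeas_R (fun x hx => ?_)
    have h2 := hR_bound x hx
    have h3 : |G x| ^ 2 ≤ a⁻¹ ^ 2 := pow_le_pow_left₀ (abs_nonneg _) (hG_bound x hx) 2
    rw [sq_abs] at h3
    rw [abs_of_nonneg (le_trans (mul_nonneg ha.le (sq_nonneg _)) h2.1)]
    calc R x ≤ b * G x ^ 2 := h2.2
    _ ≤ b * a⁻¹ ^ 2 := mul_le_mul_of_nonneg_left h3 hb.le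
  have hint_coord : ∀ j : Fin n, Integrable (fun x : Fin n → ℝ => (x j)⁻¹) ν :=
    fun j => hint_nu _ a⁻¹ (measurable_pi_apply j).inv (fun x hx => by
      have h1 := hinv_mem _ (hx j)
      rw [abs_of_nonneg (le_trans (inv_pos.2 hb).le h1.1)]; exact h1.2)
  have hint_S : Integrable S ν := by
    have := integrable_finset_sum (μ := ν) Finset.univ (fun j _ => hint_coord j)
    exact this
  have hint_S_eq : ∫ x, S x ∂ν = n * m := by
    have e1 : ∫ x, S x ∂ν = ∑ j : Fin n, ∫ x, (x j)⁻¹ ∂ν :=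
      integral_finset_sum _ (fun j _ => hint_coord j)
    have e2 : ∀ j : Fin n, ∫ x, (x j)⁻¹ ∂ν = m := fun j => by
      rw [hν]; exact integral_pi_single μ j (fun y => y⁻¹)
    rw [e1, Finset.sum_congr rfl fun j _ => e2 j]
    simp [mul_comm]
  have hint_G_eq : ∫ x, G x ∂ν = 0 := by
    have e1 : ∫ x, G x ∂ν = ∫ x, (S x / n - m) ∂ν := rfl
    rw [e1, integral_sub (hint_S.div_const _) (integrable_const m), integral_div,
      integral_const, hint_S_eq]
    field_simp
    simp
  have hd_sum : ∀ x : Fin n → ℝ, ∑ j, d (x j) = S x - n * m := by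
    intro x
    have : ∀ j : Fin n, d (x j) = (x j)⁻¹ - m := fun j => rfl
    rw [Finset.sum_congr rfl fun j _ => this j, Finset.sum_sub_distrib, Finset.sum_const,
      Finset.card_univ, Fintype.card_fin]
    simp [hS]
  have hint_dd : ∀ i j : Fin n, Integrable (fun x : Fin n → ℝ => d (x i) * d (x j)) ν :=
    fun i j => hint_nu _ (a⁻¹ * a⁻¹)
      ((hmeas_d.comp (measurable_pi_apply i)).mul (hmeas_d.comp (measurable_pi_apply j)))
      (fun x hx => by
        rw [abs_mul]
        exact mul_le_mul (hd_bound _ (hx i)) (hd_bound _ (hx j)) (abs_nonneg _)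
          (inv_pos.2 ha).le)
  have hdd_eq : ∀ i j : Fin n, ∫ x, d (x i) * d (x j) ∂ν = if i = j then σ2 else 0 := by
    intro i j
    by_cases hij : i = j
    · subst hij
      rw [if_pos rfl]
      have e : ∀ x : Fin n → ℝ, d (x i) * d (x i) = (fun y => d y ^ 2) (x i) := by
        intro x; simp; ring
      rw [integral_congr_ae (Filter.Eventually.of_forall e), hν,
        integral_pi_single μ i (fun y => d y ^ 2)]
      exact hσ2'.symm
    · rw [if_neg hij, hν, integral_pi_pair μ hij d d, hd_int_zero, mul_zero]
  have hint_G2_eq : ∫ x, G x ^ 2 ∂ν = σ2 / n := by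
    have hGsq : ∀ x, G x ^ 2 = (∑ i, ∑ j, d (x i) * d (x j)) / ((n:ℝ) ^ 2) := by
      intro x
      have hGx : G x = S x / n - m := rfl
      have h1 : G x = (∑ j, d (x j)) / n := by
        rw [hGx, hd_sum x]; field_simp
      rw [h1, div_pow, pow_two, Finset.sum_mul_sum]
    calc ∫ x, G x ^ 2 ∂ν
        = ∫ x, (∑ i, ∑ j, d (x i) * d (x j)) / ((n:ℝ) ^ 2) ∂ν :=
          integral_congr_ae (Filter.Eventually.of_forall hGsq)
    _ = (∫ x, ∑ i, ∑ j : Fin n, d (x i) * d (x j) ∂ν) / ((n:ℝ) ^ 2) := integral_div _ _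
    _ = (∑ i, ∑ j : Fin n, ∫ x, d (x i) * d (x j) ∂ν) / ((n:ℝ) ^ 2) := by
        rw [integral_finset_sum _ (fun i _ => integrable_finset_sum _ (fun j _ => hint_dd i j))]
        congr 1
        exact Finset.sum_congr rfl fun i _ => integral_finset_sum _ (fun j _ => hint_dd i j)
    _ = ((n : ℝ) * σ2) / ((n:ℝ) ^ 2) := by
        rw [Finset.sum_congr rfl fun i _ => Finset.sum_congr rfl fun j _ => hdd_eq i j]
        rw [Finset.sum_congr rfl fun i (_ : i ∈ Finset.univ) =>
          Finset.sum_ite_eq Finset.univ i (fun _ => σ2)]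
        simp [mul_comm]
    _ = σ2 / n := by
        field_simp
  have hR_int_lb : a * (σ2 / n) ≤ ∫ x, R x ∂ν := by
    have := integral_mono_ae (hint_G2.const_mul a) hint_R
      (haep.mono fun x hx => (hR_bound x hx).1)
    rwa [integral_const_mul, hint_G2_eq] at this
  have hR_int_ub : ∫ x, R x ∂ν ≤ b * (σ2 / n) := by
    have := integral_mono_ae hint_R (hint_G2.const_mul b)
      (haep.mono fun x hx => (hR_bound x hx).2)
    rwa [integral_const_mul, hint_G2_eq] at this
  have hdecomp : ∀ᵐ x ∂ν, (n:ℝ) / S x = h + (-(h ^ 2) * G x + h ^ 2 * R x) := by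
    refine haep.mono fun x hx => ?_
    have hSx : S x ≠ 0 := (hS_pos x hx).ne'
    have hmne : m ≠ 0 := hm_pos.ne'
    have hnne : (n:ℝ) ≠ 0 := hnpos.ne'
    have hGx : G x = S x / n - m := rfl
    have hRx : R x = G x ^ 2 / (S x / n) := rfl
    rw [hRx, hGx, hhm]
    field_simp
    ring
  have hgoal : (∫ x, (n : ℝ) / (∑ j, (x j)⁻¹) ∂(Measure.pi fun _ : Fin n => μ))
      = ∫ x, (n:ℝ) / S x ∂ν := rfl
  have hmain : ∫ x, (n:ℝ) / S x ∂ν = h + h ^ 2 * ∫ x, R x ∂ν := by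
    have i1 : Integrable (fun x => -(h ^ 2) * G x) ν := hint_G.const_mul _
    have i2 : Integrable (fun x => h ^ 2 * R x) ν := hint_R.const_mul _
    have i12 : Integrable (fun x => -(h ^ 2) * G x + h ^ 2 * R x) ν := i1.add i2
    rw [integral_congr_ae hdecomp, integral_add (integrable_const h) i12,
      integral_add i1 i2, integral_const_mul, integral_const_mul, hint_G_eq, integral_const]
    simp
  have hRpos : 0 < ∫ x, R x ∂ν :=
    lt_of_lt_of_le (mul_pos ha (div_pos hσpos hnpos)) hR_int_lb
  constructor
  · rw [hgoal, hmain]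
    have hh2 : 0 < h ^ 2 := pow_pos hhpos 2
    nlinarith [mul_pos hh2 hRpos]
  · rw [hgoal, hmain]
    have e : h + h ^ 2 * (∫ x, R x ∂ν) - h = h ^ 2 * ∫ x, R x ∂ν := by ring
    rw [e]
    calc h ^ 2 * ∫ x, R x ∂ν ≤ h ^ 2 * (b * (σ2 / n)) :=
        mul_le_mul_of_nonneg_left hR_int_ub (sq_nonneg h)
    _ = b * h ^ 2 * σ2 / n := by ring
end

section
/- Fix reals 0 < a ≤ b and a Borel probability measure μ on ℝ with μ([a,b]) = 1. Then there exists a constant C > 0 (depending only on μ) such that for every n ≥ 1: |∫ M_n dμⁿ − h − h³·σ₂/n| ≤ C/n². -/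
open MeasureTheory Finset

variable {μ : Measure ℝ} [IsProbabilityMeasure μ]

lemma step_pow (f : ℝ → ℝ) (hfm : Measurable f) (B : ℝ) (hfB : ∀ x, |f x| ≤ B)
    (n k : ℕ) :
    ∫ x, (∑ j, f (x j)) ^ k ∂(Measure.pi fun _ : Fin (n+1) => μ)
    = ∑ j ∈ Finset.range (k+1), ((∫ y, f y ^ j ∂μ) *
        (∫ x, (∑ i, f (x i)) ^ (k - j) ∂(Measure.pi fun _ : Fin n => μ)) * (k.choose j : ℝ)) := by
  have hmp := measurePreserving_piFinSuccAbove (fun _ : Fin (n+1) => μ) 0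
  set e := MeasurableEquiv.piFinSuccAbove (fun _ : Fin (n+1) => ℝ) 0 with he
  have h1 : ∫ x, (∑ j, f (x j)) ^ k ∂(Measure.pi fun _ : Fin (n+1) => μ)
      = ∫ z : ℝ × (Fin n → ℝ), (f z.1 + ∑ i, f (z.2 i)) ^ k
          ∂(μ.prod (Measure.pi fun _ : Fin n => μ)) := by
    rw [← hmp.integral_comp' (f := e)
      (fun z : ℝ × (Fin n → ℝ) => (f z.1 + ∑ i, f (z.2 i)) ^ k)]
    congr 1
    funext x
    have h0 : (e x).1 = x 0 := rfl
    have hs : ∀ i : Fin n, (e x).2 i = x i.succ := fun i => rfl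
    rw [h0]
    simp only [hs]
    rw [Fin.sum_univ_succ]
  rw [h1]
  have hint : ∀ j : ℕ, Integrable
      (fun z : ℝ × (Fin n → ℝ) => f z.1 ^ j * (∑ i, f (z.2 i)) ^ (k - j) * (k.choose j : ℝ))
      (μ.prod (Measure.pi fun _ : Fin n => μ)) := by
    intro j
    have hmeas : Measurable (fun z : ℝ × (Fin n → ℝ) =>
        f z.1 ^ j * (∑ i, f (z.2 i)) ^ (k - j) * (k.choose j : ℝ)) := by
      apply Measurable.mul_const
      exact ((hfm.comp measurable_fst).pow_const j).mul
        ((Finset.measurable_sum Finset.univ (fun i _ =>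
          hfm.comp ((measurable_pi_apply i).comp measurable_snd))).pow_const _)
    have hB0 : 0 ≤ B := le_trans (abs_nonneg _) (hfB 0)
    refine (integrable_const (B ^ j * ((n : ℝ) * B) ^ (k - j) * (k.choose j : ℝ))).mono'
      hmeas.aestronglyMeasurable ?_
    filter_upwards with z
    rw [Real.norm_eq_abs, abs_mul, abs_mul]
    have e1 : |f z.1 ^ j| ≤ B ^ j := by
      rw [abs_pow]; exact pow_le_pow_left₀ (abs_nonneg _) (hfB _) _
    have e2 : |(∑ i : Fin n, f (z.2 i)) ^ (k - j)| ≤ ((n : ℝ) * B) ^ (k - j) := by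
      rw [abs_pow]
      refine pow_le_pow_left₀ (abs_nonneg _) ?_ _
      refine le_trans (Finset.abs_sum_le_sum_abs _ _) ?_
      calc ∑ i : Fin n, |f (z.2 i)| ≤ ∑ _i : Fin n, B := Finset.sum_le_sum fun i _ => hfB _
        _ = n * B := by simp [mul_comm]
    have e3 : |((k.choose j : ℕ) : ℝ)| = ((k.choose j : ℕ) : ℝ) := abs_of_nonneg (by positivity)
    rw [e3]
    exact mul_le_mul_of_nonneg_right
      (mul_le_mul e1 e2 (abs_nonneg _) (by positivity)) (by positivity)
  have h2 : ∀ z : ℝ × (Fin n → ℝ), (f z.1 + ∑ i, f (z.2 i)) ^ k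
      = ∑ j ∈ Finset.range (k+1), f z.1 ^ j * (∑ i, f (z.2 i)) ^ (k - j) * (k.choose j : ℝ) := by
    intro z; rw [add_pow]
  simp only [h2]
  rw [integral_finset_sum _ (fun j _ => hint j)]
  refine Finset.sum_congr rfl fun j _ => ?_
  rw [integral_mul_const]
  congr 1
  exact integral_prod_mul (f := fun y => f y ^ j) (g := fun x : Fin n → ℝ => (∑ i, f (x i)) ^ (k - j)) (μ := μ)

lemma mom1 (f : ℝ → ℝ) (hfm : Measurable f) (B : ℝ) (hfB : ∀ x, |f x| ≤ B)
    (hf0 : ∫ y, f y ∂μ = 0) :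
    ∀ n : ℕ, ∫ x, (∑ j, f (x j)) ^ 1 ∂(Measure.pi fun _ : Fin n => μ) = 0
  | 0 => by simp
  | n+1 => by
    rw [step_pow f hfm B hfB n 1]
    have h1 : (∫ x, (∑ i : Fin n, f (x i)) ∂(Measure.pi fun _ : Fin n => μ)) = 0 := by
      simpa using mom1 f hfm B hfB hf0 n
    simp [Finset.sum_range_succ, hf0, h1]

lemma mom2 (f : ℝ → ℝ) (hfm : Measurable f) (B : ℝ) (hfB : ∀ x, |f x| ≤ B)
    (hf0 : ∫ y, f y ∂μ = 0) :
    ∀ n : ℕ, ∫ x, (∑ j, f (x j)) ^ 2 ∂(Measure.pi fun _ : Fin n => μ)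
      = n * ∫ y, f y ^ 2 ∂μ
  | 0 => by simp
  | n+1 => by
    rw [step_pow f hfm B hfB n 2]
    have h1 : (∫ x, (∑ i : Fin n, f (x i)) ∂(Measure.pi fun _ : Fin n => μ)) = 0 := by
      simpa using mom1 f hfm B hfB hf0 n
    simp [Finset.sum_range_succ, hf0, h1,
      mom2 f hfm B hfB hf0 n]
    ring

lemma mom3 (f : ℝ → ℝ) (hfm : Measurable f) (B : ℝ) (hfB : ∀ x, |f x| ≤ B)
    (hf0 : ∫ y, f y ∂μ = 0) :
    ∀ n : ℕ, ∫ x, (∑ j, f (x j)) ^ 3 ∂(Measure.pi fun _ : Fin n => μ)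
      = n * ∫ y, f y ^ 3 ∂μ
  | 0 => by simp
  | n+1 => by
    rw [step_pow f hfm B hfB n 3]
    have h1 : (∫ x, (∑ i : Fin n, f (x i)) ∂(Measure.pi fun _ : Fin n => μ)) = 0 := by
      simpa using mom1 f hfm B hfB hf0 n
    simp [Finset.sum_range_succ, hf0, h1,
      mom2 f hfm B hfB hf0 n, mom3 f hfm B hfB hf0 n]
    ring

lemma mom4 (f : ℝ → ℝ) (hfm : Measurable f) (B : ℝ) (hfB : ∀ x, |f x| ≤ B)
    (hf0 : ∫ y, f y ∂μ = 0) :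
    ∀ n : ℕ, ∫ x, (∑ j, f (x j)) ^ 4 ∂(Measure.pi fun _ : Fin n => μ)
      = n * ∫ y, f y ^ 4 ∂μ + 3 * n * (n - 1) * (∫ y, f y ^ 2 ∂μ) ^ 2
  | 0 => by simp
  | n+1 => by
    rw [step_pow f hfm B hfB n 4]
    have h1 : (∫ x, (∑ i : Fin n, f (x i)) ∂(Measure.pi fun _ : Fin n => μ)) = 0 := by
      simpa using mom1 f hfm B hfB hf0 n
    simp [Finset.sum_range_succ, hf0, h1,
      mom2 f hfm B hfB hf0 n, mom3 f hfm B hfB hf0 n, mom4 f hfm B hfB hf0 n]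
    norm_num [Nat.choose]
    push_cast
    ring

lemma key_id (m s t nr : ℝ) (hm : m ≠ 0) (hs : s ≠ 0) (hn : nr ≠ 0) (ht : s = t + nr * m) :
    nr / s = m⁻¹ - t/(nr*m^2) + t^2/(nr^2*m^3) - t^3/(nr^3*m^4) + t^4/(nr^3*m^4*s) := by
  subst ht
  field_simp
  ring

set_option maxHeartbeats 1000000 in
/-- Harmonic mean estimate (Theorem 5.1 of the paper, first moment, second part):
`|𝔼(M_n) - h - h³σ₂/n| ≤ C/n²` for a constant `C` depending only on `μ`. -/
theorem stmt_10 (a b : ℝ) (ha : 0 < a) (hab : a ≤ b)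
    (μ : Measure ℝ) [IsProbabilityMeasure μ] (hsupp : μ (Set.Icc a b) = 1)
    (h σ2 : ℝ) (hh : h = (∫ x, x⁻¹ ∂μ)⁻¹)
    (hσ2 : σ2 = ∫ x, (x⁻¹ - h⁻¹) ^ 2 ∂μ) :
    ∃ C : ℝ, 0 < C ∧ ∀ n : ℕ, 1 ≤ n →
      |(∫ x, (n : ℝ) / (∑ j, (x j)⁻¹) ∂(Measure.pi fun _ : Fin n => μ)) - h
          - h ^ 3 * σ2 / n| ≤ C / (n : ℝ) ^ 2 := by
  have hb : 0 < b := lt_of_lt_of_le ha hab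
  set m : ℝ := ∫ x, x⁻¹ ∂μ with hm
  set g : ℝ → ℝ := fun x => max a (min b x) with hgdef
  have hg_mem : ∀ x, g x ∈ Set.Icc a b :=
    fun x => ⟨le_max_left _ _, max_le hab (min_le_left _ _)⟩
  have hg_meas : Measurable g :=
    (continuous_const.max (continuous_const.min continuous_id)).measurable
  have hcompl : μ (Set.Icc a b)ᶜ = 0 := by
    have h2 := measure_compl (measurableSet_Icc : MeasurableSet (Set.Icc a b)) (measure_ne_top μ _)
    rw [hsupp, measure_univ] at h2
    simpa using h2
  have hae : ∀ᵐ x ∂μ, x ∈ Set.Icc a b := ae_iff.mpr hcompl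
  have hgx : ∀ᵐ x ∂μ, g x = x := by
    filter_upwards [hae] with x hx
    rw [hgdef]
    simp only
    rw [min_eq_right hx.2, max_eq_right hx.1]
  set f : ℝ → ℝ := fun x => (g x)⁻¹ - m with hfdef
  have hfm : Measurable f := hg_meas.inv.sub measurable_const
  set B : ℝ := a⁻¹ + |m| with hBdef
  have hginv_pos : ∀ x, 0 < (g x)⁻¹ := fun x => inv_pos.mpr (lt_of_lt_of_le ha (hg_mem x).1)
  have hginv_le : ∀ x, (g x)⁻¹ ≤ a⁻¹ := fun x =>
    inv_anti₀ ha (hg_mem x).1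
  have hginv_ge : ∀ x, b⁻¹ ≤ (g x)⁻¹ := fun x =>
    inv_anti₀ (lt_of_lt_of_le ha (hg_mem x).1) (hg_mem x).2
  have hfB : ∀ x, |f x| ≤ B := by
    intro x
    rw [hfdef]
    refine le_trans (abs_sub _ _) ?_
    rw [hBdef]
    gcongr
    rw [abs_of_pos (hginv_pos x)]
    exact hginv_le x
  have hint_ginv : Integrable (fun x => (g x)⁻¹) μ := by
    refine (integrable_const a⁻¹).mono' hg_meas.inv.aestronglyMeasurable ?_
    filter_upwards with x
    rw [Real.norm_eq_abs, abs_of_pos (hginv_pos x)]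
    exact hginv_le x
  have hm_eq : m = ∫ x, (g x)⁻¹ ∂μ := by
    rw [hm]
    refine integral_congr_ae ?_
    filter_upwards [hgx] with x hx
    rw [hx]
  have hm_lb : b⁻¹ ≤ m := by
    rw [hm_eq]
    calc b⁻¹ = ∫ _, b⁻¹ ∂μ := by simp
      _ ≤ ∫ x, (g x)⁻¹ ∂μ := integral_mono (integrable_const _) hint_ginv fun x => hginv_ge x
  have hm_pos : 0 < m := lt_of_lt_of_le (inv_pos.mpr hb) hm_lb
  have hf0 : ∫ y, f y ∂μ = 0 := by
    rw [hfdef]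
    rw [integral_sub hint_ginv (integrable_const m)]
    simp [← hm_eq]
  set c2 : ℝ := ∫ y, f y ^ 2 ∂μ with hc2
  set c3 : ℝ := ∫ y, f y ^ 3 ∂μ with hc3
  set c4 : ℝ := ∫ y, f y ^ 4 ∂μ with hc4
  have hc2_nonneg : 0 ≤ c2 := integral_nonneg fun x => by positivity
  have hc4_nonneg : 0 ≤ c4 := integral_nonneg fun x => by positivity
  have hσ2c2 : σ2 = c2 := by
    rw [hσ2, hc2]
    refine integral_congr_ae ?_
    filter_upwards [hgx] with x hx
    show (x⁻¹ - h⁻¹) ^ 2 = ((g x)⁻¹ - m) ^ 2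
    rw [hh, inv_inv, hx]
  set X : ℝ := b * (c4 + 3 * c2 ^ 2) + |c3| with hX
  have hX_nonneg : 0 ≤ X := by
    have h1 : 0 ≤ c4 + 3 * c2 ^ 2 := by nlinarith [sq_nonneg c2]
    have h2 : 0 ≤ b * (c4 + 3 * c2 ^ 2) := mul_nonneg hb.le h1
    have := abs_nonneg c3
    linarith
  refine ⟨X / m ^ 4 + 1, by positivity, ?_⟩
  intro n hn
  have hn0 : (0:ℝ) < n := by exact_mod_cast Nat.lt_of_lt_of_le Nat.zero_lt_one hn
  have hnne : (n:ℝ) ≠ 0 := ne_of_gt hn0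
  set π : Measure (Fin n → ℝ) := Measure.pi fun _ : Fin n => μ with hπ
  set T : (Fin n → ℝ) → ℝ := fun x => ∑ j, f (x j) with hT
  set S : (Fin n → ℝ) → ℝ := fun x => ∑ j, (x j)⁻¹ with hS
  have hTm : Measurable T :=
    Finset.measurable_sum Finset.univ fun j _ => hfm.comp (measurable_pi_apply j)
  have hSm : Measurable S :=
    Finset.measurable_sum Finset.univ fun j _ => (measurable_pi_apply j).inv
  have hB0 : 0 ≤ B := le_trans (abs_nonneg _) (hfB 0)
  have hTbd : ∀ x, |T x| ≤ n * B := by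
    intro x
    refine le_trans (Finset.abs_sum_le_sum_abs _ _) ?_
    calc ∑ j : Fin n, |f (x j)| ≤ ∑ _j : Fin n, B := Finset.sum_le_sum fun j _ => hfB _
      _ = n * B := by simp [mul_comm]
  -- a.e. all coordinates in [a,b]
  have hAm : MeasurableSet (Set.pi Set.univ fun _ : Fin n => Set.Icc a b) :=
    MeasurableSet.univ_pi fun _ => measurableSet_Icc
  have hA1 : π (Set.pi Set.univ fun _ : Fin n => Set.Icc a b) = 1 := by
    rw [hπ, Measure.pi_pi]
    simp [hsupp]
  have haeA : ∀ᵐ x ∂π, ∀ j, x j ∈ Set.Icc a b := by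
    have hc : π (Set.pi Set.univ fun _ : Fin n => Set.Icc a b)ᶜ = 0 := by
      rw [measure_compl hAm (measure_ne_top _ _), hA1, measure_univ]
      simp
    rw [ae_iff]
    have : {x : Fin n → ℝ | ¬ ∀ j, x j ∈ Set.Icc a b}
        = (Set.pi Set.univ fun _ : Fin n => Set.Icc a b)ᶜ := by
      ext x
      simp only [Set.mem_compl_iff, Set.mem_setOf_eq, Set.mem_pi, Set.mem_univ,
        forall_true_left, true_implies]
    rw [this]
    exact hc
  have haeST : ∀ᵐ x ∂π, S x = T x + n * m := by
    filter_upwards [haeA] with x hx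
    have : T x = S x - n * m := by
      show (∑ j : Fin n, f (x j)) = (∑ j : Fin n, (x j)⁻¹) - ↑n * m
      have : ∀ j : Fin n, f (x j) = (x j)⁻¹ - m := by
        intro j
        show (g (x j))⁻¹ - m = (x j)⁻¹ - m
        rw [hgdef]
        simp only
        rw [min_eq_right (hx j).2, max_eq_right (hx j).1]
      rw [Finset.sum_congr rfl fun j _ => this j, Finset.sum_sub_distrib]
      simp
    linarith
  have haeSlb : ∀ᵐ x ∂π, (n:ℝ) / b ≤ S x := by
    filter_upwards [haeA] with x hx
    rw [hS]
    calc (n:ℝ)/b = ∑ _j : Fin n, b⁻¹ := by simp [div_eq_mul_inv, mul_comm]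
      _ ≤ ∑ j, (x j)⁻¹ := Finset.sum_le_sum fun j _ =>
          inv_anti₀ (lt_of_lt_of_le ha (hx j).1) (hx j).2
  have haeSpos : ∀ᵐ x ∂π, 0 < S x := by
    filter_upwards [haeSlb] with x hx
    exact lt_of_lt_of_le (by positivity) hx
  -- moments
  have hT1 : ∫ x, T x ∂π = 0 := by
    have := mom1 f hfm B hfB hf0 n
    simp only [pow_one] at this
    exact this
  have hT2 : ∫ x, T x ^ 2 ∂π = n * c2 := by exact mom2 f hfm B hfB hf0 n
  have hT3 : ∫ x, T x ^ 3 ∂π = n * c3 := by exact mom3 f hfm B hfB hf0 n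
  have hT4 : ∫ x, T x ^ 4 ∂π = n * c4 + 3 * n * (n - 1) * c2 ^ 2 := by
    exact mom4 f hfm B hfB hf0 n
  -- integrability
  have hTk_int : ∀ k : ℕ, Integrable (fun x => T x ^ k) π := by
    intro k
    refine (integrable_const ((n * B) ^ k)).mono'
      (hTm.pow_const k).aestronglyMeasurable ?_
    filter_upwards with x
    rw [Real.norm_eq_abs, abs_pow]
    exact pow_le_pow_left₀ (abs_nonneg _) (hTbd x) _
  have hMS_int : Integrable (fun x => (n:ℝ) / S x) π := by
    refine (integrable_const b).mono' (measurable_const.div hSm).aestronglyMeasurable ?_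
    filter_upwards [haeSlb] with x hx
    have hx0 : 0 < S x := lt_of_lt_of_le (by positivity) hx
    rw [Real.norm_eq_abs, abs_of_nonneg (by positivity)]
    rw [div_le_iff₀ hx0]
    calc (n:ℝ) = (n / b) * b := (div_mul_cancel₀ _ (ne_of_gt hb)).symm
      _ ≤ S x * b := by gcongr
      _ = b * S x := mul_comm _ _
  set P : (Fin n → ℝ) → ℝ := fun x =>
    m⁻¹ - T x/((n:ℝ)*m^2) + (T x)^2/((n:ℝ)^2*m^3) - (T x)^3/((n:ℝ)^3*m^4) with hP
  have hT_int : Integrable T π := by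
    have := hTk_int 1
    simp only [pow_one] at this
    exact this
  have hI0 : Integrable (fun _ : Fin n → ℝ => m⁻¹) π := integrable_const _
  have hI1 : Integrable (fun x : Fin n → ℝ => T x / ((n:ℝ)*m^2)) π := hT_int.div_const _
  have hI2 : Integrable (fun x : Fin n → ℝ => T x ^ 2 / ((n:ℝ)^2*m^3)) π :=
    (hTk_int 2).div_const _
  have hI3 : Integrable (fun x : Fin n → ℝ => T x ^ 3 / ((n:ℝ)^3*m^4)) π :=
    (hTk_int 3).div_const _
  have hI01 : Integrable (fun x : Fin n → ℝ => m⁻¹ - T x / ((n:ℝ)*m^2)) π := hI0.sub hI1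
  have hI012 : Integrable
      (fun x : Fin n → ℝ => m⁻¹ - T x / ((n:ℝ)*m^2) + T x ^ 2 / ((n:ℝ)^2*m^3)) π := hI01.add hI2
  have hP_int : Integrable P π := hI012.sub hI3
  have hP_eval : ∫ x, P x ∂π = m⁻¹ + c2/((n:ℝ)*m^3) - c3/((n:ℝ)^2*m^4) := by
    simp only [hP]
    rw [integral_sub hI012 hI3, integral_add hI01 hI2, integral_sub hI0 hI1]
    rw [integral_div, integral_div, integral_div, hT1, hT2, hT3, integral_const]
    simp only [probReal_univ, measure_univ, ENNReal.toReal_one, one_smul]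
    field_simp
    ring
  set R : (Fin n → ℝ) → ℝ := fun x => (n:ℝ) / S x - P x with hR
  have hR_int : Integrable R π := hMS_int.sub hP_int
  have hR_bd : ∀ᵐ x ∂π, |R x| ≤ b * T x ^ 4 / ((n:ℝ)^4 * m^4) := by
    filter_upwards [haeST, haeSlb] with x hST hSlb
    have hSpos : 0 < S x := lt_of_lt_of_le (by positivity) hSlb
    have hkey := key_id m (S x) (T x) (n:ℝ) (ne_of_gt hm_pos) (ne_of_gt hSpos) hnne hST
    have hRx : R x = (T x)^4 / ((n:ℝ)^3 * m^4 * S x) := by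
      simp only [hR, hP]
      linarith [hkey]
    rw [hRx, abs_of_nonneg (by positivity)]
    have h2 : (n:ℝ)^4 * m^4 = b * ((n:ℝ)^3 * m^4 * ((n:ℝ)/b)) := by
      field_simp
    have h3 : T x ^ 4 / ((n:ℝ)^3 * m^4 * S x) ≤ T x ^ 4 / ((n:ℝ)^3 * m^4 * ((n:ℝ)/b)) := by
      gcongr
      all_goals first
        | positivity
        | exact hSlb
    refine le_trans h3 (le_of_eq ?_)
    rw [h2]
    have hb' : b ≠ 0 := ne_of_gt hb
    field_simp
    try ring
  have hbd_int : Integrable (fun x => b * T x ^ 4 / ((n:ℝ)^4 * m^4)) π :=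
    ((hTk_int 4).const_mul b).div_const _
  have hIR : |∫ x, R x ∂π| ≤ b * ((n:ℝ) * c4 + 3 * n * (n - 1) * c2 ^ 2) / ((n:ℝ)^4 * m^4) := by
    have habs0 : |∫ x, R x ∂π| ≤ ∫ x, |R x| ∂π := by
      simpa [Real.norm_eq_abs] using norm_integral_le_integral_norm (μ := π) R
    refine le_trans habs0 ?_
    have h1 : ∫ x, |R x| ∂π ≤ ∫ x, b * T x ^ 4 / ((n:ℝ)^4 * m^4) ∂π :=
      integral_mono_ae hR_int.abs hbd_int hR_bd
    refine le_trans h1 (le_of_eq ?_)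
    rw [integral_div, integral_const_mul, hT4]
  have hIM : ∫ x, (n:ℝ) / S x ∂π = (∫ x, P x ∂π) + ∫ x, R x ∂π := by
    rw [← integral_add hP_int hR_int]
    refine integral_congr_ae ?_
    filter_upwards with x
    simp only [hR]
    ring
  have habs : |(∫ x, (n:ℝ) / S x ∂π) - h - h ^ 3 * σ2 / n| ≤ X / m ^ 4 / (n:ℝ) ^ 2 := by
    rw [hIM, hP_eval, hh, hσ2c2]
    have hm' : m ≠ 0 := ne_of_gt hm_pos
    have heq : m⁻¹ + c2 / (↑n * m ^ 3) - c3 / (↑n ^ 2 * m ^ 4) + (∫ x, R x ∂π) - m⁻¹ -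
        m⁻¹ ^ 3 * c2 / ↑n = (∫ x, R x ∂π) - c3 / (↑n ^ 2 * m ^ 4) := by
      field_simp
      ring
    rw [heq]
    refine le_trans (abs_sub _ _) ?_
    have h6 : |c3 / (↑n ^ 2 * m ^ 4)| = |c3| / ((n:ℝ) ^ 2 * m ^ 4) := by
      rw [abs_div, abs_of_pos (by positivity : (0:ℝ) < (n:ℝ) ^ 2 * m ^ 4)]
    rw [h6]
    have hn1 : (1:ℝ) ≤ (n:ℝ) := by exact_mod_cast hn
    have h5 : b * ((n:ℝ) * c4 + 3 * ↑n * (↑n - 1) * c2 ^ 2) / ((n:ℝ)^4 * m^4)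
        ≤ b * (c4 + 3 * c2 ^ 2) / ((n:ℝ)^2 * m^4) := by
      rw [div_le_div_iff₀ (by positivity) (by positivity)]
      have e1 : (0:ℝ) ≤ ((n:ℝ)^2 - (n:ℝ)) * c4 := by
        refine mul_nonneg ?_ hc4_nonneg
        nlinarith
      have e2 : (0:ℝ) ≤ 3 * (n:ℝ) * c2 ^ 2 := by positivity
      nlinarith [mul_nonneg (mul_nonneg hb.le (mul_nonneg (sq_nonneg ((n:ℝ))) (pow_nonneg hm_pos.le 4))) e1,
        mul_nonneg (mul_nonneg hb.le (mul_nonneg (sq_nonneg ((n:ℝ))) (pow_nonneg hm_pos.le 4))) e2]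
    have h7 : X / m ^ 4 / (n:ℝ) ^ 2
        = b * (c4 + 3 * c2 ^ 2) / ((n:ℝ)^2 * m^4) + |c3| / ((n:ℝ) ^ 2 * m ^ 4) := by
      rw [hX, div_div, mul_comm (m^4) ((n:ℝ)^2), add_div]
    rw [h7]
    exact add_le_add (le_trans hIR h5) (le_refl _)
  refine le_trans ?_ ((div_le_div_iff_of_pos_right (by positivity : (0:ℝ) < (n:ℝ)^2)).mpr
    (by linarith : X / m ^ 4 ≤ X / m ^ 4 + 1))
  exact habs
end

section
/- Fix reals 0 < a ≤ b and a Borel probability measure μ on ℝ with μ([a,b]) = 1. Then for every n ≥ 1: a²·h²·σ₂/n ≤ ∫ (M_n − h)² dμⁿ ≤ b²·h²·σ₂/n. -/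
open MeasureTheory

/-- Fubini for a product of functions of coordinates, for a general product measure. -/
lemma pi_integral_prod (μ : Measure ℝ) [IsProbabilityMeasure μ] :
    ∀ (n : ℕ) (f : Fin n → ℝ → ℝ),
      (∫ x : Fin n → ℝ, ∏ i, f i (x i) ∂(Measure.pi fun _ => μ)) = ∏ i, ∫ x, f i x ∂μ := by
  intro n
  induction n with
  | zero =>
      intro f
      simp [integral_const, Measure.pi_univ]
  | succ n ih =>
      intro f
      calc (∫ x : Fin (n+1) → ℝ, ∏ i, f i (x i) ∂(Measure.pi fun _ => μ))
          = ∫ p : ℝ × (Fin n → ℝ), f 0 p.1 * ∏ i : Fin n, f i.succ (p.2 i)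
              ∂(μ.prod (Measure.pi fun _ => μ)) := by
            rw [← ((measurePreserving_piFinSuccAbove (fun _ : Fin (n+1) => μ)
              0).symm).integral_comp']
            simp only [MeasurableEquiv.piFinSuccAbove_symm_apply, Fin.insertNthEquiv,
              Fin.prod_univ_succ, Fin.insertNth_zero, Equiv.coe_fn_mk, Fin.cons_succ,
              Fin.zero_succAbove, Fin.cons_zero, cast_eq]
        _ = (∫ x, f 0 x ∂μ) * ∏ i : Fin n, ∫ x, f i.succ x ∂μ := by
            rw [show (∫ p : ℝ × (Fin n → ℝ), f 0 p.1 * ∏ i, f i.succ (p.2 i)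
                  ∂μ.prod (Measure.pi fun _ => μ))
                = (∫ x, f 0 x ∂μ) * ∫ y : Fin n → ℝ, ∏ i, f i.succ (y i)
                  ∂(Measure.pi fun _ => μ) from
              integral_prod_mul (fun y => f 0 y) (fun (y : Fin n → ℝ) => ∏ i, f i.succ (y i)), ih]
        _ = ∏ i, ∫ x, f i x ∂μ := by rw [Fin.prod_univ_succ]

/-- Harmonic mean estimate (Theorem 5.1 of the paper, second moment):
`a²h²σ₂/n ≤ 𝔼((M_n - h)²) ≤ b²h²σ₂/n`. -/
theorem stmt_11 (a b : ℝ) (ha : 0 < a) (hab : a ≤ b)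
    (μ : Measure ℝ) [IsProbabilityMeasure μ] (hsupp : μ (Set.Icc a b) = 1)
    (h σ2 : ℝ) (hh : h = (∫ x, x⁻¹ ∂μ)⁻¹)
    (hσ2 : σ2 = ∫ x, (x⁻¹ - h⁻¹) ^ 2 ∂μ)
    (n : ℕ) (hn : 1 ≤ n) :
    a ^ 2 * h ^ 2 * σ2 / n
        ≤ ∫ x, ((n : ℝ) / (∑ j, (x j)⁻¹) - h) ^ 2 ∂(Measure.pi fun _ : Fin n => μ) ∧
    (∫ x, ((n : ℝ) / (∑ j, (x j)⁻¹) - h) ^ 2 ∂(Measure.pi fun _ : Fin n => μ))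
        ≤ b ^ 2 * h ^ 2 * σ2 / n := by
  have hb : 0 < b := ha.trans_le hab
  have hn0 : (0:ℝ) < n := by exact_mod_cast hn
  set m : ℝ := ∫ x, x⁻¹ ∂μ with hm
  -- almost everywhere membership in [a,b]
  have hcompl : μ (Set.Icc a b)ᶜ = 0 := by
    have := measure_compl (measurableSet_Icc : MeasurableSet (Set.Icc a b)) (measure_ne_top μ _)
    rw [hsupp, measure_univ] at this
    simpa using this
  have hae : ∀ᵐ x ∂μ, x ∈ Set.Icc a b := by
    rw [ae_iff]
    exact hcompl
  have hinvb : ∀ x ∈ Set.Icc a b, b⁻¹ ≤ x⁻¹ ∧ x⁻¹ ≤ a⁻¹ := by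
    intro x hx
    obtain ⟨hx1, hx2⟩ := hx
    constructor
    · exact inv_anti₀ (ha.trans_le hx1) hx2
    · exact inv_anti₀ ha hx1
  -- integrability of x⁻¹
  have hint_inv : Integrable (fun x : ℝ => x⁻¹) μ := by
    refine Integrable.mono' (integrable_const a⁻¹) measurable_inv.aestronglyMeasurable ?_
    filter_upwards [hae] with x hx
    rcases hinvb x hx with ⟨h1, h2⟩
    have : (0:ℝ) < b⁻¹ := by positivity
    rw [Real.norm_eq_abs, abs_of_pos (lt_of_lt_of_le this h1)]
    exact h2
  -- bounds on m
  have hmlb : b⁻¹ ≤ m := by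
    rw [hm]
    have : b⁻¹ = ∫ _x, b⁻¹ ∂μ := by simp
    rw [this]
    refine integral_mono_ae (integrable_const _) hint_inv ?_
    filter_upwards [hae] with x hx using (hinvb x hx).1
  have hmub : m ≤ a⁻¹ := by
    rw [hm]
    have : a⁻¹ = ∫ _x, a⁻¹ ∂μ := by simp
    rw [this]
    refine integral_mono_ae hint_inv (integrable_const _) ?_
    filter_upwards [hae] with x hx using (hinvb x hx).2
  have hmpos : 0 < m := lt_of_lt_of_le (by positivity) hmlb
  have hh' : h = m⁻¹ := hh
  have hhinv : h⁻¹ = m := by rw [hh', inv_inv]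
  have hha : a ≤ h := by
    rw [hh']
    calc a = (a⁻¹)⁻¹ := by rw [inv_inv]
    _ ≤ m⁻¹ := inv_anti₀ hmpos hmub
  have hhb : h ≤ b := by
    rw [hh']
    calc m⁻¹ ≤ (b⁻¹)⁻¹ := inv_anti₀ (by positivity) hmlb
    _ = b := by rw [inv_inv]
  -- the centered function g
  set g : ℝ → ℝ := fun x => x⁻¹ - m with hgdef
  have hg_meas : Measurable g := measurable_inv.sub measurable_const
  have hg_int : Integrable g μ := hint_inv.sub (integrable_const m)
  have hg0 : (∫ x, g x ∂μ) = 0 := by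
    rw [hgdef]
    rw [integral_sub hint_inv (integrable_const m)]
    simp [hm]
  have hgb : ∀ x ∈ Set.Icc a b, |g x| ≤ a⁻¹ := by
    intro x hx
    rcases hinvb x hx with ⟨h1, h2⟩
    have hb0 : (0:ℝ) ≤ b⁻¹ := by positivity
    rw [hgdef]
    rw [abs_le]
    constructor <;> simp only [] <;> nlinarith
  have hσ2g : (∫ x, g x * g x ∂μ) = σ2 := by
    rw [hσ2, hhinv]
    congr 1
    ext x
    rw [hgdef, pow_two]
  -- the product measure
  set ν : Measure (Fin n → ℝ) := Measure.pi fun _ => μ with hν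
  have haepi : ∀ᵐ x ∂ν, ∀ j, x j ∈ Set.Icc a b := by
    rw [hν]
    exact Filter.eventually_all.2 fun i => (MeasureTheory.Measure.tendsto_eval_ae_ae).eventually hae
  -- cross moments
  have hcross : ∀ j k : Fin n,
      (∫ x : Fin n → ℝ, g (x j) * g (x k) ∂ν) = if j = k then σ2 else 0 := by
    intro j k
    have hpp := pi_integral_prod μ n
      (fun i y => (if i = j then g y else 1) * (if i = k then g y else 1))
    have hpt : ∀ x : Fin n → ℝ,
        (∏ i, (if i = j then g (x i) else 1) * (if i = k then g (x i) else 1))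
          = g (x j) * g (x k) := by
      intro x
      rw [Finset.prod_mul_distrib,
        Finset.prod_ite_eq' Finset.univ j (fun i => g (x i)),
        Finset.prod_ite_eq' Finset.univ k (fun i => g (x i))]
      simp
    simp only [hpt] at hpp
    rw [hν, hpp]
    rcases eq_or_ne j k with hjk | hjk
    · subst hjk
      simp only [if_pos rfl]
      have hfac : ∀ i : Fin n,
          (∫ x, (if i = j then g x else 1) * (if i = j then g x else 1) ∂μ)
            = if i = j then σ2 else 1 := by
        intro i
        by_cases hi : i = j
        · simp [hi, hσ2g]
        · simp [hi]
      rw [Finset.prod_congr rfl (fun i _ => hfac i),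
        Finset.prod_ite_eq' Finset.univ j (fun _ => σ2)]
      simp
    · rw [if_neg hjk]
      refine Finset.prod_eq_zero (Finset.mem_univ j) ?_
      simp [hjk, hg0]
  -- integrability of pairwise products
  have hprod_int : ∀ j k : Fin n,
      Integrable (fun x : Fin n → ℝ => g (x j) * g (x k)) ν := by
    intro j k
    refine Integrable.mono' (integrable_const (a⁻¹ * a⁻¹))
      (((hg_meas.comp (measurable_pi_apply j)).mul
        (hg_meas.comp (measurable_pi_apply k))).aestronglyMeasurable) ?_
    filter_upwards [haepi] with x hx
    rw [Real.norm_eq_abs, abs_mul]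
    have h1 := hgb (x j) (hx j)
    have h2 := hgb (x k) (hx k)
    exact mul_le_mul h1 h2 (abs_nonneg _) (by positivity)
  -- the second moment of the sum
  have hsum_eq : (∫ x : Fin n → ℝ, (∑ j, g (x j)) ^ 2 ∂ν) = n * σ2 := by
    have expand : ∀ x : Fin n → ℝ,
        (∑ j, g (x j)) ^ 2 = ∑ j, ∑ k, g (x j) * g (x k) := by
      intro x
      rw [pow_two, Finset.sum_mul_sum]
    simp only [expand]
    rw [integral_finset_sum _ (fun j _ => integrable_finset_sum _ (fun k _ => hprod_int j k))]
    have hone : ∀ j : Fin n, (∫ x, ∑ k, g (x j) * g (x k) ∂ν) = σ2 := by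
      intro j
      rw [integral_finset_sum _ (fun k _ => hprod_int j k)]
      rw [Finset.sum_congr rfl (fun k _ => hcross j k)]
      simp
    rw [Finset.sum_congr rfl (fun j _ => hone j)]
    simp [mul_comm]
  -- pointwise bounds
  have hTbounds : ∀ x : Fin n → ℝ, (∀ j, x j ∈ Set.Icc a b) →
      0 < (∑ j, (x j)⁻¹) ∧ a ≤ (n : ℝ) / (∑ j, (x j)⁻¹) ∧ (n : ℝ) / (∑ j, (x j)⁻¹) ≤ b := by
    intro x hx
    set S := ∑ j, (x j)⁻¹ with hS
    have hSlb : (n : ℝ) * b⁻¹ ≤ S := by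
      calc (n:ℝ) * b⁻¹ = ∑ _j : Fin n, b⁻¹ := by
            simp [Finset.sum_const, nsmul_eq_mul]
      _ ≤ S := Finset.sum_le_sum fun j _ => (hinvb (x j) (hx j)).1
    have hSub : S ≤ (n : ℝ) * a⁻¹ := by
      calc S ≤ ∑ _j : Fin n, a⁻¹ := Finset.sum_le_sum fun j _ => (hinvb (x j) (hx j)).2
      _ = (n:ℝ) * a⁻¹ := by simp [Finset.sum_const, nsmul_eq_mul]
    have hSpos : 0 < S := lt_of_lt_of_le (by positivity) hSlb
    refine ⟨hSpos, ?_, ?_⟩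
    · rw [le_div_iff₀ hSpos]
      calc a * S ≤ a * ((n:ℝ) * a⁻¹) := by
            exact mul_le_mul_of_nonneg_left hSub ha.le
      _ = n := by field_simp
    · rw [div_le_iff₀ hSpos]
      calc (n:ℝ) = b * ((n:ℝ) * b⁻¹) := by field_simp
      _ ≤ b * S := mul_le_mul_of_nonneg_left hSlb hb.le
  have key : ∀ x : Fin n → ℝ, (∀ j, x j ∈ Set.Icc a b) →
      (a ^ 2 * h ^ 2 / (n:ℝ)^2) * (∑ j, g (x j)) ^ 2
          ≤ ((n : ℝ) / (∑ j, (x j)⁻¹) - h) ^ 2 ∧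
      ((n : ℝ) / (∑ j, (x j)⁻¹) - h) ^ 2
          ≤ (b ^ 2 * h ^ 2 / (n:ℝ)^2) * (∑ j, g (x j)) ^ 2 := by
    intro x hx
    obtain ⟨hSpos, hTa, hTb⟩ := hTbounds x hx
    set S := ∑ j, (x j)⁻¹ with hS
    have hsg : ∑ j, g (x j) = S - n * m := by
      simp only [hgdef]
      rw [Finset.sum_sub_distrib]
      simp [Finset.sum_const, nsmul_eq_mul, hS]
    have hid : ((n:ℝ) / S - h) ^ 2 = h^2 * ((n:ℝ)/S)^2 * ((S - n*m)/n)^2 := by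
      rw [hh']
      field_simp
      ring
    have hT2 : a^2 ≤ ((n:ℝ)/S)^2 := pow_le_pow_left₀ ha.le hTa 2
    have hT2' : ((n:ℝ)/S)^2 ≤ b^2 := pow_le_pow_left₀ (ha.le.trans hTa) hTb 2
    constructor
    · rw [hid, hsg]
      calc (a^2*h^2/(n:ℝ)^2) * (S - (n:ℝ)*m)^2
          = a^2 * (h^2 * (S - (n:ℝ)*m)^2 / (n:ℝ)^2) := by ring
        _ ≤ ((n:ℝ)/S)^2 * (h^2 * (S - (n:ℝ)*m)^2 / (n:ℝ)^2) :=
            mul_le_mul_of_nonneg_right hT2 (by positivity)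
        _ = h^2 * ((n:ℝ)/S)^2 * ((S - (n:ℝ)*m)/(n:ℝ))^2 := by
            rw [div_pow]; ring
    · rw [hid, hsg]
      calc h^2 * ((n:ℝ)/S)^2 * ((S - (n:ℝ)*m)/(n:ℝ))^2
          = ((n:ℝ)/S)^2 * (h^2 * (S - (n:ℝ)*m)^2 / (n:ℝ)^2) := by
            rw [div_pow]; ring
        _ ≤ b^2 * (h^2 * (S - (n:ℝ)*m)^2 / (n:ℝ)^2) :=
            mul_le_mul_of_nonneg_right hT2' (by positivity)
        _ = (b^2*h^2/(n:ℝ)^2) * (S - (n:ℝ)*m)^2 := by ring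
  -- integrability on the product space
  have hmeasF : Measurable fun x : Fin n → ℝ => ((n : ℝ) / (∑ j, (x j)⁻¹) - h) ^ 2 := by
    apply Measurable.pow_const
    exact (measurable_const.div
      (Finset.measurable_sum _ fun j _ => (measurable_pi_apply j).inv)).sub measurable_const
  have hFint : Integrable (fun x : Fin n → ℝ => ((n : ℝ) / (∑ j, (x j)⁻¹) - h) ^ 2) ν := by
    refine Integrable.mono' (integrable_const ((b - a)^2)) hmeasF.aestronglyMeasurable ?_
    filter_upwards [haepi] with x hx
    obtain ⟨hSpos, hTa, hTb⟩ := hTbounds x hx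
    rw [Real.norm_eq_abs, abs_of_nonneg (sq_nonneg _)]
    apply sq_le_sq' <;> linarith
  have hmeasG : Measurable fun x : Fin n → ℝ => (∑ j, g (x j)) ^ 2 := by
    apply Measurable.pow_const
    exact Finset.measurable_sum _ fun j _ => hg_meas.comp (measurable_pi_apply j)
  have hGint : Integrable (fun x : Fin n → ℝ => (∑ j, g (x j)) ^ 2) ν := by
    refine Integrable.mono' (integrable_const (((n:ℝ) * a⁻¹)^2)) hmeasG.aestronglyMeasurable ?_
    filter_upwards [haepi] with x hx
    rw [Real.norm_eq_abs, abs_of_nonneg (sq_nonneg _)]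
    have habs : |∑ j, g (x j)| ≤ (n:ℝ) * a⁻¹ := by
      calc |∑ j, g (x j)| ≤ ∑ j, |g (x j)| := Finset.abs_sum_le_sum_abs _ _
        _ ≤ ∑ _j : Fin n, a⁻¹ := Finset.sum_le_sum fun j _ => hgb (x j) (hx j)
        _ = (n:ℝ) * a⁻¹ := by simp [Finset.sum_const, nsmul_eq_mul]
    calc (∑ j, g (x j))^2 = |∑ j, g (x j)|^2 := (sq_abs _).symm
      _ ≤ ((n:ℝ) * a⁻¹)^2 := pow_le_pow_left₀ (abs_nonneg _) habs 2
  constructor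
  · have hle := integral_mono_ae (hGint.const_mul (a ^ 2 * h ^ 2 / (n:ℝ)^2)) hFint
      (haepi.mono fun x hx => (key x hx).1)
    rw [integral_const_mul, hsum_eq] at hle
    calc a ^ 2 * h ^ 2 * σ2 / n = (a ^ 2 * h ^ 2 / (n:ℝ)^2) * ((n:ℝ) * σ2) := by
          field_simp
      _ ≤ _ := hle
  · have hle := integral_mono_ae hFint (hGint.const_mul (b ^ 2 * h ^ 2 / (n:ℝ)^2))
      (haepi.mono fun x hx => (key x hx).2)
    rw [integral_const_mul, hsum_eq] at hle
    calc (∫ x, ((n : ℝ) / (∑ j, (x j)⁻¹) - h) ^ 2 ∂(Measure.pi fun _ : Fin n => μ)) ≤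
        (b ^ 2 * h ^ 2 / (n:ℝ)^2) * ((n:ℝ) * σ2) := hle
      _ = b ^ 2 * h ^ 2 * σ2 / n := by field_simp
end

section
/- Fix reals 0 < a ≤ b and a Borel probability measure μ on ℝ with μ([a,b]) = 1. Then for all integers m ≥ 2 and n ≥ 1: ∫ (M_n − h)^{2m} dμⁿ ≤ (2m)! · h^{2m} · b^{2m} / (2^m · m! · a^{2m} · n^m). -/
open MeasureTheory Finset

set_option maxHeartbeats 1000000


/-- Tangent line inequality for even powers. -/
lemma tangent_aux (r : ℕ) (u x : ℝ) :
    (2*r+2 : ℝ) * u^(2*r+1) * (x - u) ≤ x^(2*r+2) - u^(2*r+2) := by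
  have base : ∀ u x : ℝ, 0 ≤ u → (2*r+2 : ℝ) * u^(2*r+1) * (x - u) ≤ x^(2*r+2) - u^(2*r+2) := by
    intro u x hu
    have h4 : u^(2*r+1) * u = u^(2*r+2) := by ring
    rcases le_or_gt x 0 with hx | hx
    · have h1 : u^(2*r+1) * x ≤ 0 :=
        mul_nonpos_of_nonneg_of_nonpos (pow_nonneg hu _) hx
      have h2 : (0:ℝ) ≤ x^(2*r+2) := Even.pow_nonneg ⟨r+1, by ring⟩ x
      have h3 : (0:ℝ) ≤ u^(2*r+2) := pow_nonneg hu _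
      have h5 : (2*r+2 : ℝ) * (u^(2*r+1) * x) ≤ 0 :=
        mul_nonpos_of_nonneg_of_nonpos (by positivity) h1
      have h7 : u^(2*r+2) ≤ (2*r+2 : ℝ) * u^(2*r+2) :=
        le_mul_of_one_le_left h3 (by push_cast; linarith [Nat.cast_nonneg (α := ℝ) r])
      calc (2*r+2 : ℝ) * u^(2*r+1) * (x - u)
          = (2*r+2 : ℝ) * (u^(2*r+1) * x) - (2*r+2 : ℝ) * u^(2*r+2) := by rw [← h4]; ring
        _ ≤ 0 - u^(2*r+2) := by linarith
        _ ≤ x^(2*r+2) - u^(2*r+2) := by linarith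
    · have hx' : (0:ℝ) ≤ x := hx.le
      have hQ0 : (0:ℝ) < (2*r+2 : ℝ) := by positivity
      have hw : (2*r+1 : ℝ)/(2*r+2 : ℝ) + 1/(2*r+2 : ℝ) = 1 := by field_simp; ring
      have hgm := Real.geom_mean_le_arith_mean2_weighted
        (by positivity : (0:ℝ) ≤ (2*r+1 : ℝ)/(2*r+2:ℝ)) (by positivity : (0:ℝ) ≤ 1/(2*r+2:ℝ))
        (pow_nonneg hu (2*r+2)) (pow_nonneg hx' (2*r+2)) hw
      have e1 : (u^(2*r+2) : ℝ) ^ ((2*r+1 : ℝ)/(2*r+2:ℝ)) = u ^ (2*r+1) := by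
        rw [← Real.rpow_natCast u (2*r+2), ← Real.rpow_mul hu]
        rw [show ((2*r+2 : ℕ) : ℝ) * ((2*r+1 : ℝ)/(2*r+2:ℝ)) = ((2*r+1 : ℕ) : ℝ) by
          push_cast; field_simp]
        exact Real.rpow_natCast u (2*r+1)
      have e2 : (x^(2*r+2) : ℝ) ^ ((1 : ℝ)/(2*r+2:ℝ)) = x := by
        rw [← Real.rpow_natCast x (2*r+2), ← Real.rpow_mul hx']
        rw [show ((2*r+2 : ℕ) : ℝ) * ((1 : ℝ)/(2*r+2:ℝ)) = 1 by push_cast; field_simp]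
        exact Real.rpow_one x
      rw [e1, e2] at hgm
      have h5 : (2*r+2:ℝ) * (u^(2*r+1) * x) ≤ (2*r+1 : ℝ) * u^(2*r+2) + x^(2*r+2) := by
        calc (2*r+2:ℝ) * (u^(2*r+1) * x)
            ≤ (2*r+2:ℝ) * ((2*r+1 : ℝ)/(2*r+2:ℝ) * u^(2*r+2) + 1/(2*r+2:ℝ) * x^(2*r+2)) :=
              mul_le_mul_of_nonneg_left hgm hQ0.le
          _ = (2*r+1 : ℝ) * u^(2*r+2) + x^(2*r+2) := by field_simp
      calc (2*r+2 : ℝ) * u^(2*r+1) * (x - u)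
          = (2*r+2 : ℝ) * (u^(2*r+1) * x) - (2*r+2 : ℝ) * u^(2*r+2) := by rw [← h4]; ring
        _ ≤ ((2*r+1 : ℝ) * u^(2*r+2) + x^(2*r+2)) - (2*r+2 : ℝ) * u^(2*r+2) := by linarith
        _ = x^(2*r+2) - u^(2*r+2) := by ring
  rcases le_or_gt 0 u with hu | hu
  · exact base u x hu
  · have h := base (-u) (-x) (by linarith)
    have e1 : (-u : ℝ)^(2*r+1) = -u^(2*r+1) := Odd.neg_pow ⟨r, by ring⟩ u
    have e2 : (-x : ℝ)^(2*r+2) = x^(2*r+2) := Even.neg_pow ⟨r+1, by ring⟩ x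
    have e3 : (-u : ℝ)^(2*r+2) = u^(2*r+2) := Even.neg_pow ⟨r+1, by ring⟩ u
    rw [e1, e2, e3] at h
    calc (2*r+2 : ℝ) * u^(2*r+1) * (x - u)
        = (2*r+2 : ℝ) * -u^(2*r+1) * (-x - -u) := by ring
      _ ≤ x^(2*r+2) - u^(2*r+2) := h

/-- Pairing inequality: `2 ∑_{j=0}^q A^j B^(q-j) ≤ (q+1)(A^q + B^q)` for nonneg `A B`. -/
lemma pairing_sum (q : ℕ) (A B : ℝ) (hA : 0 ≤ A) (hB : 0 ≤ B) :
    2 * (∑ j ∈ range (q+1), A^j * B^(q-j)) ≤ (q+1 : ℝ) * (A^q + B^q) := by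
  have hrefl : ∑ j ∈ range (q+1), A^j * B^(q-j)
      = ∑ j ∈ range (q+1), A^(q-j) * B^(q-(q-j)) := by
    exact (Finset.sum_range_reflect (fun j => A^j * B^(q-j)) (q+1)).symm.trans (by
      apply Finset.sum_congr rfl
      intro j hj
      have hj' : j ≤ q := Nat.lt_succ_iff.mp (Finset.mem_range.mp hj)
      congr 2 <;> omega)
  have key : ∀ j ∈ range (q+1), A^j * B^(q-j) + A^(q-j) * B^(q-(q-j)) ≤ A^q + B^q := by
    intro j hj
    have hj' : j ≤ q := Nat.lt_succ_iff.mp (Finset.mem_range.mp hj)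
    have h1 : q - (q - j) = j := by omega
    rw [h1]
    have hAq : A^j * A^(q-j) = A^q := by rw [← pow_add]; congr 1; omega
    have hBq : B^j * B^(q-j) = B^q := by rw [← pow_add]; congr 1; omega
    rcases le_total A B with hAB | hAB
    · have u1 : A^j ≤ B^j := pow_le_pow_left₀ hA hAB j
      have u2 : A^(q-j) ≤ B^(q-j) := pow_le_pow_left₀ hA hAB (q-j)
      nlinarith [u1, u2]
    · have u1 : B^j ≤ A^j := pow_le_pow_left₀ hB hAB j
      have u2 : B^(q-j) ≤ A^(q-j) := pow_le_pow_left₀ hB hAB (q-j)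
      nlinarith [u1, u2]
  calc 2 * (∑ j ∈ range (q+1), A^j * B^(q-j))
      = ∑ j ∈ range (q+1), (A^j * B^(q-j) + A^(q-j) * B^(q-(q-j))) := by
        rw [Finset.sum_add_distrib, ← hrefl]; ring
    _ ≤ ∑ _j ∈ range (q+1), (A^q + B^q) := Finset.sum_le_sum key
    _ = (q+1 : ℝ) * (A^q + B^q) := by
        rw [Finset.sum_const, Finset.card_range]; push_cast; ring


/-- Integrability of a globally bounded measurable function w.r.t. a finite measure. -/
lemma integrable_of_bound {α : Type*} [MeasurableSpace α] {P : Measure α}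
    [IsFiniteMeasure P] {f : α → ℝ} (hf : AEStronglyMeasurable f P) (C : ℝ)
    (h : ∀ x, |f x| ≤ C) : Integrable f P :=
  ⟨hf, HasFiniteIntegral.of_bounded (C := C) (ae_of_all _ (by
    simpa [Real.norm_eq_abs] using h))⟩

/-- One-dimensional core estimate. -/
lemma core_1d (ν : Measure ℝ) [IsProbabilityMeasure ν] (φ : ℝ → ℝ) (hm : Measurable φ)
    {K : ℝ} (hb : ∀ s, |φ s| ≤ K) (h0 : ∫ s, φ s ∂ν = 0) (p : ℕ) (u : ℝ) :
    ∫ y, φ y * (φ y + u)^(2*p+1) ∂ν ≤ (2*p+1 : ℝ) * K^2 * ∫ y, (φ y + u)^(2*p) ∂ν := by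
  have hK : 0 ≤ K := le_trans (abs_nonneg _) (hb 0)
  set R : ℝ := K + |u| with hR
  have hbR : ∀ y, |φ y + u| ≤ R := fun y =>
    (abs_add_le _ _).trans (add_le_add_left (hb y) _)
  -- integrability of everything in sight
  have m1 : Measurable fun y => φ y + u := hm.add_const u
  have int2 : Integrable (fun y => (φ y + u)^(2*p)) ν := by
    refine integrable_of_bound (m1.pow_const _).aestronglyMeasurable (R^(2*p)) fun y => ?_
    rw [abs_pow]; exact pow_le_pow_left₀ (abs_nonneg _) (hbR y) _
  have int1 : Integrable (fun y => φ y * (φ y + u)^(2*p+1)) ν := by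
    refine integrable_of_bound (hm.mul (m1.pow_const _)).aestronglyMeasurable
      (K * R^(2*p+1)) fun y => ?_
    rw [abs_mul, abs_pow]
    exact mul_le_mul (hb y) (pow_le_pow_left₀ (abs_nonneg _) (hbR y) _)
      (by positivity) hK
  have int3 : Integrable φ ν := integrable_of_bound hm.aestronglyMeasurable K hb
  set J : ℝ := ∫ y, (φ y + u)^(2*p) ∂ν with hJ
  -- Jensen step : u^(2p) ≤ J
  have hJu : u^(2*p) ≤ J := by
    rcases p with _ | r
    · simp [hJ]
    · have hpt : ∀ y, u^(2*(r+1)) + ((2*r+2 : ℝ) * u^(2*r+1)) * φ y ≤ (φ y + u)^(2*(r+1)) := by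
        intro y
        have := tangent_aux r u (φ y + u)
        have e : (φ y + u) - u = φ y := by ring
        rw [e] at this
        calc u^(2*(r+1)) + ((2*r+2 : ℝ) * u^(2*r+1)) * φ y
            = u^(2*r+2) + (2*r+2 : ℝ) * u^(2*r+1) * φ y := by ring_nf
          _ ≤ (φ y + u)^(2*r+2) := by linarith
          _ = (φ y + u)^(2*(r+1)) := by ring_nf
      have intL : Integrable (fun y => u^(2*(r+1)) + ((2*r+2 : ℝ) * u^(2*r+1)) * φ y) ν :=
        (integrable_const _).add (int3.const_mul _)
      have := integral_mono intL int2 hpt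
      rwa [integral_add (integrable_const _) (int3.const_mul _), integral_const,
        integral_const_mul, h0, mul_zero, add_zero, probReal_univ,
        smul_eq_mul, one_mul] at this
  have hJ0 : 0 ≤ J := by
    have : ∀ y, (0:ℝ) ≤ (φ y + u)^(2*p) := fun y => Even.pow_nonneg ⟨p, by ring⟩ _
    exact integral_nonneg this
  -- pointwise key inequality
  have key : ∀ y, 2 * (φ y * (φ y + u)^(2*p+1) - φ y * u^(2*p+1))
      ≤ (2*p+1 : ℝ) * K^2 * ((φ y + u)^(2*p) + u^(2*p)) := by
    intro y
    set x : ℝ := φ y + u with hx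
    have hgeom : (∑ i ∈ range (2*p+1), x^i * u^(2*p-i)) * (x - u) = x^(2*p+1) - u^(2*p+1) := by
      have := geom_sum₂_mul x u (2*p+1)
      simpa using this
    have hφy : x - u = φ y := by rw [hx]; ring
    have e1 : φ y * (φ y + u)^(2*p+1) - φ y * u^(2*p+1)
        = φ y^2 * (∑ i ∈ range (2*p+1), x^i * u^(2*p-i)) := by
      calc φ y * (φ y + u)^(2*p+1) - φ y * u^(2*p+1)
          = φ y * (x^(2*p+1) - u^(2*p+1)) := by rw [hx]; ring
        _ = φ y * ((∑ i ∈ range (2*p+1), x^i * u^(2*p-i)) * (x - u)) := by rw [hgeom]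
        _ = φ y^2 * (∑ i ∈ range (2*p+1), x^i * u^(2*p-i)) := by rw [hφy]; ring
    set S : ℝ := ∑ i ∈ range (2*p+1), x^i * u^(2*p-i) with hS
    have hSabs : |S| ≤ ∑ i ∈ range (2*p+1), |x|^i * |u|^(2*p-i) := by
      refine (Finset.abs_sum_le_sum_abs _ _).trans (le_of_eq ?_)
      exact Finset.sum_congr rfl fun i _ => by rw [abs_mul, abs_pow, abs_pow]
    have hpair := pairing_sum (2*p) |x| |u| (abs_nonneg _) (abs_nonneg _)
    have hxe : |x|^(2*p) = x^(2*p) := Even.pow_abs ⟨p, by ring⟩ _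
    have hue : |u|^(2*p) = u^(2*p) := Even.pow_abs ⟨p, by ring⟩ _
    rw [hxe, hue] at hpair
    have hφ2 : φ y^2 ≤ K^2 := by
      have := hb y
      nlinarith [abs_nonneg (φ y), sq_abs (φ y)]
    have hφ2n : (0:ℝ) ≤ φ y^2 := sq_nonneg _
    have h2S : 2 * (φ y^2 * S) ≤ K^2 * (2 * |S|) := by
      have l1 : φ y^2 * S ≤ φ y^2 * |S| := mul_le_mul_of_nonneg_left (le_abs_self S) hφ2n
      have l2 : φ y^2 * |S| ≤ K^2 * |S| := mul_le_mul_of_nonneg_right hφ2 (abs_nonneg _)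
      linarith
    have h3S : K^2 * (2 * |S|) ≤ K^2 * ((2*p+1 : ℝ) * (x^(2*p) + u^(2*p))) := by
      refine mul_le_mul_of_nonneg_left ?_ (by positivity)
      calc 2 * |S| ≤ 2 * ∑ i ∈ range (2*p+1), |x|^i * |u|^(2*p-i) := by linarith
        _ ≤ (2*p+1 : ℝ) * (x^(2*p) + u^(2*p)) := by
            have : ((2*p : ℕ) + 1 : ℝ) = (2*p+1 : ℝ) := by push_cast; ring
            rw [← this]; exact_mod_cast hpair
    rw [e1]
    calc 2 * (φ y^2 * S) ≤ K^2 * ((2*p+1 : ℝ) * (x^(2*p) + u^(2*p))) := le_trans h2S h3S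
      _ = (2*p+1 : ℝ) * K^2 * ((φ y + u)^(2*p) + u^(2*p)) := by rw [← hx]; ring
  -- integrate the key inequality
  have intL2 : Integrable (fun y => 2 * (φ y * (φ y + u)^(2*p+1) - φ y * u^(2*p+1))) ν :=
    ((int1.sub (int3.mul_const _)).const_mul 2)
  have intR2 : Integrable (fun y => (2*p+1 : ℝ) * K^2 * ((φ y + u)^(2*p) + u^(2*p))) ν :=
    ((int2.add (integrable_const _)).const_mul _)
  have hInt := integral_mono intL2 intR2 key
  rw [integral_const_mul, integral_sub int1 (int3.mul_const _), integral_mul_const,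
    h0, zero_mul, sub_zero, integral_const_mul, integral_add int2 (integrable_const _),
    integral_const, probReal_univ, smul_eq_mul, one_mul] at hInt
  -- hInt : 2 * ∫ φ (φ+u)^(2p+1) ≤ (2p+1) K² (J + u^(2p))
  have hfin : (2*p+1 : ℝ) * K^2 * (J + u^(2*p)) ≤ (2*p+1 : ℝ) * K^2 * (2*J) := by
    refine mul_le_mul_of_nonneg_left (by linarith) (by positivity)
  rw [hJ] at *
  linarith


/-- Main moment bound: `∫ (∑ φ(x j))^(2p) ≤ (2p)!/(2^p p!) k^p K^(2p)`. -/
lemma main_moment (ν : Measure ℝ) [IsProbabilityMeasure ν] (φ : ℝ → ℝ) (hm : Measurable φ)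
    {K : ℝ} (hb : ∀ s, |φ s| ≤ K) (h0 : ∫ s, φ s ∂ν = 0) (k : ℕ) :
    ∀ p : ℕ, ∫ x, (∑ j : Fin k, φ (x j))^(2*p) ∂(Measure.pi fun _ : Fin k => ν)
      ≤ ((2*p).factorial : ℝ) / (2^p * (p.factorial : ℝ)) * (k : ℝ)^p * K^(2*p) := by
  have hK : 0 ≤ K := le_trans (abs_nonneg _) (hb 0)
  -- bound for sums
  have hTb : ∀ (l : ℕ) (x : Fin l → ℝ), |∑ j : Fin l, φ (x j)| ≤ (l : ℝ) * K := by
    intro l x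
    calc |∑ j : Fin l, φ (x j)| ≤ ∑ j : Fin l, |φ (x j)| := Finset.abs_sum_le_sum_abs _ _
      _ ≤ ∑ _j : Fin l, K := Finset.sum_le_sum fun j _ => hb _
      _ = (l : ℝ) * K := by rw [Finset.sum_const, Finset.card_univ, Fintype.card_fin,
        nsmul_eq_mul]
  have hTm : ∀ l : ℕ, Measurable fun x : Fin l → ℝ => ∑ j : Fin l, φ (x j) := fun l =>
    Finset.measurable_sum _ fun j _ => hm.comp (measurable_pi_apply j)
  intro p
  induction p with
  | zero =>
      simp only [Nat.mul_zero, pow_zero, Nat.factorial_zero, Nat.cast_one]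
      rw [integral_const, probReal_univ, smul_eq_mul, mul_one]
      norm_num
  | succ p ih =>
      rcases Nat.eq_zero_or_pos k with hk | hk
      · subst hk
        have : ∀ x : Fin 0 → ℝ, (∑ j : Fin 0, φ (x j))^(2*(p+1)) = 0 := by
          intro x; simp [zero_pow]
        rw [integral_congr_ae (ae_of_all _ this), integral_zero]
        positivity
      · obtain ⟨k', rfl⟩ : ∃ k'', k = k'' + 1 := ⟨k - 1, by omega⟩
        set π : Measure (Fin (k'+1) → ℝ) := Measure.pi fun _ => ν with hπ
        set π' : Measure (Fin k' → ℝ) := Measure.pi fun _ => ν with hπ'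
        set T : (Fin (k'+1) → ℝ) → ℝ := fun x => ∑ j : Fin (k'+1), φ (x j) with hT
        set U : (Fin k' → ℝ) → ℝ := fun z => ∑ j : Fin k', φ (z j) with hU
        -- key step: ∫ T^(2p+2) ≤ (k'+1) * ((2p+1) K^2) * ∫ T^(2p)
        have key : ∫ x, T x^(2*(p+1)) ∂π
            ≤ ((k'+1 : ℕ) : ℝ) * ((2*p+1 : ℝ) * K^2) * ∫ x, T x^(2*p) ∂π := by
          -- expand T^(2p+2) = ∑ i φ(x i) T^(2p+1)
          have hexp : ∀ x, T x^(2*(p+1)) = ∑ i : Fin (k'+1), φ (x i) * T x^(2*p+1) := by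
            intro x
            rw [← Finset.sum_mul]
            show T x ^ (2*(p+1)) = T x * T x ^ (2*p+1)
            rw [show 2*(p+1) = (2*p+1)+1 from by ring, pow_succ]
            ring
          have hint_i : ∀ i : Fin (k'+1),
              Integrable (fun x => φ (x i) * T x^(2*p+1)) π := by
            intro i
            refine integrable_of_bound (((hm.comp (measurable_pi_apply i)).mul
              ((hTm _).pow_const _)).aestronglyMeasurable)
              (K * (((k'+1 : ℕ) : ℝ) * K)^(2*p+1)) fun x => ?_
            rw [abs_mul, abs_pow]
            exact mul_le_mul (hb _) (pow_le_pow_left₀ (abs_nonneg _) (hTb _ x) _)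
              (by positivity) hK
          rw [integral_congr_ae (ae_of_all _ hexp), integral_finset_sum _ fun i _ => hint_i i]
          -- per-coordinate bound
          have per_i : ∀ i : Fin (k'+1),
              ∫ x, φ (x i) * T x^(2*p+1) ∂π ≤ (2*p+1 : ℝ) * K^2 * ∫ x, T x^(2*p) ∂π := by
            intro i
            set e := MeasurableEquiv.piFinSuccAbove (fun _ : Fin (k'+1) => ℝ) i with he
            have hmp := measurePreserving_piFinSuccAbove (fun _ : Fin (k'+1) => ν) i
            set ρ : Measure (ℝ × (Fin k' → ℝ)) := ν.prod π' with hρ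
            haveI : IsProbabilityMeasure π' := by infer_instance
            haveI : IsProbabilityMeasure ρ := by rw [hρ]; infer_instance
            -- the two integrands on the product space
            set g1 : ℝ × (Fin k' → ℝ) → ℝ := fun yz => φ yz.1 * (φ yz.1 + U yz.2)^(2*p+1)
              with hg1
            set g2 : ℝ × (Fin k' → ℝ) → ℝ := fun yz => (φ yz.1 + U yz.2)^(2*p) with hg2
            have hUm : Measurable U := Finset.measurable_sum _ fun j _ =>
              hm.comp (measurable_pi_apply j)
            have hg1m : Measurable g1 := (hm.comp measurable_fst).mul
              (((hm.comp measurable_fst).add (hUm.comp measurable_snd)).pow_const _)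
            have hg2m : Measurable g2 :=
              ((hm.comp measurable_fst).add (hUm.comp measurable_snd)).pow_const _
            have hsum_bd : ∀ yz : ℝ × (Fin k' → ℝ), |φ yz.1 + U yz.2|
                ≤ K + (k' : ℝ) * K := fun yz =>
              (abs_add_le _ _).trans (add_le_add (hb _) (hTb _ _))
            have hg1i : Integrable g1 ρ := by
              refine integrable_of_bound hg1m.aestronglyMeasurable
                (K * (K + (k' : ℝ) * K)^(2*p+1)) fun yz => ?_
              rw [hg1]; dsimp only
              rw [abs_mul, abs_pow]
              exact mul_le_mul (hb _) (pow_le_pow_left₀ (abs_nonneg _) (hsum_bd yz) _)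
                (by positivity) hK
            have hg2i : Integrable g2 ρ := by
              refine integrable_of_bound hg2m.aestronglyMeasurable
                ((K + (k' : ℝ) * K)^(2*p)) fun yz => ?_
              rw [hg2]; dsimp only
              rw [abs_pow]
              exact pow_le_pow_left₀ (abs_nonneg _) (hsum_bd yz) _
            -- transfer from π to ρ
            have hcomp1 : ∀ x : Fin (k'+1) → ℝ, g1 (e x) = φ (x i) * T x^(2*p+1) := by
              intro x
              have hsplit : T x = φ (x i) + U (fun j => x (i.succAbove j)) := by
                rw [hT, hU]
                exact Fin.sum_univ_succAbove (fun j => φ (x j)) i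
              have c1 : (e x).1 = x i := rfl
              have c2 : (e x).2 = fun j => x (i.succAbove j) := rfl
              rw [hg1]; dsimp only
              rw [c1, c2, ← hsplit]
            have hcomp2 : ∀ x : Fin (k'+1) → ℝ, g2 (e x) = T x^(2*p) := by
              intro x
              have hsplit : T x = φ (x i) + U (fun j => x (i.succAbove j)) := by
                rw [hT, hU]
                exact Fin.sum_univ_succAbove (fun j => φ (x j)) i
              have c1 : (e x).1 = x i := rfl
              have c2 : (e x).2 = fun j => x (i.succAbove j) := rfl
              rw [hg2]; dsimp only
              rw [c1, c2, ← hsplit]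
            have t1 : ∫ x, φ (x i) * T x^(2*p+1) ∂π = ∫ yz, g1 yz ∂ρ := by
              rw [← hmp.integral_comp e.measurableEmbedding g1]
              exact integral_congr_ae (ae_of_all _ fun x => (hcomp1 x).symm)
            have t2 : ∫ x, T x^(2*p) ∂π = ∫ yz, g2 yz ∂ρ := by
              rw [← hmp.integral_comp e.measurableEmbedding g2]
              exact integral_congr_ae (ae_of_all _ fun x => (hcomp2 x).symm)
            rw [t1, t2]
            -- Fubini and the 1-d core estimate
            rw [integral_prod_symm g1 hg1i, integral_prod_symm g2 hg2i]
            have inner_le : ∀ z : Fin k' → ℝ,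
                ∫ y, g1 (y, z) ∂ν ≤ (2*p+1 : ℝ) * K^2 * ∫ y, g2 (y, z) ∂ν := fun z =>
              core_1d ν φ hm hb h0 p (U z)
            have i1 : Integrable (fun z => ∫ y, g1 (y, z) ∂ν) π' := hg1i.integral_prod_right
            have i2 : Integrable (fun z => ∫ y, g2 (y, z) ∂ν) π' := hg2i.integral_prod_right
            calc ∫ z, ∫ y, g1 (y, z) ∂ν ∂π'
                ≤ ∫ z, (2*p+1 : ℝ) * K^2 * ∫ y, g2 (y, z) ∂ν ∂π' :=
                  integral_mono i1 (i2.const_mul _) inner_le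
              _ = (2*p+1 : ℝ) * K^2 * ∫ z, ∫ y, g2 (y, z) ∂ν ∂π' := integral_const_mul _ _
          calc ∑ i : Fin (k'+1), ∫ x, φ (x i) * T x^(2*p+1) ∂π
              ≤ ∑ _i : Fin (k'+1), (2*p+1 : ℝ) * K^2 * ∫ x, T x^(2*p) ∂π :=
                Finset.sum_le_sum fun i _ => per_i i
            _ = ((k'+1 : ℕ) : ℝ) * ((2*p+1 : ℝ) * K^2) * ∫ x, T x^(2*p) ∂π := by
                rw [Finset.sum_const, Finset.card_univ, Fintype.card_fin, nsmul_eq_mul]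
                ring
        -- combine with induction hypothesis
        have hconst : (0:ℝ) ≤ ((k'+1 : ℕ) : ℝ) * ((2*p+1 : ℝ) * K^2) := by positivity
        have step2 := mul_le_mul_of_nonneg_left ih hconst
        have harith : ((k'+1 : ℕ) : ℝ) * ((2*p+1 : ℝ) * K^2)
              * (((2*p).factorial : ℝ) / (2^p * (p.factorial : ℝ)) * ((k'+1 : ℕ) : ℝ)^p * K^(2*p))
            = ((2*(p+1)).factorial : ℝ) / (2^(p+1) * ((p+1).factorial : ℝ))
              * ((k'+1 : ℕ) : ℝ)^(p+1) * K^(2*(p+1)) := by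
          have e1 : (2*(p+1)).factorial = (2*p+2) * ((2*p+1) * (2*p).factorial) := by
            rw [show 2*(p+1) = (2*p+1)+1 by ring, Nat.factorial_succ,
              show (2*p+1) = (2*p)+1 by ring, Nat.factorial_succ]
          have e2 : (p+1).factorial = (p+1) * p.factorial := Nat.factorial_succ p
          rw [e1, e2]
          have hf1 : ((2*p).factorial : ℝ) ≠ 0 := Nat.cast_ne_zero.mpr (Nat.factorial_ne_zero _)
          have hf2 : ((p).factorial : ℝ) ≠ 0 := Nat.cast_ne_zero.mpr (Nat.factorial_ne_zero _)
          have hp2 : (2:ℝ)^p ≠ 0 := by positivity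
          have hp1 : ((p:ℝ)+1) ≠ 0 := by positivity
          push_cast
          field_simp
          ring
        calc ∫ x, T x^(2*(p+1)) ∂π
            ≤ ((k'+1 : ℕ) : ℝ) * ((2*p+1 : ℝ) * K^2) * ∫ x, T x^(2*p) ∂π := key
          _ ≤ ((k'+1 : ℕ) : ℝ) * ((2*p+1 : ℝ) * K^2)
              * (((2*p).factorial : ℝ) / (2^p * (p.factorial : ℝ)) * ((k'+1:ℕ) : ℝ)^p * K^(2*p)) := step2
          _ = _ := harith


/-- Harmonic mean estimate (Theorem 5.1 of the paper, higher moments):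
`𝔼((M_n - h)^{2m}) ≤ (2m)! h^{2m} b^{2m} / (2^m m! a^{2m} n^m)` for `m ≥ 2`. -/
theorem stmt_12 (a b : ℝ) (ha : 0 < a) (hab : a ≤ b)
    (μ : Measure ℝ) [IsProbabilityMeasure μ] (hsupp : μ (Set.Icc a b) = 1)
    (h σ2 : ℝ) (hh : h = (∫ x, x⁻¹ ∂μ)⁻¹)
    (hσ2 : σ2 = ∫ x, (x⁻¹ - h⁻¹) ^ 2 ∂μ)
    (m n : ℕ) (hm : 2 ≤ m) (hn : 1 ≤ n) :
    (∫ x, ((n : ℝ) / (∑ j, (x j)⁻¹) - h) ^ (2 * m) ∂(Measure.pi fun _ : Fin n => μ))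
      ≤ ((2 * m).factorial : ℝ) * h ^ (2 * m) * b ^ (2 * m)
          / (2 ^ m * (m.factorial : ℝ) * a ^ (2 * m) * (n : ℝ) ^ m) := by
  have hb0 : 0 < b := lt_of_lt_of_le ha hab
  -- a.e. facts for μ
  have hcompl : μ (Set.Icc a b)ᶜ = 0 := by
    rw [measure_compl measurableSet_Icc (measure_ne_top μ _), hsupp, measure_univ]
    simp
  have hae : ∀ᵐ x ∂μ, x ∈ Set.Icc a b := by
    rw [ae_iff]
    convert hcompl using 2
    rfl
  -- the mean of x⁻¹
  have hinv_meas : Measurable fun x : ℝ => x⁻¹ := measurable_inv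
  have hinv_int : Integrable (fun x : ℝ => x⁻¹) μ := by
    refine Integrable.mono' (integrable_const a⁻¹) hinv_meas.aestronglyMeasurable ?_
    filter_upwards [hae] with x hx
    rw [Real.norm_eq_abs, abs_of_pos (inv_pos.mpr (lt_of_lt_of_le ha hx.1))]
    exact inv_anti₀ ha hx.1
  set c : ℝ := ∫ x, x⁻¹ ∂μ with hc
  have hc1 : b⁻¹ ≤ c := by
    have h1 : ∫ _x, b⁻¹ ∂μ ≤ ∫ x, x⁻¹ ∂μ := by
      refine integral_mono_ae (integrable_const _) hinv_int ?_
      filter_upwards [hae] with x hx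
      exact inv_anti₀ (lt_of_lt_of_le ha hx.1) hx.2
    simpa using h1
  have hc2 : c ≤ a⁻¹ := by
    have h1 : ∫ x, x⁻¹ ∂μ ≤ ∫ _x, a⁻¹ ∂μ := by
      refine integral_mono_ae hinv_int (integrable_const _) ?_
      filter_upwards [hae] with x hx
      exact inv_anti₀ ha hx.1
    simpa using h1
  have hc0 : 0 < c := lt_of_lt_of_le (inv_pos.mpr hb0) hc1
  have hhc : h = c⁻¹ := hh
  have hh0 : 0 < h := by rw [hhc]; exact inv_pos.mpr hc0
  have hch : h * c = 1 := by rw [hhc]; field_simp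
  -- the clipped centered inverse
  set φ : ℝ → ℝ := fun s => (max a (min s b))⁻¹ - c with hφ
  have hclip : ∀ s, a ≤ max a (min s b) ∧ max a (min s b) ≤ b :=
    fun s => ⟨le_max_left _ _, max_le hab (min_le_right _ _)⟩
  have hφm : Measurable φ := ((measurable_const.max
    (measurable_id.min measurable_const)).inv).sub measurable_const
  have hφb : ∀ s, |φ s| ≤ a⁻¹ := by
    intro s
    obtain ⟨h1, h2⟩ := hclip s
    have hp : 0 < max a (min s b) := lt_of_lt_of_le ha h1
    have i1 : (max a (min s b))⁻¹ ≤ a⁻¹ := inv_anti₀ ha h1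
    have i2 : b⁻¹ ≤ (max a (min s b))⁻¹ := inv_anti₀ hp h2
    have i3 : (0:ℝ) < b⁻¹ := inv_pos.mpr hb0
    rw [hφ, abs_le]
    constructor <;> dsimp only <;> nlinarith
  have hφ0 : ∫ s, φ s ∂μ = 0 := by
    have hcongr : φ =ᵐ[μ] fun x => x⁻¹ - c := by
      filter_upwards [hae] with x hx
      rw [hφ]
      dsimp only
      rw [min_eq_left hx.2, max_eq_right hx.1]
    rw [integral_congr_ae hcongr, integral_sub hinv_int (integrable_const _),
      integral_const, probReal_univ, smul_eq_mul, one_mul, ← hc, sub_self]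
  -- move to the product space
  set π : Measure (Fin n → ℝ) := Measure.pi fun _ : Fin n => μ with hπ
  haveI : IsProbabilityMeasure π := by rw [hπ]; infer_instance
  have hπae : ∀ᵐ x ∂π, ∀ j, x j ∈ Set.Icc a b := by
    have hEmeas : MeasurableSet (Set.pi Set.univ fun _ : Fin n => Set.Icc a b) :=
      MeasurableSet.univ_pi fun _ => measurableSet_Icc
    have hE1 : π (Set.pi Set.univ fun _ : Fin n => Set.Icc a b) = 1 := by
      rw [hπ, Measure.pi_pi]
      simp [hsupp]
      
    rw [ae_iff]
    have : {x : Fin n → ℝ | ¬∀ j, x j ∈ Set.Icc a b}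
        = (Set.pi Set.univ fun _ : Fin n => Set.Icc a b)ᶜ := by
      ext x
      simp only [Set.mem_setOf_eq, Set.mem_compl_iff, Set.mem_univ_pi]
    rw [this, measure_compl hEmeas (measure_ne_top π _), hE1, measure_univ]
    simp
  set T : (Fin n → ℝ) → ℝ := fun x => ∑ j : Fin n, φ (x j) with hT
  have hTm : Measurable T := Finset.measurable_sum _ fun j _ => hφm.comp (measurable_pi_apply j)
  have hTb : ∀ x, |T x| ≤ (n : ℝ) * a⁻¹ := by
    intro x
    calc |T x| ≤ ∑ j : Fin n, |φ (x j)| := Finset.abs_sum_le_sum_abs _ _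
      _ ≤ ∑ _j : Fin n, a⁻¹ := Finset.sum_le_sum fun j _ => hφb _
      _ = (n : ℝ) * a⁻¹ := by rw [Finset.sum_const, Finset.card_univ, Fintype.card_fin,
        nsmul_eq_mul]
  set F : (Fin n → ℝ) → ℝ := fun x => ((n : ℝ) / (∑ j, (x j)⁻¹) - h) ^ (2 * m) with hF
  set G : (Fin n → ℝ) → ℝ := fun x => h^(2*m) * (b/(n:ℝ))^(2*m) * T x^(2*m) with hG
  have hn0 : (0:ℝ) < (n:ℝ) := by exact_mod_cast hn
  -- pointwise comparison a.e.
  have hFG : ∀ᵐ x ∂π, F x ≤ G x := by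
    filter_upwards [hπae] with x hx
    set S : ℝ := ∑ j : Fin n, (x j)⁻¹ with hS
    have hSlb : (n : ℝ) * b⁻¹ ≤ S := by
      rw [hS]
      calc (n:ℝ) * b⁻¹ = ∑ _j : Fin n, b⁻¹ := by
            rw [Finset.sum_const, Finset.card_univ, Fintype.card_fin, nsmul_eq_mul]
        _ ≤ ∑ j : Fin n, (x j)⁻¹ := Finset.sum_le_sum fun j _ =>
            inv_anti₀ (lt_of_lt_of_le ha (hx j).1) (hx j).2
    have hS0 : 0 < S := lt_of_lt_of_le (by positivity) hSlb
    have hφx : ∀ j, φ (x j) = (x j)⁻¹ - c := by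
      intro j
      rw [hφ]
      dsimp only
      rw [min_eq_left (hx j).2, max_eq_right (hx j).1]
    have hTx : T x = S - (n:ℝ) * c := by
      calc T x = ∑ j : Fin n, ((x j)⁻¹ - c) := Finset.sum_congr rfl fun j _ => hφx j
        _ = S - (n:ℝ) * c := by
          rw [Finset.sum_sub_distrib, Finset.sum_const, Finset.card_univ,
            Fintype.card_fin, nsmul_eq_mul, hS]
    have hid : (n:ℝ) / S - h = -(h * T x / S) := by
      rw [hTx]
      field_simp
      nlinarith [hch]
    have hFx : F x = h^(2*m) * T x^(2*m) / S^(2*m) := by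
      rw [hF]
      dsimp only
      rw [← hS, hid]
      rw [Even.neg_pow ⟨m, by ring⟩, div_pow, mul_pow]
    rw [hFx, hG]
    have hTnn : (0:ℝ) ≤ T x^(2*m) := Even.pow_nonneg ⟨m, by ring⟩ _
    have hnum : (0:ℝ) ≤ h^(2*m) * T x^(2*m) := by positivity
    have hpow : ((n:ℝ) * b⁻¹)^(2*m) ≤ S^(2*m) := pow_le_pow_left₀ (by positivity) hSlb _
    have hppos : (0:ℝ) < ((n:ℝ) * b⁻¹)^(2*m) := by positivity
    calc h^(2*m) * T x^(2*m) / S^(2*m)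
        ≤ h^(2*m) * T x^(2*m) / ((n:ℝ) * b⁻¹)^(2*m) :=
          div_le_div_of_nonneg_left hnum hppos hpow
      _ = h^(2*m) * (b/(n:ℝ))^(2*m) * T x^(2*m) := by
          rw [div_eq_mul_inv, ← inv_pow]
          rw [show ((n:ℝ) * b⁻¹)⁻¹ = b / (n:ℝ) by field_simp]
          ring
  -- integrability
  set C0 : ℝ := h^(2*m) * (b/(n:ℝ))^(2*m) with hC0
  have hC0nn : 0 ≤ C0 := by positivity
  have hGm : Measurable G := measurable_const.mul (hTm.pow_const _)
  have hGi : Integrable G π := by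
    refine integrable_of_bound hGm.aestronglyMeasurable (C0 * ((n:ℝ)*a⁻¹)^(2*m)) fun x => ?_
    rw [hG]
    dsimp only
    rw [abs_mul, abs_of_nonneg hC0nn, abs_pow]
    exact mul_le_mul_of_nonneg_left (pow_le_pow_left₀ (abs_nonneg _) (hTb x) _) hC0nn
  have hFm : Measurable F := by
    rw [hF]
    exact ((measurable_const.div (Finset.measurable_sum _ fun j _ =>
      (measurable_pi_apply j).inv)).sub measurable_const).pow_const _
  have hFnn : ∀ x, 0 ≤ F x := fun x => Even.pow_nonneg ⟨m, by ring⟩ _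
  have hFi : Integrable F π := by
    refine Integrable.mono' hGi hFm.aestronglyMeasurable ?_
    filter_upwards [hFG] with x hx
    rwa [Real.norm_eq_abs, abs_of_nonneg (hFnn x)]
  have step1 : ∫ x, F x ∂π ≤ ∫ x, G x ∂π := integral_mono_ae hFi hGi hFG
  have step2 : ∫ x, G x ∂π = C0 * ∫ x, T x^(2*m) ∂π := by
    rw [hG]
    simp only
    exact integral_const_mul _ _
  have step3 := main_moment μ φ hφm hφb hφ0 n m
  have step4 : C0 * ∫ x, T x^(2*m) ∂π
      ≤ C0 * (((2*m).factorial : ℝ) / (2^m * (m.factorial : ℝ)) * (n : ℝ)^m * (a⁻¹)^(2*m)) :=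
    mul_le_mul_of_nonneg_left step3 hC0nn
  have hfac : ((m.factorial : ℝ)) ≠ 0 := Nat.cast_ne_zero.mpr (Nat.factorial_ne_zero _)
  have hfinal : C0 * (((2*m).factorial : ℝ) / (2^m * (m.factorial : ℝ)) * (n : ℝ)^m * (a⁻¹)^(2*m))
      = ((2 * m).factorial : ℝ) * h ^ (2 * m) * b ^ (2 * m)
          / (2 ^ m * (m.factorial : ℝ) * a ^ (2 * m) * (n : ℝ) ^ m) := by
    rw [hC0, div_pow, inv_pow]
    have h2m : (2:ℝ)^m ≠ 0 := by positivity
    have hnne : ((n:ℝ)) ≠ 0 := ne_of_gt hn0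
    have hane : (a:ℝ) ≠ 0 := ne_of_gt ha
    field_simp
    ring
  calc ∫ x, F x ∂π ≤ ∫ x, G x ∂π := step1
    _ = C0 * ∫ x, T x^(2*m) ∂π := step2
    _ ≤ C0 * (((2*m).factorial : ℝ) / (2^m * (m.factorial : ℝ)) * (n : ℝ)^m * (a⁻¹)^(2*m)) := step4
    _ = _ := hfinal
end

section
/- Let (Ω, 𝒜, ℙ) be a probability space, K > 0, m̄ ∈ ℝ, s : ℕ → ℕ with s(n) ≥ 1 for all n, and suppose s(n) ≥ c·n^α for all n ≥ 1, for some constants c > 0 and α > 0. Let (X_{n,j})_{n∈ℕ, 0 ≤ j < s(n)} be a family of real random variables on Ω which are independent (as a family indexed by the sigma type Σ n, Fin s(n)), identically distributed, measurable, satisfy |X_{n,j}| ≤ K almost surely, and have common mean 𝔼[X_{n,j}] = m̄. Then ℙ-almost surely, the row averages s(n)⁻¹ · ∑_{j < s(n)} X_{n,j} converge to m̄ as n → ∞. -/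
open MeasureTheory ProbabilityTheory Filter Real

lemma summable_exp_neg_rpow_aux {b α : ℝ} (hb : 0 < b) (hα : 0 < α) :
    Summable (fun n : ℕ => Real.exp (-(b * (n : ℝ) ^ α))) := by
  set m : ℕ := ⌈2 / α⌉₊ with hm
  have hmα : 2 ≤ (m : ℝ) * α := by
    have h := Nat.le_ceil (2 / α)
    have h2 : 2 / α * α ≤ (m : ℝ) * α := mul_le_mul_of_nonneg_right h hα.le
    rwa [div_mul_cancel₀ _ hα.ne'] at h2
  rw [← summable_nat_add_iff 1]
  have hsum2 : Summable (fun n : ℕ =>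
      ((Nat.factorial m : ℝ) / b ^ m) * (((n + 1 : ℕ) : ℝ)) ^ (-2 : ℝ)) := by
    exact (((Real.summable_nat_rpow (p := (-2 : ℝ))).mpr (by norm_num)).comp_injective
      (add_left_injective 1)).mul_left _
  refine Summable.of_nonneg_of_le (fun n => (Real.exp_pos _).le) (fun n => ?_) hsum2
  set y : ℝ := ((n + 1 : ℕ) : ℝ) with hy
  have hn1 : (1 : ℝ) ≤ y := by rw [hy]; exact_mod_cast Nat.succ_le_succ (Nat.zero_le n)
  have hypos : (0 : ℝ) < y := by linarith
  set x : ℝ := b * y ^ α with hx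
  have hxpos : 0 < x := mul_pos hb (Real.rpow_pos_of_pos hypos α)
  have hfac : (0 : ℝ) < (Nat.factorial m : ℝ) := by positivity
  have h2 : x ^ m / (Nat.factorial m : ℝ) ≤ Real.exp x :=
    Real.pow_div_factorial_le_exp x hxpos.le m
  have h1 : Real.exp (-x) ≤ (Nat.factorial m : ℝ) / x ^ m := by
    rw [Real.exp_neg]
    have hd : (0 : ℝ) < x ^ m / (Nat.factorial m : ℝ) := by positivity
    calc (Real.exp x)⁻¹ ≤ (x ^ m / (Nat.factorial m : ℝ))⁻¹ := by
          exact inv_anti₀ hd h2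
      _ = (Nat.factorial m : ℝ) / x ^ m := by rw [inv_div]
  refine h1.trans ?_
  have hxm : x ^ m = b ^ m * y ^ (α * m) := by
    rw [hx, mul_pow, ← Real.rpow_natCast (y ^ α) m, ← Real.rpow_mul hypos.le]
  have hexp2 : y ^ (2 : ℝ) ≤ y ^ (α * (m : ℝ)) :=
    Real.rpow_le_rpow_of_exponent_le hn1 (by linarith)
  calc (Nat.factorial m : ℝ) / x ^ m
      = (Nat.factorial m : ℝ) / (b ^ m * y ^ (α * m)) := by rw [hxm]
    _ ≤ (Nat.factorial m : ℝ) / (b ^ m * y ^ (2 : ℝ)) := by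
        apply div_le_div_of_nonneg_left hfac.le
        · positivity
        · exact mul_le_mul_of_nonneg_left hexp2 (by positivity)
    _ = (Nat.factorial m : ℝ) / b ^ m * y ^ (-2 : ℝ) := by
        rw [Real.rpow_neg hypos.le, ← div_div, div_eq_mul_inv ((Nat.factorial m : ℝ) / b ^ m)]


lemma mgf_bound_aux {Ω : Type*} [MeasurableSpace Ω] {P : Measure Ω} [IsProbabilityMeasure P]
    {Y : Ω → ℝ} {B t : ℝ} (hB : 0 < B) (hY : Measurable Y)
    (hbdd : ∀ᵐ ω ∂P, |Y ω| ≤ B) (hmean : (∫ ω, Y ω ∂P) = 0)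
    (ht : |t| ≤ 1 / B) : mgf Y P t ≤ Real.exp (t ^ 2 * B ^ 2) := by
  have hYint : Integrable Y P := by
    refine (integrable_const B).mono' hY.aestronglyMeasurable ?_
    filter_upwards [hbdd] with ω h using by rwa [Real.norm_eq_abs]
  have hY2int : Integrable (fun ω => (Y ω) ^ 2) P := by
    refine (integrable_const (B ^ 2)).mono' (hY.pow_const 2).aestronglyMeasurable ?_
    filter_upwards [hbdd] with ω h
    rw [Real.norm_eq_abs, abs_pow]
    exact pow_le_pow_left₀ (abs_nonneg _) h 2
  have hexpint : Integrable (fun ω => Real.exp (t * Y ω)) P := by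
    refine (integrable_const (Real.exp (|t| * B))).mono'
      ((hY.const_mul t).exp).aestronglyMeasurable ?_
    filter_upwards [hbdd] with ω h
    rw [Real.norm_eq_abs, abs_of_nonneg (Real.exp_pos _).le, Real.exp_le_exp]
    calc t * Y ω ≤ |t * Y ω| := le_abs_self _
      _ = |t| * |Y ω| := abs_mul _ _
      _ ≤ |t| * B := mul_le_mul_of_nonneg_left h (abs_nonneg _)
  have hpt : ∀ᵐ ω ∂P, Real.exp (t * Y ω) ≤ 1 + t * Y ω + (t * Y ω) ^ 2 := by
    filter_upwards [hbdd] with ω h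
    have hx : |t * Y ω| ≤ 1 := by
      rw [abs_mul]
      calc |t| * |Y ω| ≤ (1 / B) * B :=
        mul_le_mul ht h (abs_nonneg _) (by positivity)
      _ = 1 := by field_simp
    have hb := Real.exp_bound hx (n := 2) (by norm_num)
    have hsum : ∑ i ∈ Finset.range 2, (t * Y ω) ^ i / (Nat.factorial i : ℝ)
        = 1 + t * Y ω := by
      simp [Finset.sum_range_succ, Nat.factorial]
    rw [hsum] at hb
    norm_num [Nat.factorial] at hb
    have h2 := (le_abs_self _).trans hb
    nlinarith [sq_nonneg (t * Y ω), (by rw [← abs_mul, sq_abs] : (|t| * |Y ω|) ^ 2 = (t * Y ω) ^ 2)]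
  have hint1 : Integrable (fun ω => 1 + t * Y ω) P := (integrable_const 1).add (hYint.const_mul t)
  have hint2 : Integrable (fun ω => (t * Y ω) ^ 2) P := by
    simpa [mul_pow] using hY2int.const_mul (t ^ 2)
  have hmgf : mgf Y P t ≤ 1 + 0 + t ^ 2 * B ^ 2 := by
    rw [mgf]
    calc ∫ ω, Real.exp (t * Y ω) ∂P ≤ ∫ ω, (1 + t * Y ω + (t * Y ω) ^ 2) ∂P :=
          integral_mono_ae hexpint (hint1.add hint2) hpt
      _ = 1 + t * (∫ ω, Y ω ∂P) + t ^ 2 * (∫ ω, (Y ω) ^ 2 ∂P) := by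
          rw [integral_add hint1 hint2, integral_add (integrable_const 1) (hYint.const_mul t)]
          simp [MeasureTheory.integral_const_mul, mul_pow]
      _ ≤ 1 + 0 + t ^ 2 * B ^ 2 := by
          rw [hmean, mul_zero]
          have h4 : (∫ ω, (Y ω) ^ 2 ∂P) ≤ ∫ _, B ^ 2 ∂P := by
            refine integral_mono_ae hY2int (integrable_const _) ?_
            filter_upwards [hbdd] with ω h
            rw [← sq_abs]
            exact pow_le_pow_left₀ (abs_nonneg _) h 2
          rw [integral_const] at h4
          simp only [probReal_univ, ENNReal.toReal_one, one_smul, smul_eq_mul] at h4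
          nlinarith [sq_nonneg t]
  calc mgf Y P t ≤ 1 + 0 + t ^ 2 * B ^ 2 := hmgf
    _ ≤ Real.exp (t ^ 2 * B ^ 2) := by
        have := Real.add_one_le_exp (t ^ 2 * B ^ 2)
        linarith



lemma chernoff_aux {Ω ι : Type*} [MeasurableSpace Ω] {P : Measure Ω} [IsProbabilityMeasure P]
    {Y : ι → Ω → ℝ} {B : ℝ} (hB : 0 < B)
    (hmeas : ∀ i, Measurable (Y i))
    (hindep : iIndepFun Y P)
    (hbdd : ∀ i, ∀ᵐ ω ∂P, |Y i ω| ≤ B)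
    (hmean : ∀ i, (∫ ω, Y i ω ∂P) = 0)
    (T : Finset ι) {ε : ℝ} (hε : 0 < ε) (hεB : ε ≤ 2 * B) :
    P {ω | (T.card : ℝ) * ε ≤ ∑ i ∈ T, Y i ω} ≤
      ENNReal.ofReal (Real.exp (-((T.card : ℝ) * ε ^ 2 / (4 * B ^ 2)))) := by
  set t : ℝ := ε / (2 * B ^ 2) with hts
  have htpos : 0 < t := by positivity
  have htB : |t| ≤ 1 / B := by
    rw [abs_of_pos htpos, hts, div_le_div_iff₀ (by positivity) hB]
    nlinarith
  have hint : ∀ i, Integrable (fun ω => Real.exp (t * Y i ω)) P := by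
    intro i
    refine (integrable_const (Real.exp (|t| * B))).mono'
      (((hmeas i).const_mul t).exp).aestronglyMeasurable ?_
    filter_upwards [hbdd i] with ω h
    rw [Real.norm_eq_abs, abs_of_nonneg (Real.exp_pos _).le, Real.exp_le_exp]
    calc t * Y i ω ≤ |t * Y i ω| := le_abs_self _
      _ = |t| * |Y i ω| := abs_mul _ _
      _ ≤ |t| * B := mul_le_mul_of_nonneg_left h (abs_nonneg _)
  have hsumint : Integrable (fun ω => Real.exp (t * (∑ i ∈ T, Y i) ω)) P :=
    hindep.integrable_exp_mul_sum hmeas (fun i _ => hint i)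
  have hkey := measure_ge_le_exp_mul_mgf (μ := P) (X := ∑ i ∈ T, Y i)
    ((T.card : ℝ) * ε) htpos.le hsumint
  have hmgf : mgf (∑ i ∈ T, Y i) P t ≤ Real.exp ((T.card : ℝ) * (t ^ 2 * B ^ 2)) := by
    rw [hindep.mgf_sum hmeas T]
    calc ∏ i ∈ T, mgf (Y i) P t ≤ ∏ _i ∈ T, Real.exp (t ^ 2 * B ^ 2) :=
          Finset.prod_le_prod (fun i _ => mgf_nonneg)
            (fun i _ => mgf_bound_aux hB (hmeas i) (hbdd i) (hmean i) htB)
      _ = Real.exp ((T.card : ℝ) * (t ^ 2 * B ^ 2)) := by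
          rw [Finset.prod_const, ← Real.exp_nat_mul]
  have hbound : (P {ω | (T.card : ℝ) * ε ≤ (∑ i ∈ T, Y i) ω}).toReal ≤
      Real.exp (-((T.card : ℝ) * ε ^ 2 / (4 * B ^ 2))) := by
    refine hkey.trans ?_
    calc Real.exp (-t * ((T.card : ℝ) * ε)) * mgf (∑ i ∈ T, Y i) P t
        ≤ Real.exp (-t * ((T.card : ℝ) * ε)) * Real.exp ((T.card : ℝ) * (t ^ 2 * B ^ 2)) := by
          exact mul_le_mul_of_nonneg_left hmgf (Real.exp_pos _).le
      _ = Real.exp (-t * ((T.card : ℝ) * ε) + (T.card : ℝ) * (t ^ 2 * B ^ 2)) :=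
          (Real.exp_add _ _).symm
      _ = Real.exp (-((T.card : ℝ) * ε ^ 2 / (4 * B ^ 2))) := by
          congr 1
          rw [hts]
          field_simp
          ring
  have hfin : P {ω | (T.card : ℝ) * ε ≤ ∑ i ∈ T, Y i ω} ≠ ⊤ := measure_ne_top _ _
  have hset : {ω | (T.card : ℝ) * ε ≤ ∑ i ∈ T, Y i ω}
      = {ω | (T.card : ℝ) * ε ≤ (∑ i ∈ T, Y i) ω} := by
    simp [Finset.sum_apply]
  rw [hset, ← ENNReal.ofReal_toReal (measure_ne_top P _)]
  exact ENNReal.ofReal_le_ofReal hbound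


/-- Strong law for triangular arrays with polynomially growing row sizes (Lemma 4.2 of
the paper): if `(X_{n,j})` is an i.i.d. family of bounded real random variables with
mean `m̄`, and `s(n) ≥ c n^α`, then the row averages converge almost surely to `m̄`. -/
theorem stmt_14 {Ω : Type*} [MeasurableSpace Ω] (P : Measure Ω) [IsProbabilityMeasure P]
    (K : ℝ) (hK : 0 < K) (mbar : ℝ) (c α : ℝ) (hc : 0 < c) (hα : 0 < α)
    (s : ℕ → ℕ) (hs : ∀ n, 1 ≤ s n)
    (hgrow : ∀ n : ℕ, 1 ≤ n → c * (n : ℝ) ^ α ≤ (s n : ℝ))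
    (X : (Σ n : ℕ, Fin (s n)) → Ω → ℝ)
    (hmeas : ∀ i, Measurable (X i))
    (hindep : iIndepFun X P)
    (hident : ∀ i j, IdentDistrib (X i) (X j) P P)
    (hbdd : ∀ i, ∀ᵐ ω ∂P, |X i ω| ≤ K)
    (hmean : ∀ i, (∫ ω, X i ω ∂P) = mbar) :
    ∀ᵐ ω ∂P, Tendsto (fun n : ℕ => (s n : ℝ)⁻¹ * ∑ j : Fin (s n), X ⟨n, j⟩ ω)
      atTop (nhds mbar) := by
  classical
  set B : ℝ := 2 * K with hB
  have hBpos : 0 < B := by positivity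
  have hXint : ∀ i, Integrable (X i) P := by
    intro i
    refine (integrable_const K).mono' (hmeas i).aestronglyMeasurable ?_
    filter_upwards [hbdd i] with ω h using by rwa [Real.norm_eq_abs]
  have hmK : |mbar| ≤ K := by
    have i0 : (Σ n : ℕ, Fin (s n)) := ⟨0, ⟨0, hs 0⟩⟩
    have h1 : ‖∫ ω, X i0 ω ∂P‖ ≤ ∫ _, K ∂P := by
      refine norm_integral_le_of_norm_le (integrable_const K) ?_
      filter_upwards [hbdd i0] with ω h using by rwa [Real.norm_eq_abs]
    rw [hmean i0, Real.norm_eq_abs, integral_const, probReal_univ] at h1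
    simpa using h1
  set Y : (Σ n : ℕ, Fin (s n)) → Ω → ℝ := fun i ω => X i ω - mbar with hY
  have hYmeas : ∀ i, Measurable (Y i) := fun i => (hmeas i).sub measurable_const
  have hYindep : iIndepFun Y P :=
    hindep.comp (fun _ => fun x : ℝ => x - mbar)
      (fun _ => measurable_id.sub measurable_const)
  have hYbdd : ∀ i, ∀ᵐ ω ∂P, |Y i ω| ≤ B := by
    intro i
    filter_upwards [hbdd i] with ω h
    calc |X i ω - mbar| ≤ |X i ω| + |mbar| := abs_sub _ _
      _ ≤ K + K := add_le_add h hmK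
      _ = B := by rw [hB]; ring
  have hYmean : ∀ i, (∫ ω, Y i ω ∂P) = 0 := by
    intro i
    rw [hY]
    rw [integral_sub (hXint i) (integrable_const mbar), hmean i, integral_const, probReal_univ]
    simp
  have hNYmeas : ∀ i, Measurable (fun ω => -(Y i ω)) := fun i => (hYmeas i).neg
  have hNYindep : iIndepFun (fun i (ω : Ω) => -(Y i ω)) P :=
    hYindep.comp (fun _ => fun x : ℝ => -x) (fun _ => measurable_neg)
  have hNYbdd : ∀ i, ∀ᵐ ω ∂P, |(fun (ω : Ω) => -(Y i ω)) ω| ≤ B := by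
    intro i; filter_upwards [hYbdd i] with ω h using by rwa [abs_neg]
  have hNYmean : ∀ i, (∫ ω, -(Y i ω) ∂P) = 0 := by
    intro i; rw [integral_neg, hYmean i, neg_zero]
  set T : ∀ n : ℕ, Finset (Σ n : ℕ, Fin (s n)) :=
    fun n => Finset.univ.map ⟨Sigma.mk n, sigma_mk_injective⟩ with hT
  have hTcard : ∀ n, ((T n).card : ℝ) = (s n : ℝ) := by
    intro n; rw [hT]; simp
  have hTsum : ∀ (n : ℕ) (ω : Ω), ∑ i ∈ T n, Y i ω
      = (∑ j : Fin (s n), X ⟨n, j⟩ ω) - (s n : ℝ) * mbar := by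
    intro n ω
    rw [hT]
    rw [Finset.sum_map]
    simp only [Function.Embedding.coeFn_mk, hY]
    rw [Finset.sum_sub_distrib, Finset.sum_const, Finset.card_univ, Fintype.card_fin]
    simp [nsmul_eq_mul]
  -- key estimate for a fixed ε
  have key : ∀ ε : ℝ, 0 < ε → ε ≤ 2 * B → ∀ᵐ ω ∂P, ∀ᶠ n in atTop,
      |(s n : ℝ)⁻¹ * (∑ j : Fin (s n), X ⟨n, j⟩ ω) - mbar| < ε := by
    intro ε hε hεB
    set A : ℕ → Set Ω := fun n =>
      {ω | ε ≤ |(s n : ℝ)⁻¹ * (∑ j : Fin (s n), X ⟨n, j⟩ ω) - mbar|} with hA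
    set e : ℕ → ℝ := fun n => Real.exp (-((s n : ℝ) * ε ^ 2 / (4 * B ^ 2))) with he
    have hAbound : ∀ n, P (A n) ≤ ENNReal.ofReal (2 * e n) := by
      intro n
      have hm : (0 : ℝ) < (s n : ℝ) := by exact_mod_cast hs n
      have hsub : A n ⊆ {ω | ((T n).card : ℝ) * ε ≤ ∑ i ∈ T n, Y i ω}
          ∪ {ω | ((T n).card : ℝ) * ε ≤ ∑ i ∈ T n, -(Y i ω)} := by
        intro ω hω
        have hω' : ε ≤ |(s n : ℝ)⁻¹ * (∑ j : Fin (s n), X ⟨n, j⟩ ω) - mbar| := hω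
        have hrel : (s n : ℝ)⁻¹ * (∑ j : Fin (s n), X ⟨n, j⟩ ω) - mbar
            = (s n : ℝ)⁻¹ * (∑ i ∈ T n, Y i ω) := by
          rw [hTsum n ω, mul_sub]
          field_simp
        rw [hrel, abs_mul, abs_of_pos (by positivity : (0:ℝ) < (s n : ℝ)⁻¹)] at hω'
        have habs : (s n : ℝ) * ε ≤ |∑ i ∈ T n, Y i ω| := by
          calc (s n : ℝ) * ε ≤ (s n : ℝ) * ((s n : ℝ)⁻¹ * |∑ i ∈ T n, Y i ω|) :=
                mul_le_mul_of_nonneg_left hω' hm.le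
            _ = |∑ i ∈ T n, Y i ω| := by field_simp
        rcases le_abs.mp habs with h | h
        · left
          rw [Set.mem_setOf_eq, hTcard n]
          exact h
        · right
          rw [Set.mem_setOf_eq, hTcard n, Finset.sum_neg_distrib]
          exact h
      have hU := chernoff_aux hBpos hYmeas hYindep hYbdd hYmean (T n) hε hεB
      have hL := chernoff_aux hBpos hNYmeas hNYindep hNYbdd hNYmean (T n) hε hεB
      have hcardexp : Real.exp (-(((T n).card : ℝ) * ε ^ 2 / (4 * B ^ 2))) = e n := by
        rw [he, hTcard n]
      calc P (A n) ≤ P ({ω | ((T n).card : ℝ) * ε ≤ ∑ i ∈ T n, Y i ω}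
            ∪ {ω | ((T n).card : ℝ) * ε ≤ ∑ i ∈ T n, -(Y i ω)}) := measure_mono hsub
        _ ≤ P {ω | ((T n).card : ℝ) * ε ≤ ∑ i ∈ T n, Y i ω}
            + P {ω | ((T n).card : ℝ) * ε ≤ ∑ i ∈ T n, -(Y i ω)} := measure_union_le _ _
        _ ≤ ENNReal.ofReal (e n) + ENNReal.ofReal (e n) := by
            rw [← hcardexp]
            exact add_le_add hU hL
        _ = ENNReal.ofReal (2 * e n) := by
            rw [← ENNReal.ofReal_add (Real.exp_pos _).le (Real.exp_pos _).le, two_mul]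
    -- summability
    have hd : (0 : ℝ) < ε ^ 2 / (4 * B ^ 2) := by positivity
    have hball : ∀ n : ℕ, c * (n : ℝ) ^ α ≤ (s n : ℝ) := by
      intro n
      rcases Nat.eq_zero_or_pos n with rfl | hn
      · rw [Nat.cast_zero, Real.zero_rpow hα.ne', mul_zero]
        exact_mod_cast Nat.zero_le _
      · exact hgrow n hn
    have hgcomp : ∀ n : ℕ, 2 * e n ≤ 2 * Real.exp (-(c * (ε ^ 2 / (4 * B ^ 2)) * (n : ℝ) ^ α)) := by
      intro n
      have h1 : c * (ε ^ 2 / (4 * B ^ 2)) * (n : ℝ) ^ α ≤ (s n : ℝ) * ε ^ 2 / (4 * B ^ 2) := by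
        rw [mul_div_assoc]
        calc c * (ε ^ 2 / (4 * B ^ 2)) * (n : ℝ) ^ α
            = (c * (n : ℝ) ^ α) * (ε ^ 2 / (4 * B ^ 2)) := by ring
          _ ≤ (s n : ℝ) * (ε ^ 2 / (4 * B ^ 2)) :=
              mul_le_mul_of_nonneg_right (hball n) hd.le
      have := Real.exp_le_exp.mpr (neg_le_neg h1)
      rw [he]
      nlinarith [this]
    have hsummable : Summable (fun n : ℕ => 2 * e n) := by
      refine Summable.of_nonneg_of_le (fun n => by positivity) hgcomp ?_
      exact (summable_exp_neg_rpow_aux (by positivity) hα).mul_left 2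
    have htsum : (∑' n, P (A n)) ≠ ⊤ := by
      have hle : (∑' n, P (A n)) ≤ ∑' n, ENNReal.ofReal (2 * e n) :=
        ENNReal.tsum_le_tsum hAbound
      have heq : (∑' n : ℕ, ENNReal.ofReal (2 * e n)) = ENNReal.ofReal (∑' n, 2 * e n) :=
        (ENNReal.ofReal_tsum_of_nonneg (fun n => by positivity) hsummable).symm
      exact ne_top_of_le_ne_top (by rw [heq]; exact ENNReal.ofReal_ne_top) hle
    have hBC := MeasureTheory.ae_eventually_notMem (μ := P) htsum
    filter_upwards [hBC] with ω hω
    filter_upwards [hω] with n hn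
    simp only [hA, Set.mem_setOf_eq, not_le] at hn
    exact hn
  -- final assembly
  have hae : ∀ᵐ ω ∂P, ∀ k : ℕ, ∀ᶠ n in atTop,
      |(s n : ℝ)⁻¹ * (∑ j : Fin (s n), X ⟨n, j⟩ ω) - mbar| < min (((k : ℝ) + 1)⁻¹) (2 * B) := by
    rw [ae_all_iff]
    intro k
    exact key _ (lt_min (by positivity) (by positivity)) (min_le_right _ _)
  filter_upwards [hae] with ω hω
  rw [Metric.tendsto_nhds]
  intro ε hε
  obtain ⟨k, hk⟩ := exists_nat_gt ε⁻¹
  have hk1 : ((k : ℝ) + 1)⁻¹ < ε := by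
    have h1 : ε⁻¹ < (k : ℝ) + 1 := hk.trans (lt_add_one _)
    have h2 : (0 : ℝ) < (k : ℝ) + 1 := by positivity
    rw [inv_lt_comm₀ h2 hε]
    exact h1
  refine (hω k).mono fun n hn => ?_
  rw [Real.dist_eq]
  exact lt_of_lt_of_le hn (min_le_left _ _) |>.trans hk1
end
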